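/- arXiv:2510.22701 — 5 statements merged into one kernel-verified Lean document; each statement's English description precedes it below -/
import Mathlib

section
/- There is a constant C > 0, independent of n, k and a, such that for all n ≥ 1, all 0 ≤ k ≤ n − 1 and all 0 < a ≤ k^{1/6}: P(Y_{n−k} ≥ E[Y_{n−k}] + a (k + 1/2)^{−3/2}) ≤ C e^{−(3/2) a²} and P(Y_{n−k} ≤ E[Y_{n−k}] − a (k + 1/2)^{−3/2}) ≤ C e^{−(3/2) a²}; consequently, for 1 ≤ k ≤ n and 0 < a ≤ (n − k)^{1/6}, P(|Y_k − E[Y_k]| ≥ 2^{3/2} a (n − k + 1)^{−3/2}) ≤ 2C e^{−(3/2) a²}. -/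
set_option maxHeartbeats 1000000

open MeasureTheory ProbabilityTheory Filter Real Set
open scoped ProbabilityTheory ENNReal

namespace Stmt6Aux

lemma expMeasure_eq_withDensity {r : ℝ} :
    expMeasure r = (volume : Measure ℝ).withDensity
      (fun x => ((Real.toNNReal (if 0 ≤ x then r * Real.exp (-(r*x)) else 0)) : ℝ≥0∞)) := by
  rw [expMeasure, gammaMeasure]
  congr 1
  funext x
  rw [show gammaPDF 1 r x = exponentialPDF r x from rfl, exponentialPDF_eq, ENNReal.ofReal]

lemma meas_dens {r : ℝ} :
    Measurable (fun x : ℝ => Real.toNNReal (if 0 ≤ x then r * Real.exp (-(r*x)) else 0)) := by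
  apply Measurable.real_toNNReal
  exact Measurable.ite measurableSet_Ici ((measurable_id.const_mul r).neg.exp.const_mul r)
    measurable_const

lemma integral_expMeasure_eq {r : ℝ} (hr : 0 ≤ r) (g : ℝ → ℝ) :
    ∫ x, g x ∂(expMeasure r) = ∫ x in Ioi (0:ℝ), (r * Real.exp (-(r*x))) * g x := by
  rw [expMeasure_eq_withDensity, integral_withDensity_eq_integral_smul meas_dens g]
  rw [← integral_Ici_eq_integral_Ioi, ← integral_indicator measurableSet_Ici]
  congr 1
  funext x
  simp only [Set.indicator, Set.mem_Ici, NNReal.smul_def, smul_eq_mul]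
  by_cases hx : 0 ≤ x
  · rw [if_pos hx, if_pos hx, Real.coe_toNNReal]
    positivity
  · rw [if_neg hx, if_neg hx]; simp

lemma integrable_expMeasure_iff {r : ℝ} (hr : 0 ≤ r) (g : ℝ → ℝ) :
    Integrable g (expMeasure r) ↔
      IntegrableOn (fun x => (r * Real.exp (-(r*x))) * g x) (Ici (0:ℝ)) volume := by
  rw [expMeasure_eq_withDensity, integrable_withDensity_iff_integrable_smul meas_dens,
    ← integrable_indicator_iff measurableSet_Ici]
  constructor <;> intro h <;> refine h.congr ?_ <;> filter_upwards with x <;>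
    simp only [Set.indicator, Set.mem_Ici, NNReal.smul_def, smul_eq_mul] <;>
    by_cases hx : 0 ≤ x
  · rw [if_pos hx, if_pos hx, Real.coe_toNNReal]; positivity
  · rw [if_neg hx, if_neg hx]; simp
  · rw [if_pos hx, if_pos hx, Real.coe_toNNReal]; positivity
  · rw [if_neg hx, if_neg hx]; simp



-- ∫ x in Ioi 0, exp (-(b*x)) = 1/b
lemma integral_exp_neg_mul_Ioi {b : ℝ} (hb : 0 < b) :
    ∫ x in Ioi (0:ℝ), Real.exp (-(b*x)) = 1/b := by
  have h := integral_rpow_mul_exp_neg_mul_Ioi (a := 1) one_pos hb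
  rw [show ∫ t in Ioi (0:ℝ), t ^ ((1:ℝ)-1) * Real.exp (-(b*t))
      = ∫ t in Ioi (0:ℝ), Real.exp (-(b*t)) from by
    refine setIntegral_congr_fun measurableSet_Ioi (fun x hx => ?_)
    rw [sub_self, Real.rpow_zero, one_mul]] at h
  rw [h, Real.rpow_one, Real.Gamma_one, mul_one]

lemma integral_mul_exp_neg_mul_Ioi {b : ℝ} (hb : 0 < b) :
    ∫ x in Ioi (0:ℝ), x * Real.exp (-(b*x)) = 1/b^2 := by
  have h := integral_rpow_mul_exp_neg_mul_Ioi (a := 2) two_pos hb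
  rw [show ∫ t in Ioi (0:ℝ), t ^ ((2:ℝ)-1) * Real.exp (-(b*t))
      = ∫ t in Ioi (0:ℝ), t * Real.exp (-(b*t)) from by
    refine setIntegral_congr_fun measurableSet_Ioi (fun x hx => ?_)
    norm_num] at h
  rw [h, Real.Gamma_two, mul_one, div_rpow zero_le_one hb.le, Real.one_rpow,
    ← Real.rpow_natCast b 2]
  norm_num




lemma integrable_exp_mul_expMeasure {r t : ℝ} (hr : 0 < r) (ht : t < r) :
    Integrable (fun x => Real.exp (t * x)) (expMeasure r) := by
  rw [integrable_expMeasure_iff hr.le]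
  rw [integrableOn_Ici_iff_integrableOn_Ioi]
  have h : IntegrableOn (fun x : ℝ => r * Real.exp (-(r-t) * x)) (Ioi (0:ℝ)) volume :=
    (exp_neg_integrableOn_Ioi 0 (by linarith : (0:ℝ) < r - t)).const_mul r
  refine h.congr_fun (fun x hx => ?_) measurableSet_Ioi
  rw [mul_assoc, ← Real.exp_add]
  ring_nf

lemma integral_exp_mul_expMeasure {r t : ℝ} (hr : 0 < r) (ht : t < r) :
    ∫ x, Real.exp (t * x) ∂(expMeasure r) = r / (r - t) := by
  rw [integral_expMeasure_eq hr.le]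
  have : ∀ x ∈ Ioi (0:ℝ), (r * Real.exp (-(r*x))) * Real.exp (t * x)
      = r * Real.exp (-((r-t)*x)) := by
    intro x _
    rw [mul_assoc, ← Real.exp_add]
    ring_nf
  rw [setIntegral_congr_fun measurableSet_Ioi this, integral_const_mul,
    integral_exp_neg_mul_Ioi (by linarith)]
  ring

lemma integrable_id_expMeasure {r : ℝ} (hr : 0 < r) :
    Integrable (fun x : ℝ => x) (expMeasure r) := by
  rw [integrable_expMeasure_iff hr.le, integrableOn_Ici_iff_integrableOn_Ioi]
  have h : IntegrableOn (fun x : ℝ => x ^ (1:ℝ) * Real.exp (-r * x ^ (1:ℝ))) (Ioi 0) volume :=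
    integrableOn_rpow_mul_exp_neg_mul_rpow (by norm_num) zero_lt_one hr
  refine (show IntegrableOn (fun x : ℝ => r * (x ^ (1:ℝ) * Real.exp (-r * x ^ (1:ℝ)))) (Ioi 0) volume from h.const_mul r).congr_fun (fun x hx => ?_) measurableSet_Ioi
  simp only [Real.rpow_one]
  ring

lemma integral_id_expMeasure {r : ℝ} (hr : 0 < r) :
    ∫ x, x ∂(expMeasure r) = 1 / r := by
  rw [integral_expMeasure_eq hr.le]
  have : ∀ x ∈ Ioi (0:ℝ), (r * Real.exp (-(r*x))) * x = r * (x * Real.exp (-(r*x))) := by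
    intro x _; ring
  rw [setIntegral_congr_fun measurableSet_Ioi this, integral_const_mul,
    integral_mul_exp_neg_mul_Ioi hr]
  rw [sq]
  field_simp



end Stmt6Aux
namespace Stmt6Anal

-- upper-tail single factor: for 0 ≤ u ≤ 1/4, (1-u)⁻¹ ≤ exp (u + u²/2 + 2u³)
lemma factor_upper {u : ℝ} (h0 : 0 ≤ u) (h1 : u ≤ 1/4) :
    1 / (1 - u) ≤ Real.exp (u + u^2/2 + 2*u^3) := by
  have hu1 : (0:ℝ) < 1 - u := by linarith
  rw [div_le_iff₀ hu1]
  set x := u + u^2/2 + 2*u^3 with hx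
  have hx0 : 0 ≤ x := by positivity
  have h := Real.quadratic_le_exp_of_nonneg hx0
  have key : 1 ≤ (1 + x + x^2/2) * (1 - u) := by
    rw [hx]; nlinarith [pow_nonneg h0 2, pow_nonneg h0 3, pow_nonneg h0 4, pow_nonneg h0 5,
      pow_nonneg h0 6]
  nlinarith [Real.exp_pos x]

-- lower-tail single factor: for 0 ≤ u ≤ 1, (1+u)⁻¹ ≤ exp (-u + u²/2)
lemma factor_lower {u : ℝ} (h0 : 0 ≤ u) (h1 : u ≤ 1) :
    1 / (1 + u) ≤ Real.exp (-u + u^2/2) := by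
  have hu1 : (0:ℝ) < 1 + u := by linarith
  rw [div_le_iff₀ hu1]
  have key : Real.exp (u - u^2/2) ≤ 1 + u := by
    have hx0 : 0 ≤ u - u^2/2 := by nlinarith [mul_le_of_le_one_right h0 h1]
    have hx1 : u - u^2/2 ≤ 1 := by nlinarith [sq_nonneg u]
    have h := Real.exp_bound' hx0 hx1 (n := 3) (by norm_num)
    norm_num [Finset.sum_range_succ, Nat.factorial] at h
    nlinarith [pow_nonneg h0 2, pow_nonneg h0 3, pow_nonneg h0 4,
        pow_nonneg h0 5, pow_nonneg h0 6, sq_nonneg (u - 1), sq_nonneg u]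
  calc (1:ℝ) = Real.exp (-u + u^2/2) * Real.exp (u - u^2/2) := by
        rw [← Real.exp_add]; norm_num
  _ ≤ Real.exp (-u + u^2/2) * (1 + u) :=
        mul_le_mul_of_nonneg_left key (Real.exp_pos _).le

-- midpoint bound: for real j ≥ 1 : 1/j^4 ≤ 1/(3(j-1/2)^3) - 1/(3(j+1/2)^3)
lemma midpoint {j : ℝ} (hj : 1 ≤ j) :
    1/j^4 ≤ 1/(3*(j-1/2)^3) - 1/(3*(j+1/2)^3) := by
  have h1 : (0:ℝ) < j - 1/2 := by linarith
  have h2 : (0:ℝ) < j + 1/2 := by linarith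
  have h3 : (0:ℝ) < j := by linarith
  rw [div_sub_div _ _ (by positivity) (by positivity), div_le_div_iff₀ (by positivity) (by positivity)]
  nlinarith [pow_pos h3 4, pow_pos h1 3, pow_pos h2 3, sq_nonneg j, pow_pos h3 2]

-- sum bound: ∑_{j ∈ range m} 1/(n-j)^4 ≤ 1/(3 ((n-m) + 1/2)^3)
lemma sum_bound (n : ℕ) : ∀ m : ℕ, m ≤ n →
    ∑ j ∈ Finset.range m, 1/(((n-j : ℕ) : ℝ))^4
      ≤ 1/(3*(((n-m : ℕ) : ℝ) + 1/2)^3) - 1/(3*((n : ℝ) + 1/2)^3) := by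
  intro m
  induction m with
  | zero => intro _; simp
  | succ m ih =>
    intro hm
    have hm' : m ≤ n := le_of_lt (Nat.lt_of_succ_le hm)
    rw [Finset.sum_range_succ]
    have hcast : ((n - m : ℕ) : ℝ) = ((n - (m+1) : ℕ) : ℝ) + 1 := by
      have : n - m = (n - (m+1)) + 1 := by omega
      rw [this]; push_cast; ring
    have hj1 : (1:ℝ) ≤ ((n - m : ℕ) : ℝ) := by
      have : 1 ≤ n - m := by omega
      exact_mod_cast this
    have key := midpoint hj1
    have := ih hm'
    rw [hcast] at key this ⊢
    set c := ((n - (m+1) : ℕ) : ℝ)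
    have e1 : c + 1 - 1/2 = c + 1/2 := by ring
    rw [e1] at key
    linarith
end Stmt6Anal
namespace Stmt6Core

lemma sum_filter_eq_range {M : Type*} [AddCommMonoid M] (n m : ℕ) (hm : m ≤ n) (f : ℕ → M) :
    ∑ i ∈ Finset.univ.filter (fun i : Fin n => (i:ℕ) < m), f (i : ℕ)
      = ∑ j ∈ Finset.range m, f j := by
  refine Finset.sum_bij' (fun i _ => (i : ℕ))
    (fun j hj => (⟨j, lt_of_lt_of_le (Finset.mem_range.mp hj) hm⟩ : Fin n)) ?_ ?_ ?_ ?_ ?_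
  · intro a ha
    simp only [Finset.mem_filter, Finset.mem_univ, true_and] at ha
    exact Finset.mem_range.mpr ha
  · intro j hj
    simp only [Finset.mem_filter, Finset.mem_univ, true_and]
    exact Finset.mem_range.mp hj
  · intro a ha; simp
  · intro j hj; simp
  · intro a ha; rfl

lemma sum_range_eq_Icc {M : Type*} [AddCommMonoid M] (n m : ℕ) (hm : m ≤ n) (f : ℕ → M) :
    ∑ j ∈ Finset.range m, f (j+1) = ∑ i ∈ Finset.Icc 1 m, f i := by
  rw [Finset.range_eq_Ico, Finset.sum_Ico_eq_sum_range]
  rw [show Finset.Icc 1 m = Finset.Ico 1 (m+1) by rfl, Finset.sum_Ico_eq_sum_range]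
  simp [add_comm]

end Stmt6Core

namespace Stmt6Core
open Stmt6Aux Stmt6Anal

lemma core {Ω' : Type} [MeasureSpace Ω'] (hP : IsProbabilityMeasure (ℙ : Measure Ω'))
    (n : ℕ) (X : ℕ → Ω' → ℝ) (hXmeas : ∀ i, Measurable (X i))
    (hXindep : iIndepFun (fun i : Fin n => X (i + 1)) ℙ)
    (hXlaw : ∀ i, 1 ≤ i → i ≤ n → Measure.map (X i) ℙ = expMeasure (((n - i + 1 : ℕ) : ℝ) ^ 2))
    (k : ℕ) (hn : 1 ≤ n) (hk : k ≤ n - 1) (a : ℝ) (ha : 0 < a) (ha6 : a ≤ (k:ℝ) ^ ((1:ℝ)/6)) :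
    ((ℙ : Measure Ω') {o | (∫ o', ∑ i ∈ Finset.Icc 1 (n-k), X i o' ∂(ℙ : Measure Ω'))
        + a * ((k:ℝ)+1/2) ^ (-(3:ℝ)/2) ≤ ∑ i ∈ Finset.Icc 1 (n-k), X i o}).toReal
      ≤ Real.exp 18 * Real.exp (-(3/2) * a^2)
    ∧ ((ℙ : Measure Ω') {o | ∑ i ∈ Finset.Icc 1 (n-k), X i o
        ≤ (∫ o', ∑ i ∈ Finset.Icc 1 (n-k), X i o' ∂(ℙ : Measure Ω'))
          - a * ((k:ℝ)+1/2) ^ (-(3:ℝ)/2)}).toReal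
      ≤ Real.exp 18 * Real.exp (-(3/2) * a^2) := by
  classical
  -- k ≥ 1
  have hk1 : 1 ≤ k := by
    rcases Nat.eq_zero_or_pos k with h0 | h; swap; · exact h
    exfalso
    rw [h0] at ha6
    rw [Nat.cast_zero, Real.zero_rpow (by norm_num : (1:ℝ)/6 ≠ 0)] at ha6
    linarith
  set m := n - k with hm
  have hm1 : 1 ≤ m := by omega
  have hmn : m ≤ n := by omega
  have hnm : n - m = k := by omega
  set K : ℝ := (k:ℝ) + 1/2 with hKdef
  have hK : (0:ℝ) < K := by positivity
  set δ : ℝ := a * K ^ (-(3:ℝ)/2) with hδdef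
  have hδ : 0 < δ := by positivity
  set g : Fin n → Ω' → ℝ := fun i => X (↑i + 1) with hgdef
  have hgmeas : ∀ i, Measurable (g i) := fun i => hXmeas _
  set s : Finset (Fin n) := Finset.univ.filter (fun i : Fin n => (i:ℕ) < m) with hs
  have hmem : ∀ i : Fin n, i ∈ s ↔ (i:ℕ) < m := by
    intro i; simp [hs]
  -- pointwise identification of the sum
  have hFs : ∀ o, ∑ i ∈ Finset.Icc 1 m, X i o = (∑ i ∈ s, g i) o := by
    intro o
    rw [Finset.sum_apply]
    rw [show (∑ i ∈ s, g i o) = ∑ i ∈ s, (fun j : ℕ => X (j+1) o) (i:ℕ) from rfl]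
    rw [sum_filter_eq_range n m hmn (fun j => X (j+1) o)]
    exact (sum_range_eq_Icc n m hmn (fun i => X i o)).symm
  -- rates
  set R : Fin n → ℝ := fun i => (((n - (i:ℕ) : ℕ)):ℝ)^2 with hR
  set B : ℝ := ((k:ℝ) + 1)^2 with hB
  have hBpos : (0:ℝ) < B := by positivity
  have hRB : ∀ i ∈ s, B ≤ R i := by
    intro i hi
    rw [hmem] at hi
    have h1 : k + 1 ≤ n - (i:ℕ) := by omega
    have h2 : ((k:ℝ)+1) ≤ ((n - (i:ℕ) : ℕ):ℝ) := by
      have : ((k+1 : ℕ):ℝ) ≤ ((n - (i:ℕ) : ℕ):ℝ) := by exact_mod_cast h1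
      push_cast at this; linarith
    have h0 : (0:ℝ) ≤ (k:ℝ)+1 := by positivity
    exact pow_le_pow_left₀ h0 h2 2
  have hRpos : ∀ i ∈ s, (0:ℝ) < R i := fun i hi => lt_of_lt_of_le hBpos (hRB i hi)
  have hlaw : ∀ i ∈ s, Measure.map (g i) ℙ = expMeasure (R i) := by
    intro i hi
    rw [hmem] at hi
    have h1 : 1 ≤ (i:ℕ) + 1 := by omega
    have h2 : (i:ℕ) + 1 ≤ n := by omega
    have := hXlaw ((i:ℕ)+1) h1 h2
    rw [show n - ((i:ℕ)+1) + 1 = n - (i:ℕ) by omega] at this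
    exact this
  -- integrability and mean of each g i
  have h_intX : ∀ i ∈ s, Integrable (g i) ℙ := by
    intro i hi
    have h2 : Integrable (fun x : ℝ => x) (Measure.map (g i) ℙ) := by
      rw [hlaw i hi]; exact integrable_id_expMeasure (hRpos i hi)
    exact (integrable_map_measure h2.aestronglyMeasurable
      (hgmeas i).aemeasurable).mp h2
  have h_mean : ∀ i ∈ s, (∫ ω, g i ω ∂(ℙ : Measure Ω')) = 1 / R i := by
    intro i hi
    have h2 : (∫ ω, g i ω ∂(ℙ : Measure Ω')) = ∫ x, x ∂(Measure.map (g i) ℙ) := by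
      rw [integral_map (hgmeas i).aemeasurable]
      exact aestronglyMeasurable_id
    rw [h2, hlaw i hi, integral_id_expMeasure (hRpos i hi)]
  have hEF : (∫ ω, (∑ i ∈ s, g i) ω ∂(ℙ : Measure Ω')) = ∑ i ∈ s, 1 / R i := by
    simp only [Finset.sum_apply]
    rw [integral_finset_sum s (fun i hi => h_intX i hi)]
    exact Finset.sum_congr rfl h_mean
  -- generic per-factor facts for t < R i
  have h_int_exp : ∀ (t : ℝ), ∀ i ∈ s, t < R i →
      Integrable (fun ω => Real.exp (t * g i ω)) ℙ := by
    intro t i hi hti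
    have h2 : Integrable (fun x : ℝ => Real.exp (t * x)) (Measure.map (g i) ℙ) := by
      rw [hlaw i hi]; exact integrable_exp_mul_expMeasure (hRpos i hi) hti
    exact (integrable_map_measure h2.aestronglyMeasurable (hgmeas i).aemeasurable).mp h2
  have h_mgf : ∀ (t : ℝ), ∀ i ∈ s, t < R i → mgf (g i) ℙ t = R i / (R i - t) := by
    intro t i hi hti
    rw [mgf]
    have h2 : (∫ ω, Real.exp (t * g i ω) ∂(ℙ : Measure Ω'))
        = ∫ x, Real.exp (t * x) ∂(Measure.map (g i) ℙ) := by
      rw [integral_map (hgmeas i).aemeasurable]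
      exact ((measurable_id.const_mul t).exp.aestronglyMeasurable)
    rw [h2, hlaw i hi, integral_exp_mul_expMeasure (hRpos i hi) hti]
  -- the sum of inverse fourth powers
  have hsum4 : ∑ i ∈ s, 1 / (R i)^2 ≤ 1/(3*K^3) := by
    have e : ∀ i : Fin n, 1 / (R i)^2 = (fun j : ℕ => 1/(((n - j : ℕ):ℝ))^4) (i:ℕ) := by
      intro i
      simp only [hR]
      rw [← pow_mul]
    calc ∑ i ∈ s, 1 / (R i)^2 = ∑ i ∈ s, (fun j : ℕ => 1/(((n - j : ℕ):ℝ))^4) (i:ℕ) :=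
          Finset.sum_congr rfl (fun i _ => e i)
    _ = ∑ j ∈ Finset.range m, 1/(((n - j : ℕ):ℝ))^4 := by
          rw [hs]; exact sum_filter_eq_range n m hmn (fun j : ℕ => 1/(((n - j : ℕ):ℝ))^4)
    _ ≤ 1/(3*(((n-m : ℕ):ℝ) + 1/2)^3) - 1/(3*((n:ℝ)+1/2)^3) := sum_bound n m hmn
    _ ≤ 1/(3*K^3) := by
        rw [hnm]
        have : (0:ℝ) < 3*((n:ℝ)+1/2)^3 := by positivity
        have h2 : 0 < 1/(3*((n:ℝ)+1/2)^3) := by positivity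
        linarith
  -- rpow arithmetic
  have ek16 : (k:ℝ) ^ ((1:ℝ)/6) ≤ K ^ ((1:ℝ)/6) := by
    apply Real.rpow_le_rpow (Nat.cast_nonneg k) (by rw [hKdef]; linarith) (by norm_num)
  have haK : a ≤ K ^ ((1:ℝ)/6) := le_trans ha6 ek16
  have ha3 : a^3 ≤ K ^ ((1:ℝ)/2) := by
    calc a^3 ≤ (K ^ ((1:ℝ)/6))^3 := pow_le_pow_left₀ ha.le haK 3
    _ = K ^ ((1:ℝ)/2) := by
        rw [← Real.rpow_natCast (K ^ ((1:ℝ)/6)) 3, ← Real.rpow_mul hK.le]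
        norm_num
  have eK32sq : (K ^ ((3:ℝ)/2))^2 = K^3 := by
    rw [← Real.rpow_natCast (K ^ ((3:ℝ)/2)) 2, ← Real.rpow_mul hK.le]
    rw [show (3:ℝ)/2 * (2:ℕ) = ((3:ℕ):ℝ) by norm_num, Real.rpow_natCast]
  have eK12_32 : K ^ ((1:ℝ)/2) * K ^ ((3:ℝ)/2) = K^2 := by
    rw [← Real.rpow_add hK]
    rw [show (1:ℝ)/2 + (3:ℝ)/2 = ((2:ℕ):ℝ) by norm_num, Real.rpow_natCast]
  have eKB : K^2 ≤ B := by
    rw [hB, hKdef]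
    nlinarith [Nat.cast_nonneg (α := ℝ) k]
  set T : ℝ := 3 * a * K ^ ((3:ℝ)/2) with hT
  have hTpos : 0 < T := by positivity
  have hTδ : T * δ = 3 * a^2 := by
    rw [hT, hδdef]
    have : K ^ ((3:ℝ)/2) * K ^ (-(3:ℝ)/2) = 1 := by
      rw [← Real.rpow_add hK]; norm_num
    calc 3 * a * K ^ ((3:ℝ)/2) * (a * K ^ (-(3:ℝ)/2))
        = 3 * a^2 * (K ^ ((3:ℝ)/2) * K ^ (-(3:ℝ)/2)) := by ring
    _ = 3 * a^2 := by rw [this]; ring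
  have hT2 : T^2 = 9 * a^2 * K^3 := by
    rw [hT, mul_pow, mul_pow, eK32sq]; ring
  have hT3B : T * a^2 ≤ 3 * B := by
    calc T * a^2 = 3 * a^3 * K ^ ((3:ℝ)/2) := by rw [hT]; ring
    _ ≤ 3 * (K ^ ((1:ℝ)/2) * K ^ ((3:ℝ)/2)) := by
        have h1 : (0:ℝ) ≤ K ^ ((3:ℝ)/2) := (Real.rpow_nonneg hK.le _)
        nlinarith
    _ = 3 * K^2 := by rw [eK12_32]
    _ ≤ 3 * B := by linarith
  -- case split
  by_cases hbig : 1728 ≤ k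
  swap
  · -- trivial regime: probability ≤ 1 ≤ C e^{-(3/2)a²}
    have hk12 : (k:ℝ) ^ ((1:ℝ)/3) ≤ 12 := by
      have h1 : ((1728:ℝ)) ^ ((1:ℝ)/3) = 12 := by
        rw [show (1728:ℝ) = 12^(3:ℕ) by norm_num, ← Real.rpow_natCast 12 3,
          ← Real.rpow_mul (by norm_num : (0:ℝ) ≤ 12)]
        norm_num
      calc (k:ℝ) ^ ((1:ℝ)/3) ≤ ((1728:ℝ)) ^ ((1:ℝ)/3) := by
            apply Real.rpow_le_rpow (Nat.cast_nonneg k) _ (by norm_num)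
            have : k ≤ 1728 := by omega
            exact_mod_cast this
      _ = 12 := h1
    have ha2 : a^2 ≤ 12 := by
      calc a^2 ≤ ((k:ℝ) ^ ((1:ℝ)/6))^2 := pow_le_pow_left₀ ha.le ha6 2
      _ = (k:ℝ) ^ ((1:ℝ)/3) := by
          rw [← Real.rpow_natCast ((k:ℝ) ^ ((1:ℝ)/6)) 2,
            ← Real.rpow_mul (Nat.cast_nonneg k)]
          norm_num
      _ ≤ 12 := hk12
    have hone : (1:ℝ) ≤ Real.exp 18 * Real.exp (-(3/2) * a^2) := by
      rw [← Real.exp_add, ← Real.exp_zero]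
      apply Real.exp_le_exp.mpr
      linarith
    constructor <;>
      exact le_trans (by simpa using ENNReal.toReal_mono ENNReal.one_ne_top prob_le_one) hone
  -- analytic regime
  have hTB : T ≤ B / 4 := by
    set P : ℝ := (k:ℝ) + 1 with hPdef
    have hPpos : (0:ℝ) < P := by positivity
    have hP1728 : (1728:ℝ) ≤ P := by
      have : (1728:ℕ) ≤ k := hbig
      have h2 : ((1728:ℕ):ℝ) ≤ (k:ℝ) := by exact_mod_cast this
      push_cast at h2
      linarith
    have h13 : (12:ℝ) ≤ P ^ ((1:ℝ)/3) := by
      have h1 : ((1728:ℝ)) ^ ((1:ℝ)/3) = 12 := by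
        rw [show (1728:ℝ) = 12^(3:ℕ) by norm_num, ← Real.rpow_natCast 12 3,
          ← Real.rpow_mul (by norm_num : (0:ℝ) ≤ 12)]
        norm_num
      rw [← h1]
      exact Real.rpow_le_rpow (by norm_num) hP1728 (by norm_num)
    have hT53 : T ≤ 3 * K ^ ((5:ℝ)/3) := by
      have h1 : K ^ ((1:ℝ)/6) * K ^ ((3:ℝ)/2) = K ^ ((5:ℝ)/3) := by
        rw [← Real.rpow_add hK]; norm_num
      have h2 : (0:ℝ) ≤ K ^ ((3:ℝ)/2) := Real.rpow_nonneg hK.le _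
      calc T = 3 * a * K ^ ((3:ℝ)/2) := hT
      _ ≤ 3 * (K ^ ((1:ℝ)/6)) * K ^ ((3:ℝ)/2) := by nlinarith
      _ = 3 * K ^ ((5:ℝ)/3) := by rw [mul_assoc, h1]
    have hK53 : K ^ ((5:ℝ)/3) ≤ P ^ ((5:ℝ)/3) := by
      apply Real.rpow_le_rpow hK.le (by rw [hKdef, hPdef]; linarith) (by norm_num)
    have hPP : P^2 = P ^ ((5:ℝ)/3) * P ^ ((1:ℝ)/3) := by
      rw [← Real.rpow_add hPpos,
        show (5:ℝ)/3 + (1:ℝ)/3 = ((2:ℕ):ℝ) by norm_num, Real.rpow_natCast]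
    have h53 : (0:ℝ) ≤ P ^ ((5:ℝ)/3) := Real.rpow_nonneg hPpos.le _
    have hBP : B = P^2 := by rw [hB, hPdef]
    rw [hBP, hPP]
    calc T ≤ 3 * K ^ ((5:ℝ)/3) := hT53
    _ ≤ 3 * P ^ ((5:ℝ)/3) := by linarith
    _ ≤ P ^ ((5:ℝ)/3) * P ^ ((1:ℝ)/3) / 4 := by nlinarith
  have hTlt : ∀ i ∈ s, T < R i := by
    intro i hi
    have := hRB i hi
    linarith
  have hTlt' : ∀ i ∈ s, -T < R i := by
    intro i hi
    have := hRpos i hi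
    linarith
  have hu0 : ∀ i ∈ s, 0 ≤ T / R i := fun i hi => div_nonneg hTpos.le (hRpos i hi).le
  have hu14 : ∀ i ∈ s, T / R i ≤ 1/4 := by
    intro i hi
    rw [div_le_iff₀ (hRpos i hi)]
    calc T ≤ B/4 := hTB
    _ ≤ R i / 4 := by linarith [hRB i hi]
    _ = 1/4 * R i := by ring
  -- the β budget
  set β : Fin n → ℝ := fun i => (T/R i)^2/2 + 2*(T/R i)^3 with hβ
  have hβsum : ∑ i ∈ s, β i ≤ (3/2)*a^2 + 18 := by
    have hsumu2 : ∑ i ∈ s, (T/R i)^2 ≤ 3*a^2 := by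
      have h1 : ∀ i ∈ s, (T/R i)^2 = T^2 * (1/(R i)^2) := by
        intro i hi; rw [div_pow]; ring
      rw [Finset.sum_congr rfl h1, ← Finset.mul_sum]
      have hK3 : (0:ℝ) < K^3 := by positivity
      calc T^2 * ∑ i ∈ s, 1/(R i)^2 ≤ T^2 * (1/(3*K^3)) := by
            apply mul_le_mul_of_nonneg_left hsum4 (sq_nonneg T)
      _ = 3*a^2 := by rw [hT2]; field_simp; ring
    have hsumu3 : ∑ i ∈ s, (T/R i)^3 ≤ T/B * (3*a^2) := by
      have h1 : ∀ i ∈ s, (T/R i)^3 ≤ (T/B) * (T/R i)^2 := by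
        intro i hi
        have hub : T/R i ≤ T/B := div_le_div_of_nonneg_left hTpos.le hBpos (hRB i hi)
        have h0 := hu0 i hi
        nlinarith [sq_nonneg (T/R i)]
      calc ∑ i ∈ s, (T/R i)^3 ≤ ∑ i ∈ s, (T/B) * (T/R i)^2 := Finset.sum_le_sum h1
      _ = (T/B) * ∑ i ∈ s, (T/R i)^2 := by rw [Finset.mul_sum]
      _ ≤ T/B * (3*a^2) := by
          apply mul_le_mul_of_nonneg_left hsumu2 (div_nonneg hTpos.le hBpos.le)
    have h5 : T/B*(3*a^2) ≤ 9 := by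
      rw [div_mul_eq_mul_div, div_le_iff₀ hBpos]
      nlinarith [hT3B]
    have e2 : ∑ i ∈ s, β i = (∑ i ∈ s, (T/R i)^2)/2 + 2 * ∑ i ∈ s, (T/R i)^3 := by
      rw [hβ, Finset.sum_add_distrib, Finset.sum_div, Finset.mul_sum]
    rw [e2]
    linarith
  -- factor bounds
  have hfac : ∀ i ∈ s, Real.exp (-(T/R i)) * (R i/(R i - T)) ≤ Real.exp (β i) := by
    intro i hi
    have hR0 := hRpos i hi
    have hRT : 0 < R i - T := by linarith [hTlt i hi]
    have e1 : R i / (R i - T) = 1/(1 - T/R i) := by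
      rw [eq_div_iff]
      · field_simp
      · have h14 := hu14 i hi
        intro hcon
        rw [sub_eq_zero] at hcon
        rw [← hcon] at h14
        norm_num at h14
    rw [e1]
    calc Real.exp (-(T/R i)) * (1/(1 - T/R i))
        ≤ Real.exp (-(T/R i)) * Real.exp ((T/R i) + (T/R i)^2/2 + 2*(T/R i)^3) :=
          mul_le_mul_of_nonneg_left (factor_upper (hu0 i hi) (hu14 i hi)) (Real.exp_pos _).le
    _ = Real.exp (β i) := by
        rw [← Real.exp_add, hβ]
        congr 1
        ring
  have hfac' : ∀ i ∈ s, Real.exp (T/R i) * (R i/(R i - -T)) ≤ Real.exp (β i) := by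
    intro i hi
    have hR0 := hRpos i hi
    have hRT : 0 < R i + T := by linarith
    have e1 : R i / (R i - -T) = 1/(1 + T/R i) := by
      rw [sub_neg_eq_add, eq_div_iff (by positivity)]
      field_simp
    rw [e1]
    calc Real.exp (T/R i) * (1/(1 + T/R i))
        ≤ Real.exp (T/R i) * Real.exp (-(T/R i) + (T/R i)^2/2) :=
          mul_le_mul_of_nonneg_left
            (factor_lower (hu0 i hi) (le_trans (hu14 i hi) (by norm_num))) (Real.exp_pos _).le
    _ ≤ Real.exp (β i) := by
        rw [← Real.exp_add, hβ]
        apply Real.exp_le_exp.mpr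
        have h3 : 0 ≤ (T/R i)^3 := pow_nonneg (hu0 i hi) 3
        nlinarith
  -- mean rewrite
  have hrw : (∫ o', ∑ i ∈ Finset.Icc 1 m, X i o' ∂(ℙ : Measure Ω')) = ∑ i ∈ s, 1/R i := by
    rw [← hEF]
    exact integral_congr_ae (Filter.Eventually.of_forall hFs)
  have hprodβ : ∀ (f : Fin n → ℝ), (∀ i ∈ s, 0 ≤ f i) → (∀ i ∈ s, f i ≤ Real.exp (β i)) →
      ∏ i ∈ s, f i ≤ Real.exp ((3/2)*a^2 + 18) := by
    intro f h0 h1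
    calc ∏ i ∈ s, f i ≤ ∏ i ∈ s, Real.exp (β i) := Finset.prod_le_prod h0 h1
    _ = Real.exp (∑ i ∈ s, β i) := (Real.exp_sum s β).symm
    _ ≤ Real.exp ((3/2)*a^2 + 18) := Real.exp_le_exp.mpr hβsum
  constructor
  · -- upper tail
    have hset : {o : Ω' | (∫ o', ∑ i ∈ Finset.Icc 1 m, X i o' ∂(ℙ : Measure Ω'))
          + a * K ^ (-(3:ℝ)/2) ≤ ∑ i ∈ Finset.Icc 1 m, X i o}
        = {o : Ω' | (∑ i ∈ s, 1/R i) + δ ≤ (∑ i ∈ s, g i) o} := by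
      ext o
      simp only [Set.mem_setOf_eq, hrw, hFs o, hδdef]
    rw [hset]
    have hInt : Integrable (fun ω => Real.exp (T * (∑ i ∈ s, g i) ω)) ℙ :=
      hXindep.integrable_exp_mul_sum hgmeas (fun i hi => h_int_exp T i hi (hTlt i hi))
    refine le_trans (measure_ge_le_exp_mul_mgf (μ := ℙ) (X := ∑ i ∈ s, g i)
      ((∑ i ∈ s, 1/R i) + δ) hTpos.le hInt) ?_
    have hmgfsum : mgf (∑ i ∈ s, g i) ℙ T = ∏ i ∈ s, (R i / (R i - T)) := by
      rw [hXindep.mgf_sum hgmeas s]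
      exact Finset.prod_congr rfl (fun i hi => h_mgf T i hi (hTlt i hi))
    have hexp : Real.exp (-T * ((∑ i ∈ s, 1/R i) + δ))
        = Real.exp (-(T*δ)) * ∏ i ∈ s, Real.exp (-(T/R i)) := by
      rw [← Real.exp_sum, ← Real.exp_add]
      congr 1
      have h1 : ∑ i ∈ s, -(T / R i) = -T * (∑ i ∈ s, 1 / R i) := by
        rw [Finset.mul_sum]
        exact Finset.sum_congr rfl (fun i _ => by ring)
      rw [h1]; ring
    rw [hmgfsum, hexp]
    calc Real.exp (-(T*δ)) * (∏ i ∈ s, Real.exp (-(T/R i))) * ∏ i ∈ s, (R i/(R i - T))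
        = Real.exp (-(T*δ)) * ∏ i ∈ s, (Real.exp (-(T/R i)) * (R i/(R i - T))) := by
          rw [mul_assoc, ← Finset.prod_mul_distrib]
    _ ≤ Real.exp (-(T*δ)) * Real.exp ((3/2)*a^2 + 18) := by
        apply mul_le_mul_of_nonneg_left _ (Real.exp_pos _).le
        apply hprodβ
        · intro i hi
          have hRT : 0 < R i - T := by linarith [hTlt i hi, hRpos i hi]
          positivity
        · exact hfac
    _ ≤ Real.exp 18 * Real.exp (-(3/2) * a^2) := by
        rw [← Real.exp_add, ← Real.exp_add, hTδ]
        apply Real.exp_le_exp.mpr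
        linarith
  · -- lower tail
    have hset : {o : Ω' | ∑ i ∈ Finset.Icc 1 m, X i o
          ≤ (∫ o', ∑ i ∈ Finset.Icc 1 m, X i o' ∂(ℙ : Measure Ω')) - a * K ^ (-(3:ℝ)/2)}
        = {o : Ω' | (∑ i ∈ s, g i) o ≤ (∑ i ∈ s, 1/R i) - δ} := by
      ext o
      simp only [Set.mem_setOf_eq, hrw, hFs o, hδdef]
    rw [hset]
    have hInt : Integrable (fun ω => Real.exp (-T * (∑ i ∈ s, g i) ω)) ℙ :=
      hXindep.integrable_exp_mul_sum hgmeas (fun i hi => h_int_exp (-T) i hi (hTlt' i hi))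
    refine le_trans (measure_le_le_exp_mul_mgf (μ := ℙ) (X := ∑ i ∈ s, g i)
      ((∑ i ∈ s, 1/R i) - δ) (neg_nonpos.mpr hTpos.le) hInt) ?_
    have hmgfsum : mgf (∑ i ∈ s, g i) ℙ (-T) = ∏ i ∈ s, (R i / (R i - -T)) := by
      rw [hXindep.mgf_sum hgmeas s]
      exact Finset.prod_congr rfl (fun i hi => h_mgf (-T) i hi (hTlt' i hi))
    have hexp : Real.exp (-(-T) * ((∑ i ∈ s, 1/R i) - δ))
        = Real.exp (-(T*δ)) * ∏ i ∈ s, Real.exp (T/R i) := by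
      rw [← Real.exp_sum, ← Real.exp_add]
      congr 1
      have h1 : ∑ i ∈ s, (T / R i) = T * (∑ i ∈ s, 1 / R i) := by
        rw [Finset.mul_sum]
        exact Finset.sum_congr rfl (fun i _ => by ring)
      rw [h1]; ring
    rw [hmgfsum, hexp]
    calc Real.exp (-(T*δ)) * (∏ i ∈ s, Real.exp (T/R i)) * ∏ i ∈ s, (R i/(R i - -T))
        = Real.exp (-(T*δ)) * ∏ i ∈ s, (Real.exp (T/R i) * (R i/(R i - -T))) := by
          rw [mul_assoc, ← Finset.prod_mul_distrib]
    _ ≤ Real.exp (-(T*δ)) * Real.exp ((3/2)*a^2 + 18) := by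
        apply mul_le_mul_of_nonneg_left _ (Real.exp_pos _).le
        apply hprodβ
        · intro i hi
          have hRT : 0 < R i + T := by linarith [hRpos i hi]
          have : 0 < R i - -T := by linarith
          positivity
        · exact hfac'
    _ ≤ Real.exp 18 * Real.exp (-(3/2) * a^2) := by
        rw [← Real.exp_add, ← Real.exp_add, hTδ]
        apply Real.exp_le_exp.mpr
        linarith

end Stmt6Core

open Stmt6Core in
/-- Lemma: concentration of `Y_k` around its mean.
There is a constant `C > 0` such that for all `n ≥ 1`, `0 ≤ k ≤ n − 1` and
`0 < a ≤ k^{1/6}`: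
`P(Y_{n−k} ≥ E Y_{n−k} + a (k + 1/2)^{−3/2}) ≤ C e^{−(3/2)a²}` and
`P(Y_{n−k} ≤ E Y_{n−k} − a (k + 1/2)^{−3/2}) ≤ C e^{−(3/2)a²}`; consequently, for
`1 ≤ k ≤ n` and `0 < a ≤ (n − k)^{1/6}`,
`P(|Y_k − E Y_k| ≥ 2^{3/2} a (n − k + 1)^{−3/2}) ≤ 2C e^{−(3/2)a²}`. -/
theorem stmt_6
    (d : ℝ) (hd : 0 < d)
    (Ω : ℕ → Type) [∀ n, MeasureSpace (Ω n)]
    (hprob : ∀ n, IsProbabilityMeasure (ℙ : Measure (Ω n)))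
    (X : (n : ℕ) → ℕ → Ω n → ℝ)
    (hXmeas : ∀ n i, Measurable (X n i))
    (hXindep : ∀ n, iIndepFun (fun i : Fin n => X n (i + 1)) ℙ)
    (hXlaw : ∀ n i, 1 ≤ i → i ≤ n →
      Measure.map (X n i) ℙ = expMeasure (((n - i + 1 : ℕ) : ℝ) ^ 2))
    (Y : (n : ℕ) → ℕ → Ω n → ℝ)
    (hY : ∀ n k o, Y n k o = ∑ i ∈ Finset.Icc 1 k, X n i o) :
    ∃ C : ℝ, 0 < C ∧
      (∀ n k : ℕ, ∀ a : ℝ, 1 ≤ n → k ≤ n - 1 → 0 < a → a ≤ (k : ℝ) ^ ((1:ℝ)/6) →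
        ((ℙ : Measure (Ω n)) {o | (∫ o', Y n (n - k) o' ∂(ℙ : Measure (Ω n)))
            + a * ((k : ℝ) + 1/2) ^ (-(3:ℝ)/2) ≤ Y n (n - k) o}).toReal
          ≤ C * Real.exp (-(3/2) * a ^ 2)) ∧
      (∀ n k : ℕ, ∀ a : ℝ, 1 ≤ n → k ≤ n - 1 → 0 < a → a ≤ (k : ℝ) ^ ((1:ℝ)/6) →
        ((ℙ : Measure (Ω n)) {o | Y n (n - k) o ≤ (∫ o', Y n (n - k) o' ∂(ℙ : Measure (Ω n)))
            - a * ((k : ℝ) + 1/2) ^ (-(3:ℝ)/2)}).toReal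
          ≤ C * Real.exp (-(3/2) * a ^ 2)) ∧
      (∀ n k : ℕ, ∀ a : ℝ, 1 ≤ k → k ≤ n → 0 < a → a ≤ ((n - k : ℕ) : ℝ) ^ ((1:ℝ)/6) →
        ((ℙ : Measure (Ω n)) {o | (2 : ℝ) ^ ((3:ℝ)/2) * a * ((n - k + 1 : ℕ) : ℝ) ^ (-(3:ℝ)/2)
            ≤ |Y n k o - ∫ o', Y n k o' ∂(ℙ : Measure (Ω n))|}).toReal
          ≤ 2 * C * Real.exp (-(3/2) * a ^ 2)) := by
  refine ⟨Real.exp 18, Real.exp_pos 18, ?_, ?_, ?_⟩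
  · intro n k a hn hk ha ha6
    have hYe : Y n (n-k) = fun o => ∑ i ∈ Finset.Icc 1 (n-k), X n i o :=
      funext (hY n (n-k))
    rw [hYe]
    simpa using (core (hprob n) n (X n) (hXmeas n) (hXindep n)
      (fun i h1 h2 => hXlaw n i h1 h2) k hn hk a ha ha6).1
  · intro n k a hn hk ha ha6
    have hYe : Y n (n-k) = fun o => ∑ i ∈ Finset.Icc 1 (n-k), X n i o :=
      funext (hY n (n-k))
    rw [hYe]
    simpa using (core (hprob n) n (X n) (hXmeas n) (hXindep n)
      (fun i h1 h2 => hXlaw n i h1 h2) k hn hk a ha ha6).2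
  · intro n k a hk1 hkn ha ha6
    have hn : 1 ≤ n := le_trans hk1 hkn
    have hk' : n - k ≤ n - 1 := by omega
    have hcore := core (hprob n) n (X n) (hXmeas n) (hXindep n)
      (fun i h1 h2 => hXlaw n i h1 h2) (n - k) hn hk' a ha ha6
    rw [show n - (n - k) = k from by omega] at hcore
    obtain ⟨hup, hlo⟩ := hcore
    have hYe : Y n k = fun o => ∑ i ∈ Finset.Icc 1 k, X n i o := funext (hY n k)
    rw [hYe]
    set S : Ω n → ℝ := fun o => ∑ i ∈ Finset.Icc 1 k, X n i o with hS
    set E : ℝ := ∫ o', S o' ∂(ℙ : Measure (Ω n)) with hE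
    set K' : ℝ := ((n - k : ℕ):ℝ) + 1/2 with hK'
    have hK'pos : (0:ℝ) < K' := by positivity
    set δ : ℝ := a * K' ^ (-(3:ℝ)/2) with hδ
    -- the deviation in the target is at least δ
    have hdev : δ ≤ (2 : ℝ) ^ ((3:ℝ)/2) * a * ((n - k + 1 : ℕ) : ℝ) ^ (-(3:ℝ)/2) := by
      set P : ℝ := ((n - k + 1 : ℕ) : ℝ) with hP
      have hPval : P = ((n - k : ℕ):ℝ) + 1 := by rw [hP]; push_cast; ring
      have hPpos : (0:ℝ) < P := by rw [hPval]; positivity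
      have hP2K : P ≤ 2 * K' := by rw [hPval, hK']; linarith
      have h32 : (0:ℝ) ≤ (3:ℝ)/2 := by norm_num
      have hmono : P ^ ((3:ℝ)/2) ≤ (2*K') ^ ((3:ℝ)/2) :=
        Real.rpow_le_rpow hPpos.le hP2K h32
      have hPinv : ((2*K') ^ ((3:ℝ)/2))⁻¹ ≤ (P ^ ((3:ℝ)/2))⁻¹ := by
        apply inv_anti₀ (Real.rpow_pos_of_pos hPpos _) hmono
      have e1 : P ^ (-(3:ℝ)/2) = (P ^ ((3:ℝ)/2))⁻¹ := by
        rw [show -(3:ℝ)/2 = -((3:ℝ)/2) by ring, Real.rpow_neg hPpos.le]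
      have e2 : (2*K') ^ (-(3:ℝ)/2) = ((2*K') ^ ((3:ℝ)/2))⁻¹ := by
        rw [show -(3:ℝ)/2 = -((3:ℝ)/2) by ring, Real.rpow_neg (by positivity)]
      have e3 : (2 : ℝ) ^ ((3:ℝ)/2) * (2*K') ^ (-(3:ℝ)/2) = K' ^ (-(3:ℝ)/2) := by
        rw [Real.mul_rpow (by norm_num) hK'pos.le, ← mul_assoc,
          ← Real.rpow_add (by norm_num : (0:ℝ) < 2)]
        norm_num
      calc δ = a * ((2 : ℝ) ^ ((3:ℝ)/2) * (2*K') ^ (-(3:ℝ)/2)) := by rw [hδ, e3]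
      _ ≤ a * ((2 : ℝ) ^ ((3:ℝ)/2) * P ^ (-(3:ℝ)/2)) := by
          apply mul_le_mul_of_nonneg_left _ ha.le
          apply mul_le_mul_of_nonneg_left _ (Real.rpow_nonneg (by norm_num) _)
          rw [e1, e2]
          exact hPinv
      _ = (2 : ℝ) ^ ((3:ℝ)/2) * a * P ^ (-(3:ℝ)/2) := by ring
    -- inclusion into union of the two one-sided events
    have hsub : {o : Ω n | (2 : ℝ) ^ ((3:ℝ)/2) * a * ((n - k + 1 : ℕ) : ℝ) ^ (-(3:ℝ)/2)
          ≤ |S o - E|}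
        ⊆ {o : Ω n | E + δ ≤ S o} ∪ {o : Ω n | S o ≤ E - δ} := by
      intro o ho
      simp only [Set.mem_setOf_eq] at ho
      have hδabs : δ ≤ |S o - E| := le_trans hdev ho
      rcases le_abs.mp hδabs with h | h
      · left; simp only [Set.mem_setOf_eq]; linarith
      · right; simp only [Set.mem_setOf_eq]; linarith
    have hA := hup
    have hB := hlo
    have hfin : (ℙ : Measure (Ω n)) {o : Ω n | E + δ ≤ S o} ≠ ⊤ := measure_ne_top _ _
    have hfin' : (ℙ : Measure (Ω n)) {o : Ω n | S o ≤ E - δ} ≠ ⊤ := measure_ne_top _ _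
    calc ((ℙ : Measure (Ω n)) {o : Ω n | (2 : ℝ) ^ ((3:ℝ)/2) * a
            * ((n - k + 1 : ℕ) : ℝ) ^ (-(3:ℝ)/2) ≤ |S o - E|}).toReal
        ≤ (((ℙ : Measure (Ω n)) {o : Ω n | E + δ ≤ S o})
            + ((ℙ : Measure (Ω n)) {o : Ω n | S o ≤ E - δ})).toReal := by
          apply ENNReal.toReal_mono (by finiteness)
          exact le_trans (measure_mono hsub) (measure_union_le _ _)
    _ = ((ℙ : Measure (Ω n)) {o : Ω n | E + δ ≤ S o}).toReal
          + ((ℙ : Measure (Ω n)) {o : Ω n | S o ≤ E - δ}).toReal :=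
          ENNReal.toReal_add hfin hfin'
    _ ≤ Real.exp 18 * Real.exp (-(3/2) * a^2) + Real.exp 18 * Real.exp (-(3/2) * a^2) := by
          have h1 : ((ℙ : Measure (Ω n)) {o : Ω n | E + δ ≤ S o}).toReal
              ≤ Real.exp 18 * Real.exp (-(3/2) * a^2) := by
            refine le_trans (le_of_eq ?_) hA
            congr 1
          have h2 : ((ℙ : Measure (Ω n)) {o : Ω n | S o ≤ E - δ}).toReal
              ≤ Real.exp 18 * Real.exp (-(3/2) * a^2) := by
            refine le_trans (le_of_eq ?_) hB
            congr 1
          linarith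
    _ = 2 * Real.exp 18 * Real.exp (-(3/2) * a^2) := by ring
end

section
/- Let d > 1. There is a constant C > 0, depending only on d, such that for all n, all positive integers κ_n ≤ n − 1, and all 1 ≤ k ≤ m_n: Ξ_k ≤ C (n − k + 1)^{2−1/d}. Furthermore, for 2 ≤ k ≤ m_n: n^{2−1/d} I_{(κ_n−1)/n}((n−k)/n) ≤ Ξ_k ≤ n^{2−1/d} I_0((n−k+2)/n), where I_a(t) = ∫_a^t x^{1−1/d}(1−x)^{1/d−1} dx for 0 ≤ a ≤ t ≤ 1. -/
open MeasureTheory ProbabilityTheory Filter Real Set intervalIntegral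
open scoped ProbabilityTheory ENNReal NNReal
set_option maxHeartbeats 1000000


lemma aux8_expMeasure_eq (r : ℝ) :
    expMeasure r = volume.withDensity
      (fun x => ((Real.toNNReal (exponentialPDFReal r x) : ℝ≥0) : ℝ≥0∞)) := rfl

lemma aux8_pdf_meas (r : ℝ) : Measurable (fun x => Real.toNNReal (exponentialPDFReal r x)) :=
  (measurable_exponentialPDFReal r).real_toNNReal

lemma aux8_pdfReal_eq (r : ℝ) :
    exponentialPDFReal r = fun x => if 0 ≤ x then r * Real.exp (-(r * x)) else 0 := by
  funext x
  simp only [exponentialPDFReal, gammaPDFReal]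
  split_ifs with h
  · simp [Real.rpow_one, Real.Gamma_one]
  · rfl

lemma aux8_smul_eq (r : ℝ) (hr : 0 < r) :
    (fun x : ℝ => (Real.toNNReal (exponentialPDFReal r x)) • x)
      = Set.indicator (Ici (0:ℝ)) (fun x => r * Real.exp (-(r * x)) * x) := by
  funext x
  rw [NNReal.smul_def, aux8_pdfReal_eq]
  by_cases h : (0:ℝ) ≤ x
  · rw [Set.indicator_of_mem (mem_Ici.2 h)]
    simp only [h, if_true, smul_eq_mul]
    
    rw [Real.coe_toNNReal _ (by positivity)]
  · rw [Set.indicator_of_notMem (fun hx => h (mem_Ici.1 hx))]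
    simp [h]

lemma aux8_integrableOn (r : ℝ) (hr : 0 < r) :
    IntegrableOn (fun x => r * Real.exp (-(r * x)) * x) (Ici (0:ℝ)) := by
  rw [integrableOn_Ici_iff_integrableOn_Ioi]
  have h : IntegrableOn (fun x : ℝ => x ^ (1:ℝ) * Real.exp (-r * x ^ (1:ℝ))) (Ioi 0) :=
    integrableOn_rpow_mul_exp_neg_mul_rpow (by norm_num) (by norm_num) hr
  have heq : (fun x : ℝ => x ^ (1:ℝ) * Real.exp (-r * x ^ (1:ℝ)))
      = fun x : ℝ => x * Real.exp (-(r * x)) := by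
    funext x; rw [Real.rpow_one, neg_mul]
  rw [heq] at h
  exact IntegrableOn.congr_fun (h.const_mul r) (fun x _ => by ring) measurableSet_Ioi

lemma aux8_integrable_id (r : ℝ) (hr : 0 < r) :
    Integrable (fun x : ℝ => x) (expMeasure r) := by
  rw [aux8_expMeasure_eq, integrable_withDensity_iff_integrable_smul (aux8_pdf_meas r)]
  rw [aux8_smul_eq r hr]
  rw [integrable_indicator_iff measurableSet_Ici]
  exact aux8_integrableOn r hr

lemma aux8_integral_id (r : ℝ) (hr : 0 < r) :
    ∫ x, x ∂(expMeasure r) = r⁻¹ := by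
  rw [aux8_expMeasure_eq, integral_withDensity_eq_integral_smul (aux8_pdf_meas r)]
  rw [aux8_smul_eq r hr, MeasureTheory.integral_indicator measurableSet_Ici,
    integral_Ici_eq_integral_Ioi]
  have heq : ∀ x ∈ Ioi (0:ℝ), r * Real.exp (-(r * x)) * x
      = r * (x ^ ((2:ℝ)-1) * Real.exp (-(r * x))) := by
    intro x _
    rw [show (2:ℝ)-1 = 1 by norm_num, Real.rpow_one]; ring
  rw [setIntegral_congr_fun measurableSet_Ioi heq, MeasureTheory.integral_const_mul,
    integral_rpow_mul_exp_neg_mul_Ioi (by norm_num) hr, Real.Gamma_two]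
  rw [show ((2:ℝ)) = ((2:ℕ):ℝ) by norm_num, Real.rpow_natCast]
  field_simp


noncomputable def aux8f (d : ℝ) : ℝ → ℝ := fun x => x ^ (1-1/d) * (1-x) ^ (1/d-1)

section
variable {d : ℝ} (hd : 1 < d)

lemma aux8_exp1 (hd : 1 < d) : 0 < 1 - 1/d := by
  have : 1/d < 1 := by rw [div_lt_one (by linarith)]; exact hd
  linarith

lemma aux8_exp2 (hd : 1 < d) : -1 < 1/d - 1 := by
  have : 0 < 1/d := by
    apply div_pos one_pos (by linarith)
  linarith

lemma aux8f_nonneg (hd : 1 < d) {x : ℝ} (h0 : 0 ≤ x) (h1 : x ≤ 1) : 0 ≤ aux8f d x :=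
  mul_nonneg (Real.rpow_nonneg h0 _) (Real.rpow_nonneg (by linarith) _)

lemma aux8f_mono (hd : 1 < d) {x y : ℝ} (h0 : 0 ≤ x) (hxy : x ≤ y) (hy : y < 1) :
    aux8f d x ≤ aux8f d y := by
  unfold aux8f
  have he := aux8_exp1 hd
  have h1 : x ^ (1-1/d) ≤ y ^ (1-1/d) :=
    Real.rpow_le_rpow h0 hxy (le_of_lt he)
  have h2 : (1-x) ^ (1/d-1) ≤ (1-y) ^ (1/d-1) :=
    Real.rpow_le_rpow_of_nonpos (by linarith) (by linarith) (by linarith)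
  exact mul_le_mul h1 h2 (Real.rpow_nonneg (by linarith) _) (Real.rpow_nonneg (h0.trans hxy) _)

lemma aux8f_meas (hd : 1 < d) : Measurable (aux8f d) := by
  unfold aux8f
  fun_prop

lemma aux8g_intervalIntegrable (hd : 1 < d) (a b : ℝ) :
    IntervalIntegrable (fun x : ℝ => (1-x) ^ (1/d-1)) volume a b := by
  have h := (intervalIntegrable_rpow' (aux8_exp2 hd) (a := 1-a) (b := 1-b)).comp_sub_left 1
  have e1 : (1:ℝ)-(1-a) = a := by ring
  have e2 : (1:ℝ)-(1-b) = b := by ring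
  rw [e1, e2] at h
  exact h

lemma aux8f_intervalIntegrable (hd : 1 < d) {a b : ℝ} (h0 : 0 ≤ a) (hab : a ≤ b) (hb : b ≤ 1) :
    IntervalIntegrable (aux8f d) volume a b := by
  refine (aux8g_intervalIntegrable hd a b).mono_fun
    ((aux8f_meas hd).aestronglyMeasurable) ?_
  rw [EventuallyLE, ae_restrict_iff' measurableSet_uIoc]
  refine ae_of_all _ fun x hx => ?_
  rw [uIoc_of_le hab] at hx
  have hx0 : 0 ≤ x := le_trans h0 (le_of_lt hx.1)
  have hx1 : x ≤ 1 := hx.2.trans hb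
  rw [Real.norm_eq_abs, Real.norm_eq_abs, abs_of_nonneg (aux8f_nonneg hd hx0 hx1),
    abs_of_nonneg (Real.rpow_nonneg (by linarith) _)]
  unfold aux8f
  have : x ^ (1-1/d) ≤ 1 := Real.rpow_le_one hx0 hx1 (le_of_lt (aux8_exp1 hd))
  nlinarith [Real.rpow_nonneg (show (0:ℝ) ≤ 1-x by linarith) (1/d-1)]

lemma aux8f_integral_le (hd : 1 < d) {a b : ℝ} (h0 : 0 ≤ a) (hab : a ≤ b) (hb : b < 1) :
    ∫ x in a..b, aux8f d x ≤ (b - a) * aux8f d b := by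
  have h := intervalIntegral.integral_mono_on hab
    (aux8f_intervalIntegrable hd h0 hab (le_of_lt hb)) (_root_.intervalIntegrable_const (c := aux8f d b))
    (fun x hx => aux8f_mono hd (le_trans h0 hx.1) hx.2 hb)
  simpa [intervalIntegral.integral_const, smul_eq_mul] using h

lemma aux8f_le_integral (hd : 1 < d) {a b : ℝ} (h0 : 0 ≤ a) (hab : a ≤ b) (hb : b ≤ 1) :
    (b - a) * aux8f d a ≤ ∫ x in a..b, aux8f d x := by
  have hne : ∀ᵐ x : ℝ ∂volume, x ≠ 1 := by
    rw [ae_iff]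
    simp only [not_not, Set.setOf_eq_eq_singleton]
    exact Real.volume_singleton
  have h := intervalIntegral.integral_mono_ae_restrict hab
    (_root_.intervalIntegrable_const (c := aux8f d a))
    (aux8f_intervalIntegrable hd h0 hab hb) ?_
  · simpa [intervalIntegral.integral_const, smul_eq_mul] using h
  · have h2 := ae_restrict_mem (μ := volume) (measurableSet_Icc (a := a) (b := b))
    refine (ae_restrict_of_ae hne).mp (h2.mono fun x hx hxne => ?_)
    exact aux8f_mono hd h0 hx.1 (lt_of_le_of_ne (hx.2.trans hb) hxne)

lemma aux8f_integral_nonneg (hd : 1 < d) {a b : ℝ} (h0 : 0 ≤ a) (hab : a ≤ b) (hb : b ≤ 1) :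
    0 ≤ ∫ x in a..b, aux8f d x :=
  intervalIntegral.integral_nonneg hab
    (fun x hx => aux8f_nonneg hd (le_trans h0 hx.1) (hx.2.trans hb))

end


section
variable {d : ℝ}

lemma aux8_ratio_eq (hd : 1 < d) {v ν : ℝ} (hv : 0 < v) (hvν : v < ν) :
    ((ν - v)/(v*ν))^(1/d-1) = ν^(2-1/d) * (ν⁻¹ * aux8f d (v/ν)) := by
  have hν : 0 < ν := hv.trans hvν
  have hu : 0 < ν - v := by linarith
  unfold aux8f
  have h1 : 1 - v/ν = (ν-v)/ν := by field_simp
  rw [h1]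
  rw [Real.div_rpow hu.le (mul_nonneg hv.le hν.le), Real.mul_rpow hv.le hν.le,
      Real.div_rpow hv.le hν.le, Real.div_rpow hu.le hν.le]
  rw [show (2-1/d) = 1 + (1-1/d) by ring, Real.rpow_add hν, Real.rpow_one]
  rw [show (1-1/d : ℝ) = -(1/d-1) by ring, Real.rpow_neg hv.le, Real.rpow_neg hν.le]
  have h2 : v ^ (1/d-1) ≠ 0 := (Real.rpow_pos_of_pos hv _).ne'
  have h3 : ν ^ (1/d-1) ≠ 0 := (Real.rpow_pos_of_pos hν _).ne'
  field_simp

lemma aux8_term_lower (hd : 1 < d) {n i : ℕ} {E : ℝ} (h1 : 1 ≤ i) (h2 : i + 1 ≤ n)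
    (hEpos : 0 < E) (hE : E ≤ (i:ℝ)/(((n:ℝ)-i)*n)) :
    (n:ℝ)^(2-1/d) * (∫ x in (((n:ℝ)-i-1)/n)..(((n:ℝ)-i)/n), aux8f d x) ≤ E^(1/d-1) := by
  have hi1 : (1:ℝ) ≤ (i:ℝ) := by exact_mod_cast h1
  have hin : (i:ℝ) + 1 ≤ (n:ℝ) := by exact_mod_cast h2
  set v : ℝ := (n:ℝ) - i with hvdef
  have hv : 0 < v := by simp only [hvdef]; linarith
  have hv1 : 1 ≤ v := by simp only [hvdef]; linarith
  have hvν : v < (n:ℝ) := by simp only [hvdef]; linarith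
  have hνpos : (0:ℝ) < n := by linarith
  have hEU : ((i:ℝ)/(((n:ℝ)-i)*n))^(1/d-1) ≤ E^(1/d-1) := by
    apply Real.rpow_le_rpow_of_nonpos hEpos hE
    have := aux8_exp1 hd; linarith
  have hiv : (i:ℝ) = (n:ℝ) - v := by simp [hvdef]
  have heq : ((i:ℝ)/(((n:ℝ)-i)*n))^(1/d-1)
      = (n:ℝ)^(2-1/d) * (((n:ℝ))⁻¹ * aux8f d (v/n)) := by
    rw [show (i:ℝ)/(((n:ℝ)-i)*n) = ((n:ℝ) - v)/(v*n) by rw [← hiv, hvdef]]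
    exact aux8_ratio_eq hd hv hvν
  refine le_trans ?_ (heq ▸ hEU)
  apply mul_le_mul_of_nonneg_left _ (Real.rpow_nonneg hνpos.le _)
  have hint := aux8f_integral_le hd (a := (v-1)/n) (b := v/n)
    (div_nonneg (by linarith) hνpos.le) ((div_le_div_iff_of_pos_right hνpos).2 (by linarith))
    (by rw [div_lt_one hνpos]; exact hvν)
  calc ∫ x in (((n:ℝ)-i-1)/n)..(((n:ℝ)-i)/n), aux8f d x
      = ∫ x in ((v-1)/n)..(v/n), aux8f d x := by rw [hvdef]
    _ ≤ (v/n - (v-1)/n) * aux8f d (v/n) := hint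
    _ = ((n:ℝ))⁻¹ * aux8f d (v/n) := by
        congr 1; field_simp; ring
end

lemma aux8_term_upper (hd : 1 < d) {n i : ℕ} {E : ℝ} (h1 : 2 ≤ i) (h2 : i + 1 ≤ n)
    (hE : (i:ℝ)/(((n:ℝ)-i+1)*((n:ℝ)+1)) ≤ E) :
    E^(1/d-1) ≤
      (n:ℝ)^(2-1/d) * (∫ x in (((n:ℝ)-i+1)/n)..(((n:ℝ)-i+2)/n), aux8f d x) := by
  have hi1 : (2:ℝ) ≤ (i:ℝ) := by exact_mod_cast h1
  have hin : (i:ℝ) + 1 ≤ (n:ℝ) := by exact_mod_cast h2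
  set v : ℝ := (n:ℝ) - i + 1 with hvdef
  have hv : 0 < v := by simp only [hvdef]; linarith
  have hv2 : 2 ≤ v := by simp only [hvdef]; linarith
  have hvν : v < (n:ℝ) := by simp only [hvdef]; linarith
  have hνpos : (0:ℝ) < n := by linarith
  have hLpos : 0 < (i:ℝ)/(((n:ℝ)-i+1)*((n:ℝ)+1)) := by
    apply div_pos (by linarith)
    apply mul_pos (by linarith) (by linarith)
  have hexp : (1/d - 1 : ℝ) ≤ 0 := by have := aux8_exp1 hd; linarith
  have hEL : E^(1/d-1) ≤ ((i:ℝ)/(((n:ℝ)-i+1)*((n:ℝ)+1)))^(1/d-1) :=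
    Real.rpow_le_rpow_of_nonpos hLpos hE hexp
  set M : ℝ := ((n:ℝ) - v)/(v*(n:ℝ)) with hMdef
  have hMpos : 0 < M := by
    apply div_pos (by linarith) (mul_pos hv hνpos)
  have hML : M ≤ (i:ℝ)/(((n:ℝ)-i+1)*((n:ℝ)+1)) := by
    rw [hMdef, div_le_div_iff₀ (mul_pos hv hνpos) (mul_pos (by linarith) (by linarith))]
    have hnv : (n:ℝ) - v = (i:ℝ) - 1 := by rw [hvdef]; ring
    rw [hnv, hvdef]
    nlinarith
  have hLM : ((i:ℝ)/(((n:ℝ)-i+1)*((n:ℝ)+1)))^(1/d-1) ≤ M^(1/d-1) :=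
    Real.rpow_le_rpow_of_nonpos hMpos hML hexp
  have heq : M^(1/d-1) = (n:ℝ)^(2-1/d) * (((n:ℝ))⁻¹ * aux8f d (v/n)) := by
    rw [hMdef]; exact aux8_ratio_eq hd hv hvν
  refine (hEL.trans hLM).trans ?_
  rw [heq]
  apply mul_le_mul_of_nonneg_left _ (Real.rpow_nonneg hνpos.le _)
  have hint := aux8f_le_integral hd (a := v/n) (b := (v+1)/n)
    (div_nonneg hv.le hνpos.le) ((div_le_div_iff_of_pos_right hνpos).2 (by linarith))
    (by rw [div_le_one hνpos]; linarith)
  calc ((n:ℝ))⁻¹ * aux8f d (v/n)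
      = ((v+1)/n - v/n) * aux8f d (v/n) := by congr 1; field_simp; ring
    _ ≤ ∫ x in (v/n)..((v+1)/n), aux8f d x := hint
    _ = ∫ x in (((n:ℝ)-i+1)/n)..(((n:ℝ)-i+2)/n), aux8f d x := by
        rw [hvdef, show (n:ℝ) - i + 1 + 1 = (n:ℝ) - i + 2 by ring]


section
variable {d : ℝ}

lemma aux8_lower_sum (hd : 1 < d) (n κ k m : ℕ) (hκ1 : 1 ≤ κ) (hκn : κ + 1 ≤ n)
    (hk : 1 ≤ k) (hkm : k ≤ m) (hm : m = n - κ) (g : ℕ → ℝ)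
    (hg : ∀ i, k ≤ i → i ≤ m →
      (n:ℝ)^(2-1/d) * (∫ x in (((n:ℝ)-i-1)/n)..(((n:ℝ)-i)/n), aux8f d x) ≤ g i) :
    (n:ℝ)^(2-1/d) * (∫ x in (((κ:ℝ)-1)/n)..(((n:ℝ)-k)/n), aux8f d x)
      ≤ ∑ i ∈ Finset.Icc k m, g i := by
  have hmn : m + κ = n := by omega
  have hmr : (m:ℝ) = (n:ℝ) - κ := by
    have : ((m + κ : ℕ) : ℝ) = (n:ℝ) := by rw [hmn]
    push_cast at this; linarith
  have hνpos : (0:ℝ) < n := by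
    have : (0:ℕ) < n := by omega
    exact_mod_cast this
  set T : ℕ := m + 1 - k with hT
  have hTr : (T:ℝ) = (m:ℝ) + 1 - k := by
    have : ((T + k : ℕ) : ℝ) = ((m+1 : ℕ):ℝ) := by congr 1; omega
    push_cast at this; linarith
  set c : ℕ → ℝ := fun t => ((n:ℝ) - k - t)/n with hc
  have hmono : ∀ s t : ℕ, s ≤ t → c t ≤ c s := by
    intro s t hst
    have hst' : (s:ℝ) ≤ t := by exact_mod_cast hst
    simp only [hc]
    exact (div_le_div_iff_of_pos_right hνpos).2 (by linarith)
  have hcT : c T = ((κ:ℝ)-1)/n := by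
    simp only [hc]; rw [hTr, hmr]; ring_nf
  have hcT0 : 0 ≤ c T := by
    rw [hcT]
    apply div_nonneg _ hνpos.le
    have : (1:ℝ) ≤ κ := by exact_mod_cast hκ1
    linarith
  have hc01 : c 0 ≤ 1 := by
    simp only [hc]
    rw [div_le_one hνpos]
    have : (1:ℝ) ≤ k := by exact_mod_cast hk
    push_cast
    linarith
  have hint : ∀ t : ℕ, t < T → IntervalIntegrable (aux8f d) volume (c t) (c (t+1)) := by
    intro t ht
    refine (aux8f_intervalIntegrable hd (a := c (t+1)) (b := c t) ?_ (hmono t (t+1) (by omega)) ?_).symm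
    · exact le_trans hcT0 (hmono (t+1) T (by omega))
    · exact le_trans (hmono 0 t (Nat.zero_le t)) hc01
  have tele := intervalIntegral.sum_integral_adjacent_intervals (μ := volume)
    (f := aux8f d) (a := c) hint
  have hsum : ∑ i ∈ Finset.Icc k m, g i = ∑ t ∈ Finset.range T, g (k + t) := by
    rw [← Finset.Ico_add_one_right_eq_Icc, Finset.sum_Ico_eq_sum_range]
  rw [hsum]
  have hterm : ∀ t ∈ Finset.range T,
      (n:ℝ)^(2-1/d) * (∫ x in (c (t+1))..(c t), aux8f d x) ≤ g (k + t) := by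
    intro t ht
    rw [Finset.mem_range] at ht
    have h1 : k ≤ k + t := by omega
    have h2 : k + t ≤ m := by omega
    have := hg (k+t) h1 h2
    have e1 : ((n:ℝ) - (k+t:ℕ) - 1)/n = c (t+1) := by simp only [hc]; push_cast; ring_nf
    have e2 : ((n:ℝ) - (k+t:ℕ))/n = c t := by simp only [hc]; push_cast; ring_nf
    rwa [e1, e2] at this
  calc (n:ℝ)^(2-1/d) * (∫ x in (((κ:ℝ)-1)/n)..(((n:ℝ)-k)/n), aux8f d x)
      = ∑ t ∈ Finset.range T, (n:ℝ)^(2-1/d) * (∫ x in (c (t+1))..(c t), aux8f d x) := by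
        rw [← Finset.mul_sum]
        congr 1
        have : ∑ t ∈ Finset.range T, (∫ x in (c (t+1))..(c t), aux8f d x)
            = - ∑ t ∈ Finset.range T, (∫ x in (c t)..(c (t+1)), aux8f d x) := by
          rw [← Finset.sum_neg_distrib]
          exact Finset.sum_congr rfl fun t _ => intervalIntegral.integral_symm _ _
        rw [this, tele, ← intervalIntegral.integral_symm, hcT]
        congr 1
        simp only [hc]
        push_cast
        ring_nf
    _ ≤ ∑ t ∈ Finset.range T, g (k + t) := Finset.sum_le_sum hterm
end

lemma aux8_upper_sum (hd : 1 < d) (n κ k m : ℕ) (hκ1 : 1 ≤ κ) (hκn : κ + 1 ≤ n)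
    (hk : 2 ≤ k) (hkm : k ≤ m) (hm : m = n - κ) (g : ℕ → ℝ)
    (hg : ∀ i, k ≤ i → i ≤ m →
      g i ≤ (n:ℝ)^(2-1/d) * (∫ x in (((n:ℝ)-i+1)/n)..(((n:ℝ)-i+2)/n), aux8f d x)) :
    ∑ i ∈ Finset.Icc k m, g i
      ≤ (n:ℝ)^(2-1/d) * (∫ x in (0:ℝ)..(((n:ℝ)-k+2)/n), aux8f d x) := by
  have hmn : m + κ = n := by omega
  have hmr : (m:ℝ) = (n:ℝ) - κ := by
    have : ((m + κ : ℕ) : ℝ) = (n:ℝ) := by rw [hmn]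
    push_cast at this; linarith
  have hνpos : (0:ℝ) < n := by
    have : (0:ℕ) < n := by omega
    exact_mod_cast this
  have hκr : (1:ℝ) ≤ κ := by exact_mod_cast hκ1
  have hkr : (2:ℝ) ≤ k := by exact_mod_cast hk
  have hkmr : (k:ℝ) ≤ m := by exact_mod_cast hkm
  set T : ℕ := m + 1 - k with hT
  have hTr : (T:ℝ) = (m:ℝ) + 1 - k := by
    have : ((T + k : ℕ) : ℝ) = ((m+1 : ℕ):ℝ) := by congr 1; omega
    push_cast at this; linarith
  set c : ℕ → ℝ := fun t => ((n:ℝ) - k - t + 2)/n with hc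
  have hmono : ∀ s t : ℕ, s ≤ t → c t ≤ c s := by
    intro s t hst
    have hst' : (s:ℝ) ≤ t := by exact_mod_cast hst
    simp only [hc]
    exact (div_le_div_iff_of_pos_right hνpos).2 (by linarith)
  have hcT : c T = ((κ:ℝ)+1)/n := by
    simp only [hc]; rw [hTr, hmr]; ring_nf
  have hcT0 : 0 ≤ c T := by
    rw [hcT]; positivity
  have hc01 : c 0 ≤ 1 := by
    simp only [hc]
    rw [div_le_one hνpos]
    push_cast
    linarith
  have hint : ∀ t : ℕ, t < T → IntervalIntegrable (aux8f d) volume (c t) (c (t+1)) := by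
    intro t ht
    refine (aux8f_intervalIntegrable hd (a := c (t+1)) (b := c t) ?_ (hmono t (t+1) (by omega)) ?_).symm
    · exact le_trans hcT0 (hmono (t+1) T (by omega))
    · exact le_trans (hmono 0 t (Nat.zero_le t)) hc01
  have tele := intervalIntegral.sum_integral_adjacent_intervals (μ := volume)
    (f := aux8f d) (a := c) hint
  have hsum : ∑ i ∈ Finset.Icc k m, g i = ∑ t ∈ Finset.range T, g (k + t) := by
    rw [← Finset.Ico_add_one_right_eq_Icc, Finset.sum_Ico_eq_sum_range]
  rw [hsum]
  have hterm : ∀ t ∈ Finset.range T,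
      g (k + t) ≤ (n:ℝ)^(2-1/d) * (∫ x in (c (t+1))..(c t), aux8f d x) := by
    intro t ht
    rw [Finset.mem_range] at ht
    have := hg (k+t) (by omega) (by omega)
    have e1 : ((n:ℝ) - (k+t:ℕ) + 1)/n = c (t+1) := by simp only [hc]; push_cast; ring_nf
    have e2 : ((n:ℝ) - (k+t:ℕ) + 2)/n = c t := by simp only [hc]; push_cast; ring_nf
    rwa [e1, e2] at this
  calc ∑ t ∈ Finset.range T, g (k + t)
      ≤ ∑ t ∈ Finset.range T, (n:ℝ)^(2-1/d) * (∫ x in (c (t+1))..(c t), aux8f d x) :=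
        Finset.sum_le_sum hterm
    _ = (n:ℝ)^(2-1/d) * (∫ x in (c T)..(c 0), aux8f d x) := by
        rw [← Finset.mul_sum]
        congr 1
        have : ∑ t ∈ Finset.range T, (∫ x in (c (t+1))..(c t), aux8f d x)
            = - ∑ t ∈ Finset.range T, (∫ x in (c t)..(c (t+1)), aux8f d x) := by
          rw [← Finset.sum_neg_distrib]
          exact Finset.sum_congr rfl fun t _ => intervalIntegral.integral_symm _ _
        rw [this, tele, ← intervalIntegral.integral_symm]
    _ ≤ (n:ℝ)^(2-1/d) * (∫ x in (0:ℝ)..(((n:ℝ)-k+2)/n), aux8f d x) := by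
        apply mul_le_mul_of_nonneg_left _ (Real.rpow_nonneg hνpos.le _)
        have hc0e : c 0 = ((n:ℝ)-k+2)/n := by simp only [hc]; push_cast; ring_nf
        have hsplit := intervalIntegral.integral_add_adjacent_intervals (μ := volume)
          (a := (0:ℝ)) (b := c T) (c := c 0) (f := aux8f d)
          (aux8f_intervalIntegrable hd le_rfl hcT0 (le_trans (hmono 0 T (Nat.zero_le T)) hc01))
          ((aux8f_intervalIntegrable hd hcT0 (hmono 0 T (Nat.zero_le T)) hc01).symm.symm)
        rw [hc0e] at hsplit
        rw [hc0e] at tele ⊢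
        have hnn := aux8f_integral_nonneg hd (a := (0:ℝ)) (b := c T) le_rfl hcT0
          (le_trans (hmono 0 T (Nat.zero_le T)) hc01)
        rw [hcT] at hsplit hnn ⊢
        linarith

lemma aux8_int_le (hd : 1 < d) {t : ℝ} (h0 : 0 ≤ t) (h1 : t ≤ 1) :
    ∫ x in (0:ℝ)..t, aux8f d x ≤ 4*d*t^(2-1/d) := by
  have he1 := aux8_exp1 (d := d) hd
  have he2 := aux8_exp2 (d := d) hd
  have hd0 : (0:ℝ) < d := by linarith
  have htP : 0 ≤ t^(2-1/d) := Real.rpow_nonneg h0 _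
  by_cases hhalf : t ≤ 1/2
  · have hmono : ∀ x ∈ Icc (0:ℝ) t, aux8f d x ≤ 2 * x^(1-1/d) := by
      intro x hx
      unfold aux8f
      have hx1 : 1/2 ≤ 1-x := by have := hx.2; linarith
      have hfac : (1-x)^(1/d-1) ≤ 2 := by
        calc (1-x)^(1/d-1) ≤ (1/2 : ℝ)^(1/d-1) :=
              Real.rpow_le_rpow_of_nonpos (by norm_num) hx1 (by linarith)
          _ ≤ (1/2 : ℝ)^(-1:ℝ) :=
              Real.rpow_le_rpow_of_exponent_ge (by norm_num) (by norm_num) (by linarith)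
          _ = 2 := by
              rw [Real.rpow_neg_one]; norm_num
      have hxp : 0 ≤ x^(1-1/d) := Real.rpow_nonneg hx.1 _
      nlinarith [Real.rpow_nonneg (show (0:ℝ) ≤ 1-x by linarith) (1/d-1)]
    have hint1 : IntervalIntegrable (aux8f d) volume 0 t :=
      aux8f_intervalIntegrable hd le_rfl h0 h1
    have hint2 : IntervalIntegrable (fun x : ℝ => 2 * x^(1-1/d)) volume 0 t :=
      (intervalIntegrable_rpow' (by linarith)).const_mul 2
    have h := intervalIntegral.integral_mono_on h0 hint1 hint2 hmono
    have hval : (∫ x in (0:ℝ)..t, 2 * x^(1-1/d)) = 2 * (t^(2-1/d)/(2-1/d)) := by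
      rw [intervalIntegral.integral_const_mul, integral_rpow (Or.inl (by linarith))]
      rw [Real.zero_rpow (by positivity : (1-1/d+1:ℝ) ≠ 0),
        show (1-1/d+1 : ℝ) = 2-1/d by ring]
      ring
    rw [hval] at h
    have hone : (1:ℝ) ≤ 2-1/d := by
      have : 1/d ≤ 1 := by rw [div_le_one hd0]; linarith
      linarith
    have : t^(2-1/d)/(2-1/d) ≤ t^(2-1/d) := div_le_self htP hone
    nlinarith
  · have hmono : ∀ x ∈ Icc (0:ℝ) t, aux8f d x ≤ (1-x)^(1/d-1) := by
      intro x hx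
      unfold aux8f
      have hxp : x^(1-1/d) ≤ 1 := Real.rpow_le_one hx.1 (hx.2.trans h1) he1.le
      nlinarith [Real.rpow_nonneg (show (0:ℝ) ≤ 1-x by have := hx.2; linarith) (1/d-1),
        Real.rpow_nonneg hx.1 (1-1/d)]
    have hint1 : IntervalIntegrable (aux8f d) volume 0 t :=
      aux8f_intervalIntegrable hd le_rfl h0 h1
    have h := intervalIntegral.integral_mono_on h0 hint1 (aux8g_intervalIntegrable hd 0 t) hmono
    have hval : (∫ x in (0:ℝ)..t, (1-x)^(1/d-1)) = (1 - (1-t)^(1/d))/(1/d) := by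
      have hcomp := intervalIntegral.integral_comp_sub_left (a := (0:ℝ)) (b := t)
        (fun u : ℝ => u ^ (1/d-1)) 1
      simp only [sub_zero] at hcomp
      rw [hcomp, integral_rpow (Or.inl he2), show (1/d-1+1 : ℝ) = 1/d by ring,
        Real.one_rpow]
    rw [hval] at h
    have hb : (1 - (1-t)^(1/d))/(1/d) ≤ d := by
      have hnn : 0 ≤ (1-t)^(1/d) := Real.rpow_nonneg (by linarith) _
      rw [div_le_iff₀ (by positivity)]
      have : d * (1/d) = 1 := by field_simp
      rw [this]
      linarith
    have hq : (1/4 : ℝ) ≤ t^(2-1/d) := by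
      have h2 : (1/2:ℝ)^(2-1/d) ≤ t^(2-1/d) :=
        Real.rpow_le_rpow (by norm_num) (by linarith) (by linarith)
      have h3 : (1/2:ℝ)^((2:ℕ):ℝ) ≤ (1/2:ℝ)^(2-1/d) :=
        Real.rpow_le_rpow_of_exponent_ge (by norm_num) (by norm_num)
          (by have hdd : (0:ℝ) < 1/d := by positivity
              push_cast
              linarith)
      rw [Real.rpow_natCast] at h3
      have h4 : ((1/2:ℝ))^(2:ℕ) = 1/4 := by norm_num
      rw [h4] at h3
      linarith
    nlinarith


section
variable {Ω : ℕ → Type} [∀ n, MeasureSpace (Ω n)]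
  {X : (n : ℕ) → ℕ → Ω n → ℝ} {Y : (n : ℕ) → ℕ → Ω n → ℝ}

lemma aux8_rate_pos (n j : ℕ) : (0:ℝ) < ((n - j + 1 : ℕ) : ℝ)^2 := by positivity

lemma aux8_EX (hXmeas : ∀ n i, Measurable (X n i))
    (hXlaw : ∀ n i, 1 ≤ i → i ≤ n →
      Measure.map (X n i) ℙ = expMeasure (((n - i + 1 : ℕ) : ℝ) ^ 2))
    (n j : ℕ) (h1 : 1 ≤ j) (h2 : j ≤ n) :
    Integrable (X n j) (ℙ : Measure (Ω n)) ∧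
    ∫ o, X n j o ∂(ℙ : Measure (Ω n)) = (((n - j + 1 : ℕ) : ℝ)^2)⁻¹ := by
  have hr := aux8_rate_pos n j
  have hmap := hXlaw n j h1 h2
  have hg : AEStronglyMeasurable (fun x : ℝ => x)
      (Measure.map (X n j) (ℙ : Measure (Ω n))) := measurable_id.aestronglyMeasurable
  constructor
  · have := (integrable_map_measure hg (hXmeas n j).aemeasurable)
    rw [hmap] at this
    exact this.mp (aux8_integrable_id _ hr)
  · have := integral_map (μ := (ℙ : Measure (Ω n))) (hXmeas n j).aemeasurable hg
    rw [hmap] at this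
    rw [← this, aux8_integral_id _ hr]

lemma aux8_EY (hXmeas : ∀ n i, Measurable (X n i))
    (hXlaw : ∀ n i, 1 ≤ i → i ≤ n →
      Measure.map (X n i) ℙ = expMeasure (((n - i + 1 : ℕ) : ℝ) ^ 2))
    (hY : ∀ n k o, Y n k o = ∑ i ∈ Finset.Icc 1 k, X n i o)
    (n i : ℕ) (h2 : i ≤ n) :
    ∫ o, Y n i o ∂(ℙ : Measure (Ω n))
      = ∑ j ∈ Finset.Icc 1 i, (((n - j + 1 : ℕ) : ℝ)^2)⁻¹ := by
  simp only [hY]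
  rw [MeasureTheory.integral_finset_sum]
  · exact Finset.sum_congr rfl fun j hj => (aux8_EX hXmeas hXlaw n j
      (Finset.mem_Icc.1 hj).1 ((Finset.mem_Icc.1 hj).2.trans h2)).2
  · exact fun j hj => (aux8_EX hXmeas hXlaw n j
      (Finset.mem_Icc.1 hj).1 ((Finset.mem_Icc.1 hj).2.trans h2)).1

end

/-- real-form of the summand -/
lemma aux8_cast_sum (n i : ℕ) (h : i ≤ n) :
    ∑ j ∈ Finset.Icc 1 i, (((n - j + 1 : ℕ) : ℝ)^2)⁻¹
      = ∑ j ∈ Finset.Icc 1 i, ((((n:ℝ) - j + 1))^2)⁻¹ := by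
  refine Finset.sum_congr rfl fun j hj => ?_
  have hj' := (Finset.mem_Icc.1 hj).2.trans h
  congr 2
  push_cast [Nat.cast_sub hj']
  ring

lemma aux8_sum_bounds (n : ℕ) : ∀ i : ℕ, 1 ≤ i → i + 1 ≤ n →
    (i:ℝ)/(((n:ℝ)-i+1) * (n+1)) ≤ ∑ j ∈ Finset.Icc 1 i, ((((n:ℝ) - j + 1))^2)⁻¹
    ∧ ∑ j ∈ Finset.Icc 1 i, ((((n:ℝ) - j + 1))^2)⁻¹ ≤ (i:ℝ)/(((n:ℝ)-i)*n) := by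
  intro i
  induction i with
  | zero => intro h; omega
  | succ m ih =>
    intro _ hn
    by_cases hm : 1 ≤ m
    · obtain ⟨ihl, ihu⟩ := ih hm (by omega)
      rw [Finset.sum_Icc_succ_top (by omega : 1 ≤ m + 1)]
      have hc : ((m+1 : ℕ):ℝ) = (m:ℝ)+1 := by push_cast; ring
      have ha2 : (2:ℝ) ≤ (n:ℝ) - m := by
        have h2 : ((m:ℕ) + 2 : ℕ) ≤ n := by omega
        have := (Nat.cast_le (α := ℝ)).2 h2
        push_cast at this; linarith
      set a : ℝ := (n:ℝ) - m with ha
      have hmn' : (m:ℝ) + a = (n:ℝ) := by simp [ha]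
      have hm0 : (1:ℝ) ≤ (m:ℝ) := by exact_mod_cast hm
      have ha0 : a ≠ 0 := by nlinarith
      have ha1 : a + 1 ≠ 0 := by nlinarith
      have ham : a - 1 ≠ 0 := by nlinarith
      have hnn : (0:ℝ) < (n:ℝ) := by nlinarith
      have hn1 : ((n:ℝ)+1) ≠ 0 := by nlinarith
      have hstep : ((((n:ℝ) - (m+1:ℕ) + 1))^2)⁻¹ = (a^2)⁻¹ := by
        rw [hc, ha]; ring
      have he1 : (n:ℝ) - ((m:ℝ)+1) + 1 = a := by rw [ha]; ring
      have he2 : (n:ℝ) - ((m:ℝ)+1) = a - 1 := by rw [ha]; ring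
      rw [hstep, hc, he1, he2]
      constructor
      · have key : ((m:ℝ)+1)/(a * ((n:ℝ)+1))
            = (m:ℝ)/((a+1) * ((n:ℝ)+1)) + (a*(a+1))⁻¹ := by
          rw [← hmn']
          field_simp
          ring
        have h2 : (a*(a+1))⁻¹ ≤ (a^2)⁻¹ := inv_anti₀ (by nlinarith) (by nlinarith)
        rw [key]
        exact add_le_add ihl h2
      · have key : ((m:ℝ)+1)/((a - 1) * (n:ℝ))
            = (m:ℝ)/(a * (n:ℝ)) + ((a-1)*a)⁻¹ := by
          rw [← hmn']
          field_simp
          ring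
        have h2 : (a^2)⁻¹ ≤ ((a-1)*a)⁻¹ := inv_anti₀ (by nlinarith) (by nlinarith)
        rw [key]
        exact add_le_add ihu h2
    · have hm0 : m = 0 := by omega
      subst hm0
      have hn2 : 2 ≤ n := by omega
      have hn1 : (2:ℝ) ≤ (n:ℝ) := by exact_mod_cast hn2
      simp only [zero_add, Nat.cast_one, Finset.Icc_self, Finset.sum_singleton]
      have e1 : (n:ℝ) - 1 + 1 = (n:ℝ) := by ring
      rw [e1]
      constructor
      · rw [one_div]
        exact inv_anti₀ (by positivity) (by nlinarith)
      · rw [one_div]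
        exact inv_anti₀ (by nlinarith) (by nlinarith)

/-- Lemma: bounds on `Ξ_k`.
Let `d > 1` and `Ξ_k = ∑_{i=k}^{m_n} (E Y_i)^{1/d−1}` with `m_n = n − κ_n`.  There is
`C > 0` (depending only on `d`) with `Ξ_k ≤ C (n − k + 1)^{2−1/d}` for `1 ≤ k ≤ m_n`;
and for `2 ≤ k ≤ m_n`,
`n^{2−1/d} I_{(κ_n−1)/n}((n−k)/n) ≤ Ξ_k ≤ n^{2−1/d} I_0((n−k+2)/n)`,
where `I_a(t) = ∫_a^t x^{1−1/d}(1−x)^{1/d−1} dx`. -/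
theorem stmt_8
    (d : ℝ) (hd : 1 < d)
    (Ω : ℕ → Type) [∀ n, MeasureSpace (Ω n)]
    (hprob : ∀ n, IsProbabilityMeasure (ℙ : Measure (Ω n)))
    (X : (n : ℕ) → ℕ → Ω n → ℝ)
    (hXmeas : ∀ n i, Measurable (X n i))
    (hXindep : ∀ n, iIndepFun (fun i : Fin n => X n (i + 1)) ℙ)
    (hXlaw : ∀ n i, 1 ≤ i → i ≤ n →
      Measure.map (X n i) ℙ = expMeasure (((n - i + 1 : ℕ) : ℝ) ^ 2))
    (Y : (n : ℕ) → ℕ → Ω n → ℝ)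
    (hY : ∀ n k o, Y n k o = ∑ i ∈ Finset.Icc 1 k, X n i o)
    (Ξ : (n : ℕ) → ℕ → ℕ → ℝ)
    (hΞ : ∀ n κ k, Ξ n κ k = ∑ i ∈ Finset.Icc k (n - κ),
      (∫ o, Y n i o ∂(ℙ : Measure (Ω n))) ^ (1/d - 1)) :
    (∃ C : ℝ, 0 < C ∧ ∀ n κ k : ℕ, 1 ≤ κ → κ ≤ n - 1 → 1 ≤ k → k ≤ n - κ →
      Ξ n κ k ≤ C * ((n - k + 1 : ℕ) : ℝ) ^ (2 - 1/d))
    ∧ (∀ n κ k : ℕ, 1 ≤ κ → κ ≤ n - 1 → 2 ≤ k → k ≤ n - κ →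
      (n : ℝ) ^ (2 - 1/d)
          * (∫ x in (((κ : ℝ) - 1) / n)..(((n - k : ℕ) : ℝ) / n),
              x ^ (1 - 1/d) * (1 - x) ^ (1/d - 1))
        ≤ Ξ n κ k
      ∧ Ξ n κ k ≤ (n : ℝ) ^ (2 - 1/d)
          * (∫ x in (0:ℝ)..(((n - k + 2 : ℕ) : ℝ) / n),
              x ^ (1 - 1/d) * (1 - x) ^ (1/d - 1))) := by
  have hP0 : 0 < 2 - 1/d := by have := aux8_exp1 hd; linarith
  have hcore : ∀ n κ k : ℕ, 1 ≤ κ → κ ≤ n - 1 → 2 ≤ k → k ≤ n - κ →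
      (n:ℝ)^(2-1/d) * (∫ x in (((κ:ℝ)-1)/n)..(((n:ℝ)-(k:ℝ))/n), aux8f d x) ≤ Ξ n κ k
      ∧ Ξ n κ k ≤ (n:ℝ)^(2-1/d) * (∫ x in (0:ℝ)..(((n:ℝ)-(k:ℝ)+2)/n), aux8f d x) := by
    intro n κ k hκ1 hκn1 hk2 hkm
    have hκn : κ + 1 ≤ n := by omega
    have hterm : ∀ i, k ≤ i → i ≤ n - κ →
        ((n:ℝ)^(2-1/d) * (∫ x in (((n:ℝ)-i-1)/n)..(((n:ℝ)-i)/n), aux8f d x)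
            ≤ (∫ o, Y n i o ∂(ℙ : Measure (Ω n))) ^ (1/d - 1))
        ∧ ((∫ o, Y n i o ∂(ℙ : Measure (Ω n))) ^ (1/d - 1)
            ≤ (n:ℝ)^(2-1/d) * (∫ x in (((n:ℝ)-i+1)/n)..(((n:ℝ)-i+2)/n), aux8f d x)) := by
      intro i hki him
      have hi1 : 1 ≤ i := by omega
      have hi2 : 2 ≤ i := by omega
      have hin : i + 1 ≤ n := by omega
      have hEeq := (aux8_EY hXmeas hXlaw hY n i (by omega)).trans
        (aux8_cast_sum n i (by omega))
      obtain ⟨hlo, hhi⟩ := aux8_sum_bounds n i hi1 hin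
      have hir : (1:ℝ) ≤ (i:ℝ) := by exact_mod_cast hi1
      have hinr : (i:ℝ) + 1 ≤ (n:ℝ) := by exact_mod_cast hin
      have hlopos : 0 < (i:ℝ)/(((n:ℝ)-i+1) * ((n:ℝ)+1)) := by
        apply div_pos (by linarith)
        apply mul_pos (by linarith) (by linarith)
      have hEpos : 0 < ∫ o, Y n i o ∂(ℙ : Measure (Ω n)) := by
        rw [hEeq]; exact hlopos.trans_le hlo
      constructor
      · exact aux8_term_lower hd hi1 hin hEpos (hEeq ▸ hhi)
      · exact aux8_term_upper hd hi2 hin (hEeq ▸ hlo)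
    constructor
    · rw [hΞ n κ k]
      exact aux8_lower_sum hd n κ k (n - κ) hκ1 hκn (by omega) hkm rfl _
        (fun i h1 h2 => (hterm i h1 h2).1)
    · rw [hΞ n κ k]
      exact aux8_upper_sum hd n κ k (n - κ) hκ1 hκn hk2 hkm rfl _
        (fun i h1 h2 => (hterm i h1 h2).2)
  have hpart2 : ∀ n κ k : ℕ, 1 ≤ κ → κ ≤ n - 1 → 2 ≤ k → k ≤ n - κ →
      (n : ℝ) ^ (2 - 1/d)
          * (∫ x in (((κ : ℝ) - 1) / n)..(((n - k : ℕ) : ℝ) / n),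
              x ^ (1 - 1/d) * (1 - x) ^ (1/d - 1))
        ≤ Ξ n κ k
      ∧ Ξ n κ k ≤ (n : ℝ) ^ (2 - 1/d)
          * (∫ x in (0:ℝ)..(((n - k + 2 : ℕ) : ℝ) / n),
              x ^ (1 - 1/d) * (1 - x) ^ (1/d - 1)) := by
    intro n κ k hκ1 hκn1 hk2 hkm
    obtain ⟨h1, h2⟩ := hcore n κ k hκ1 hκn1 hk2 hkm
    have hkn : k ≤ n := by omega
    have hc1 : ((n - k : ℕ):ℝ) = (n:ℝ) - k := by
      rw [Nat.cast_sub hkn]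
    have hc2 : ((n - k + 2 : ℕ):ℝ) = (n:ℝ) - k + 2 := by
      push_cast [Nat.cast_sub hkn]; ring
    simp only [aux8f] at h1 h2
    rw [hc1, hc2]
    exact ⟨h1, h2⟩
  have hclaim2 : ∀ n κ k : ℕ, 1 ≤ κ → κ ≤ n - 1 → 2 ≤ k → k ≤ n - κ →
      Ξ n κ k ≤ 16*d*((n - k + 1 : ℕ):ℝ)^(2-1/d) := by
    intro n κ k hκ1 hκn1 hk2 hkm
    have h2 := (hcore n κ k hκ1 hκn1 hk2 hkm).2
    have hn2 : 2 ≤ n := by omega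
    have hn0 : (0:ℝ) < n := by
      have : (0:ℕ) < n := by omega
      exact_mod_cast this
    have hkr : (2:ℝ) ≤ (k:ℝ) := by exact_mod_cast hk2
    have hknr : (k:ℝ) ≤ (n:ℝ) := by exact_mod_cast (show k ≤ n by omega)
    set t : ℝ := ((n:ℝ)-(k:ℝ)+2)/n with ht
    have ht0 : 0 ≤ t := by
      apply div_nonneg _ hn0.le
      linarith
    have ht1 : t ≤ 1 := by
      rw [ht, div_le_one hn0]; linarith
    have hint := aux8_int_le hd ht0 ht1
    have hB0 : (0:ℝ) ≤ ((n - k + 1 : ℕ):ℝ) := by positivity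
    have hB20 : (0:ℝ) ≤ ((n - k + 2 : ℕ):ℝ) := by positivity
    have hmulP : (n:ℝ)^(2-1/d) * t^(2-1/d) = ((n - k + 2 : ℕ):ℝ)^(2-1/d) := by
      rw [← Real.mul_rpow hn0.le ht0]
      congr 1
      rw [ht]
      push_cast [Nat.cast_sub (show k ≤ n by omega)]
      field_simp
    have hbase : ((n - k + 2 : ℕ):ℝ) ≤ 2*((n - k + 1 : ℕ):ℝ) := by
      have : (n - k + 2 : ℕ) ≤ 2*(n - k + 1) := by omega
      exact_mod_cast this
    have hstep1 : ((n - k + 2 : ℕ):ℝ)^(2-1/d) ≤ (2*((n - k + 1 : ℕ):ℝ))^(2-1/d) :=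
      Real.rpow_le_rpow hB20 hbase hP0.le
    have hstep2 : (2*((n - k + 1 : ℕ):ℝ))^(2-1/d)
        = (2:ℝ)^(2-1/d) * ((n - k + 1 : ℕ):ℝ)^(2-1/d) :=
      Real.mul_rpow (by norm_num) hB0
    have hstep3 : (2:ℝ)^(2-1/d) ≤ 4 := by
      have h4 : (2:ℝ)^(2-1/d) ≤ (2:ℝ)^((2:ℕ):ℝ) :=
        Real.rpow_le_rpow_of_exponent_le (by norm_num)
          (by push_cast
              linarith [le_of_lt (show (0:ℝ) < 1/d by positivity)])
      rw [Real.rpow_natCast, show ((2:ℝ))^(2:ℕ) = 4 from by norm_num] at h4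
      exact h4
    have hBP : (0:ℝ) ≤ ((n - k + 1 : ℕ):ℝ)^(2-1/d) := Real.rpow_nonneg hB0 _
    calc Ξ n κ k ≤ (n:ℝ)^(2-1/d) * (∫ x in (0:ℝ)..t, aux8f d x) := h2
      _ ≤ (n:ℝ)^(2-1/d) * (4*d*t^(2-1/d)) :=
          mul_le_mul_of_nonneg_left hint (Real.rpow_nonneg hn0.le _)
      _ = 4*d*((n:ℝ)^(2-1/d) * t^(2-1/d)) := by ring
      _ = 4*d*((n - k + 2 : ℕ):ℝ)^(2-1/d) := by rw [hmulP]
      _ ≤ 4*d*(4*((n - k + 1 : ℕ):ℝ)^(2-1/d)) := by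
          have hchain : ((n - k + 2 : ℕ):ℝ)^(2-1/d) ≤ 4*((n - k + 1 : ℕ):ℝ)^(2-1/d) := by
            nlinarith [hstep1, hstep2, hstep3, hBP,
              mul_nonneg (show (0:ℝ) ≤ 4 - (2:ℝ)^(2-1/d) by linarith) hBP]
          apply mul_le_mul_of_nonneg_left hchain (by linarith)
      _ = 16*d*((n - k + 1 : ℕ):ℝ)^(2-1/d) := by ring
  refine ⟨⟨16*d+1, by linarith, ?_⟩, hpart2⟩
  intro n κ k hκ1 hκn1 hk1 hkm
  have hn2 : 2 ≤ n := by omega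
  have hn1r : (1:ℝ) ≤ (n:ℝ) := by exact_mod_cast (show 1 ≤ n by omega)
  have hn0 : (0:ℝ) < n := by linarith
  by_cases hk2 : 2 ≤ k
  · have h := hclaim2 n κ k hκ1 hκn1 hk2 hkm
    have hBP : (0:ℝ) ≤ ((n - k + 1 : ℕ):ℝ)^(2-1/d) :=
      Real.rpow_nonneg (by positivity) _
    nlinarith
  · have hk : k = 1 := by omega
    subst hk
    have hEeq := (aux8_EY hXmeas hXlaw hY n 1 (by omega)).trans
      (aux8_cast_sum n 1 (by omega))
    have hE1 : ∫ o, Y n 1 o ∂(ℙ : Measure (Ω n)) = (((n:ℝ))^2)⁻¹ := by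
      rw [hEeq]
      rw [Finset.Icc_self, Finset.sum_singleton]
      norm_num
    have hg1 : (∫ o, Y n 1 o ∂(ℙ : Measure (Ω n))) ^ (1/d - 1) ≤ (n:ℝ)^(2-1/d) := by
      rw [hE1]
      have e1 : (((n:ℝ))^2)⁻¹ = (n:ℝ)^((-2:ℝ)) := by
        rw [show ((-2:ℝ)) = -((2:ℕ):ℝ) by norm_num, Real.rpow_neg hn0.le, Real.rpow_natCast]
      rw [e1, ← Real.rpow_mul hn0.le]
      apply Real.rpow_le_rpow_of_exponent_le hn1r
      have h1d : 0 < 1/d := by positivity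
      nlinarith
    have hnP : (0:ℝ) ≤ (n:ℝ)^(2-1/d) := Real.rpow_nonneg hn0.le _
    have hgoalcast : ((n - 1 + 1 : ℕ):ℝ) = (n:ℝ) := by
      congr 1; omega
    rw [hgoalcast]
    by_cases hm2 : 2 ≤ n - κ
    · have hins : insert 1 (Finset.Icc 2 (n-κ)) = Finset.Icc 1 (n-κ) := by
        ext x; simp only [Finset.mem_insert, Finset.mem_Icc]; omega
      have hsplit : Ξ n κ 1 = (∫ o, Y n 1 o ∂(ℙ : Measure (Ω n)))^(1/d-1) + Ξ n κ 2 := by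
        rw [hΞ n κ 1, ← hins, Finset.sum_insert (by norm_num [Finset.mem_Icc]), ← hΞ n κ 2]
      have h2 := hclaim2 n κ 2 hκ1 hκn1 le_rfl hm2
      have hcast : ((n - 2 + 1 : ℕ):ℝ) ≤ (n:ℝ) := by
        exact_mod_cast (show n - 2 + 1 ≤ n by omega)
      have hmono2 : ((n - 2 + 1 : ℕ):ℝ)^(2-1/d) ≤ (n:ℝ)^(2-1/d) :=
        Real.rpow_le_rpow (by positivity) hcast hP0.le
      rw [hsplit]
      nlinarith
    · have hm1 : n - κ = 1 := by omega
      have hone : Ξ n κ 1 = (∫ o, Y n 1 o ∂(ℙ : Measure (Ω n)))^(1/d-1) := by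
        rw [hΞ n κ 1, hm1, Finset.Icc_self, Finset.sum_singleton]
      rw [hone]
      nlinarith
end

section
/- Let d > 1 and r ∈ ℕ. There is a constant C > 0, depending only on d and r, such that for all n, all positive integers κ_n ≤ n − 1, and all 1 ≤ k ≤ m_n: E[V_{n,k}^r] ≤ C (n − k + 1)^{−2r/d}. -/
open MeasureTheory ProbabilityTheory Filter Real
open scoped ProbabilityTheory ENNReal

open Set
open scoped NNReal

lemma exp_density_eq (r : ℝ) (hr : 0 < r) (g : ℝ → ℝ) :
    (Integrable g (expMeasure r) ↔
      Integrable (fun x => exponentialPDFReal r x * g x) volume) ∧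
    ∫ x, g x ∂(expMeasure r) = ∫ x, exponentialPDFReal r x * g x := by
  have hmeas : Measurable (fun x => (exponentialPDFReal r x).toNNReal) :=
    (measurable_exponentialPDFReal r).real_toNNReal
  have hdens : expMeasure r
      = volume.withDensity (fun x => ((exponentialPDFReal r x).toNNReal : ℝ≥0∞)) := by
    simp only [expMeasure, gammaMeasure, gammaPDF, exponentialPDFReal]
    rfl
  have hsmul : ∀ x, ((exponentialPDFReal r x).toNNReal : ℝ) • g x
      = exponentialPDFReal r x * g x := by
    intro x
    rw [Real.coe_toNNReal _ (exponentialPDFReal_nonneg hr x), smul_eq_mul]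
  constructor
  · rw [hdens, integrable_withDensity_iff_integrable_smul hmeas]
    exact integrable_congr (Eventually.of_forall fun x => hsmul x)
  · rw [hdens, integral_withDensity_eq_integral_smul hmeas]
    exact integral_congr_ae (Eventually.of_forall fun x => hsmul x)

lemma exp_moment (r : ℝ) (hr : 0 < r) (j : ℕ) :
    Integrable (fun x => x ^ j) (expMeasure r) ∧
    ∫ x, x ^ j ∂(expMeasure r) = (Nat.factorial j : ℝ) / r ^ j := by
  obtain ⟨hI, hE⟩ := exp_density_eq r hr (fun x => x ^ j)
  have hfun : ∀ x, exponentialPDFReal r x * x ^ j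
      = Set.indicator (Ici 0) (fun x => r * rexp (-(r * x)) * x ^ j) x := by
    intro x
    rw [exponentialPDFReal, gammaPDFReal]
    simp only [rpow_one, Real.Gamma_one, div_one, sub_self, rpow_zero, mul_one,
      Set.indicator_apply, mem_Ici]
    split_ifs <;> simp
  have hIoi : IntegrableOn (fun x => r * rexp (-(r * x)) * x ^ j) (Ioi 0) volume := by
    have h := integrableOn_rpow_mul_exp_neg_mul_rpow (s := (j : ℝ)) (p := 1) (b := r)
      (lt_of_lt_of_le neg_one_lt_zero (Nat.cast_nonneg j)) one_pos hr
    refine MeasureTheory.IntegrableOn.congr_fun (h.const_mul r) (fun x hx => ?_) measurableSet_Ioi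
    simp only [rpow_one, rpow_natCast]; ring
  have hInd : IntegrableOn (fun x => r * rexp (-(r * x)) * x ^ j) (Ici 0) volume := by
    rwa [integrableOn_Ici_iff_integrableOn_Ioi]
  constructor
  · rw [hI]
    refine (integrable_indicator_iff measurableSet_Ici).2 hInd |>.congr ?_
    exact Eventually.of_forall fun x => (hfun x).symm
  · rw [hE]
    rw [integral_congr_ae (Eventually.of_forall hfun), integral_indicator measurableSet_Ici,
      integral_Ici_eq_integral_Ioi]
    have h2 : ∀ x ∈ Ioi (0:ℝ), r * rexp (-(r * x)) * x ^ j
        = r * (x ^ ((j + 1 : ℝ) - 1) * rexp (-(r * x))) := by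
      intro x hx
      rw [add_sub_cancel_right, rpow_natCast]; ring
    rw [setIntegral_congr_fun measurableSet_Ioi h2, integral_const_mul,
      integral_rpow_mul_exp_neg_mul_Ioi (by positivity) hr]
    rw [Real.Gamma_nat_eq_factorial,
      show ((j : ℝ) + 1) = ((j + 1 : ℕ) : ℝ) from by push_cast; ring, rpow_natCast]
    rw [div_pow, one_pow, pow_succ]
    field_simp

noncomputable def expC (p : ℕ) : ℝ := ∑ j ∈ Finset.range (p+1), (p.choose j * Nat.factorial j : ℕ)

lemma expC_pos (p : ℕ) : 0 < expC p := by
  rw [expC]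
  push_cast
  refine Finset.sum_pos (fun j hj => ?_) ⟨0, by simp⟩
  have h1 : 0 < p.choose j := Nat.choose_pos (Nat.lt_succ_iff.mp (Finset.mem_range.mp hj))
  positivity

lemma exp_central_moment (r : ℝ) (hr : 0 < r) (p : ℕ) :
    Integrable (fun x => (x - 1/r) ^ p) (expMeasure r) ∧
    ∫ x, (x - 1/r) ^ p ∂(expMeasure r) ≤ expC p / r ^ p := by
  have hterm : ∀ j, Integrable
      (fun x => x ^ j * ((-(1/r)) ^ (p - j) * (p.choose j : ℝ))) (expMeasure r) :=
    fun j => ((exp_moment r hr j).1.mul_const _)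
  have hexp : ∀ x : ℝ, (x - 1/r) ^ p
      = ∑ j ∈ Finset.range (p+1), x ^ j * ((-(1/r)) ^ (p - j) * (p.choose j : ℝ)) := by
    intro x
    rw [sub_eq_add_neg, add_pow]
    exact Finset.sum_congr rfl fun j _ => by ring
  have hInt : Integrable (fun x => (x - 1/r) ^ p) (expMeasure r) := by
    refine (integrable_finset_sum (Finset.range (p+1)) (fun j _ => hterm j)).congr ?_
    exact Eventually.of_forall fun x => (hexp x).symm
  refine ⟨hInt, ?_⟩
  have hstep : ∫ x, (x - 1/r) ^ p ∂(expMeasure r)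
      = ∑ j ∈ Finset.range (p+1),
        ((Nat.factorial j : ℝ) / r ^ j) * ((-(1/r)) ^ (p - j) * (p.choose j : ℝ)) := by
    rw [integral_congr_ae (Eventually.of_forall hexp),
      integral_finset_sum (Finset.range (p+1)) (fun j _ => hterm j)]
    refine Finset.sum_congr rfl fun j _ => ?_
    rw [integral_mul_const, (exp_moment r hr j).2]
  rw [hstep, expC, Finset.sum_div]
  refine Finset.sum_le_sum fun j hj => ?_
  have hj' : j ≤ p := Nat.lt_succ_iff.mp (Finset.mem_range.mp hj)
  have habs : ((-(1/r)) ^ (p - j)) ≤ (1/r) ^ (p - j) := by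
    calc ((-(1/r)) ^ (p - j)) ≤ |(-(1/r)) ^ (p - j)| := le_abs_self _
    _ = (1/r) ^ (p - j) := by
        rw [abs_pow, abs_neg, abs_of_pos (by positivity)]
  calc ((Nat.factorial j : ℝ) / r ^ j) * ((-(1/r)) ^ (p - j) * (p.choose j : ℝ))
      ≤ ((Nat.factorial j : ℝ) / r ^ j) * ((1/r) ^ (p - j) * (p.choose j : ℝ)) := by
        refine mul_le_mul_of_nonneg_left
          (mul_le_mul_of_nonneg_right habs (by positivity)) (by positivity)
    _ = ((p.choose j * Nat.factorial j : ℕ) : ℝ) * (1 / (r ^ j * r ^ (p - j))) := by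
        push_cast
        rw [div_pow, one_pow]
        field_simp
    _ = ((p.choose j * Nat.factorial j : ℕ) : ℝ) / r ^ p := by
        rw [← pow_add, Nat.add_sub_cancel' hj']
        ring

lemma law_transfer {Ω : Type} [MeasureSpace Ω]
    (X : Ω → ℝ) (hX : Measurable X) (r : ℝ) (hr : 0 < r)
    (hlaw : Measure.map X ℙ = expMeasure r) :
    Integrable X ℙ ∧ (∫ o, X o ∂ℙ = 1 / r) ∧
    ∀ p : ℕ, ∫ o, (X o - 1/r) ^ p ∂ℙ ≤ expC p / r ^ p := by
  have hmap : ∀ (f : ℝ → ℝ), Continuous f →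
      (∫ o, f (X o) ∂ℙ = ∫ x, f x ∂(expMeasure r)) ∧
      (Integrable f (expMeasure r) → Integrable (fun o => f (X o)) ℙ) := by
    intro f hf
    constructor
    · rw [← hlaw, integral_map hX.aemeasurable
        hf.measurable.stronglyMeasurable.aestronglyMeasurable]
    · intro h
      rw [← hlaw] at h
      exact ((integrable_map_measure
        hf.measurable.stronglyMeasurable.aestronglyMeasurable hX.aemeasurable).mp h)
  have hid := hmap (fun x => x) continuous_id
  have hmom1 := exp_moment r hr 1
  refine ⟨?_, ?_, ?_⟩
  · refine hid.2 ?_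
    have := hmom1.1
    simpa [pow_one] using this
  · rw [hid.1]
    have := hmom1.2
    simpa [pow_one, Nat.factorial] using this
  · intro p
    have hp := hmap (fun x => (x - 1/r) ^ p) (by continuity)
    rw [hp.1]
    exact (exp_central_moment r hr p).2

lemma sum_rpow_neg_le (β : ℝ) (hβ0 : 0 < β) (hβ1 : β < 1) (m : ℕ) (hm : 1 ≤ m) :
    ∑ i ∈ Finset.Icc 1 m, ((i : ℝ)) ^ (-β) ≤ (1 + 1/(1-β)) * (m : ℝ) ^ (1-β) := by
  have hsplit : Finset.Icc 1 m = insert 1 ((Finset.Ico 1 m).image (· + 1)) := by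
    ext x
    simp only [Finset.mem_Icc, Finset.mem_insert, Finset.mem_image, Finset.mem_Ico]
    constructor
    · rintro ⟨h1, h2⟩
      rcases Nat.eq_or_lt_of_le h1 with h | h
      · exact Or.inl h.symm
      · exact Or.inr ⟨x - 1, ⟨by omega, by omega⟩, by omega⟩
    · rintro (rfl | ⟨a, ⟨ha1, ha2⟩, rfl⟩) <;> omega
  have hnotmem : (1 : ℕ) ∉ (Finset.Ico 1 m).image (· + 1) := by
    simp only [Finset.mem_image, Finset.mem_Ico]
    omega
  have hanti : AntitoneOn (fun x : ℝ => x ^ (-β)) (Set.Icc (1:ℝ) m) := by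
    intro x hx y hy hxy
    exact rpow_le_rpow_of_nonpos (lt_of_lt_of_le one_pos hx.1) hxy (neg_nonpos.mpr hβ0.le)
  have hanti' : AntitoneOn (fun x : ℝ => x ^ (-β)) (Set.Icc ((1:ℕ):ℝ) ((m:ℕ):ℝ)) := by
    simpa using hanti
  have hint := AntitoneOn.sum_le_integral_Ico hm hanti'
  have hval : ∫ x in (1:ℕ)..(m:ℕ), (x:ℝ) ^ (-β)
      = ((m:ℝ) ^ (1-β) - 1) / (1-β) := by
    rw [integral_rpow (Or.inl (by linarith))]
    norm_num
    rw [show -β + 1 = 1 - β by ring]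
  have h1m : (1:ℝ) ≤ (m:ℝ) ^ (1-β) :=
    Real.one_le_rpow (by exact_mod_cast hm) (by linarith)
  rw [hsplit, Finset.sum_insert hnotmem,
    Finset.sum_image (by intro a _ b _ h; simp only at h; omega)]
  have : ∑ x ∈ Finset.Ico 1 m, ((x + 1 : ℕ) : ℝ) ^ (-β) ≤ ((m:ℝ) ^ (1-β) - 1) / (1-β) := by
    rw [← hval]
    exact_mod_cast hint
  have h1 : ((1:ℕ):ℝ) ^ (-β) = 1 := by simp
  rw [h1]
  have hβ' : 0 < 1 - β := by linarith
  calc 1 + ∑ x ∈ Finset.Ico 1 m, ((x + 1 : ℕ) : ℝ) ^ (-β)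
      ≤ 1 + ((m:ℝ) ^ (1-β) - 1) / (1-β) := by linarith
    _ ≤ (m:ℝ) ^ (1-β) + ((m:ℝ) ^ (1-β)) / (1-β) := by
        have : ((m:ℝ) ^ (1-β) - 1) / (1-β) ≤ ((m:ℝ) ^ (1-β)) / (1-β) :=
          (div_le_div_iff_of_pos_right hβ').mpr (by linarith)
        linarith
    _ = (1 + 1/(1-β)) * (m : ℝ) ^ (1-β) := by field_simp

lemma sum_inv_sq_ge (n : ℕ) : ∀ i : ℕ, 1 ≤ i → i ≤ n →
    (i:ℝ) / (((n - i + 1 : ℕ):ℝ) * ((n:ℝ)+1)) ≤ ∑ j ∈ Finset.Icc 1 i, (1:ℝ) / ((n - j + 1 : ℕ):ℝ)^2 := by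
  intro i
  induction i with
  | zero => intro h; omega
  | succ i ih =>
    intro _ hin
    rcases Nat.eq_zero_or_pos i with hi0 | hi1
    · subst hi0
      simp only [Finset.Icc_self, Finset.sum_singleton]
      have hn1 : 1 ≤ n := hin
      have : (n - 1 + 1 : ℕ) = n := by omega
      rw [this]
      have hn : (0:ℝ) < n := by exact_mod_cast hn1
      rw [div_le_div_iff₀ (by positivity) (by positivity)]
      push_cast
      nlinarith
    · have hin' : i ≤ n := by omega
      have hIH := ih hi1 hin'
      rw [Finset.sum_Icc_succ_top (by omega : 1 ≤ i + 1)]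
      have ha : (n - (i+1) + 1 : ℕ) = n - i := by omega
      rw [ha]
      set a : ℝ := ((n - i : ℕ) : ℝ) with hadef
      have ha1 : (1:ℝ) ≤ a := by
        rw [hadef]; exact_mod_cast (by omega : 1 ≤ n - i)
      have hcast : ((n - i + 1 : ℕ) : ℝ) = a + 1 := by
        rw [hadef]; push_cast [Nat.cast_sub hin']; ring
      have hNcast : (n:ℝ) + 1 = a + i + 1 := by
        rw [hadef]; push_cast [Nat.cast_sub hin']; ring
      rw [hcast] at hIH
      have ha0 : (0:ℝ) < a := by linarith
      have key : ((i:ℝ)+1) / (a * ((n:ℝ)+1)) - (i:ℝ) / ((a+1) * ((n:ℝ)+1))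
          = 1 / (a * (a+1)) := by
        rw [hNcast]
        field_simp
        ring
      have hsq : 1 / (a * (a+1)) ≤ 1 / a^2 := by
        apply one_div_le_one_div_of_le (by positivity)
        nlinarith
      push_cast at hIH ⊢
      linarith

lemma real_rpow_add_le {x y p : ℝ} (hx : 0 ≤ x) (hy : 0 ≤ y) (hp0 : 0 ≤ p) (hp1 : p ≤ 1) :
    (x + y) ^ p ≤ x ^ p + y ^ p := by
  have h := NNReal.rpow_add_le_add_rpow (x.toNNReal) (y.toNNReal) hp0 hp1
  have hxy : (0:ℝ) ≤ x + y := by linarith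
  have h1 : ((x.toNNReal + y.toNNReal) ^ p : ℝ≥0) = ((x + y) ^ p : ℝ) := by
    rw [← Real.toNNReal_add hx hy, NNReal.coe_rpow, Real.coe_toNNReal _ hxy]
  have h2 : ((x.toNNReal ^ p + y.toNNReal ^ p : ℝ≥0) : ℝ) = x ^ p + y ^ p := by
    push_cast [NNReal.coe_rpow, Real.coe_toNNReal _ hx, Real.coe_toNNReal _ hy]
    ring
  calc ((x + y) ^ p : ℝ) = ((x.toNNReal + y.toNNReal) ^ p : ℝ≥0) := h1.symm
    _ ≤ ((x.toNNReal ^ p + y.toNNReal ^ p : ℝ≥0) : ℝ) := by exact_mod_cast h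
    _ = x ^ p + y ^ p := h2

lemma sum_ipow_le (β : ℝ) (hβ0 : 0 < β) (hβ1 : β < 1) (n k m : ℕ)
    (hk : 1 ≤ k) (hkm : k ≤ m) (hmn : m ≤ n) :
    ∑ i ∈ Finset.Icc k m, ((i:ℝ)) ^ (-β)
      ≤ 2 * (1 + 1/(1-β)) * ((n - k + 1 : ℕ):ℝ) ^ (1-β) := by
  have hNpos : (0:ℝ) < ((n - k + 1 : ℕ):ℝ) := by positivity
  have hq : (0:ℝ) < 1/(1-β) := by
    rw [one_div]; exact inv_pos.mpr (by linarith)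
  have hC1 : (0:ℝ) < 1 + 1/(1-β) := by linarith
  rcases le_or_gt (2 * k) (n + 1) with hcase | hcase
  · -- small k : compare with full sum
    have hsub : ∑ i ∈ Finset.Icc k m, ((i:ℝ)) ^ (-β) ≤ ∑ i ∈ Finset.Icc 1 m, ((i:ℝ)) ^ (-β) := by
      refine Finset.sum_le_sum_of_subset_of_nonneg ?_ (fun i hi _ => ?_)
      · apply Finset.Icc_subset_Icc_left hk
      · have : 1 ≤ i := (Finset.mem_Icc.mp hi).1
        positivity
    have hfull := sum_rpow_neg_le β hβ0 hβ1 m (le_trans hk hkm)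
    have hm2 : (m:ℝ) ≤ 2 * ((n - k + 1 : ℕ):ℝ) := by
      have : m ≤ 2 * (n - k + 1) := by omega
      exact_mod_cast this
    have hmono : (m:ℝ) ^ (1-β) ≤ (2 * ((n - k + 1 : ℕ):ℝ)) ^ (1-β) :=
      Real.rpow_le_rpow (Nat.cast_nonneg m) hm2 (by linarith)
    have h2 : (2 * ((n - k + 1 : ℕ):ℝ)) ^ (1-β) ≤ 2 * ((n - k + 1 : ℕ):ℝ) ^ (1-β) := by
      rw [Real.mul_rpow (by norm_num) hNpos.le]
      have : (2:ℝ) ^ (1-β) ≤ 2 ^ (1:ℝ) :=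
        Real.rpow_le_rpow_of_exponent_le one_le_two (by linarith)
      rw [Real.rpow_one] at this
      nlinarith [Real.rpow_nonneg hNpos.le (1-β)]
    calc ∑ i ∈ Finset.Icc k m, ((i:ℝ)) ^ (-β)
        ≤ (1 + 1/(1-β)) * (m:ℝ) ^ (1-β) := le_trans hsub hfull
      _ ≤ (1 + 1/(1-β)) * (2 * ((n - k + 1 : ℕ):ℝ) ^ (1-β)) := by
          refine mul_le_mul_of_nonneg_left (le_trans hmono h2) hC1.le
      _ = 2 * (1 + 1/(1-β)) * ((n - k + 1 : ℕ):ℝ) ^ (1-β) := by ring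
  · -- large k : crude bound
    have hkpos : (0:ℝ) < (k:ℝ) := by exact_mod_cast hk
    have hterm : ∀ i ∈ Finset.Icc k m, ((i:ℝ)) ^ (-β) ≤ ((n - k + 1 : ℕ):ℝ) ^ (-β) := by
      intro i hi
      have hki : k ≤ i := (Finset.mem_Icc.mp hi).1
      have h1 : ((i:ℝ)) ^ (-β) ≤ ((k:ℝ)) ^ (-β) :=
        Real.rpow_le_rpow_of_nonpos hkpos (by exact_mod_cast hki) (by linarith)
      have h2 : ((k:ℝ)) ^ (-β) ≤ ((n - k + 1 : ℕ):ℝ) ^ (-β) := by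
        refine Real.rpow_le_rpow_of_nonpos hNpos ?_ (by linarith)
        have : n - k + 1 ≤ k := by omega
        exact_mod_cast this
      exact le_trans h1 h2
    have hcard := Finset.sum_le_card_nsmul (Finset.Icc k m) (fun i => ((i:ℝ)) ^ (-β)) _ hterm
    rw [nsmul_eq_mul] at hcard
    have hcard2 : ((Finset.Icc k m).card : ℝ) ≤ ((n - k + 1 : ℕ):ℝ) := by
      rw [Nat.card_Icc]
      have : m + 1 - k ≤ n - k + 1 := by omega
      exact_mod_cast this
    calc ∑ i ∈ Finset.Icc k m, ((i:ℝ)) ^ (-β)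
        ≤ ((Finset.Icc k m).card : ℝ) * ((n - k + 1 : ℕ):ℝ) ^ (-β) := hcard
      _ ≤ ((n - k + 1 : ℕ):ℝ) * ((n - k + 1 : ℕ):ℝ) ^ (-β) := by
          refine mul_le_mul_of_nonneg_right hcard2 (Real.rpow_nonneg hNpos.le _)
      _ = ((n - k + 1 : ℕ):ℝ) ^ (1-β) := by
          rw [show (1-β) = 1 + (-β) by ring, Real.rpow_add hNpos, Real.rpow_one]
      _ ≤ 2 * (1 + 1/(1-β)) * ((n - k + 1 : ℕ):ℝ) ^ (1-β) := by
          nlinarith [Real.rpow_pos_of_pos hNpos (1-β),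
            mul_pos hq (Real.rpow_pos_of_pos hNpos (1-β))]

lemma Xi_sum_bound (β : ℝ) (hβ0 : 0 < β) (hβ1 : β < 1) (n κ k : ℕ)
    (hκ1 : 1 ≤ κ) (hκn : κ ≤ n - 1) (hk : 1 ≤ k) (hkm : k ≤ n - κ) (E : ℕ → ℝ)
    (hE : ∀ i, k ≤ i → i ≤ n - κ →
      (i:ℝ)/(((n - i + 1:ℕ):ℝ) * ((n:ℝ)+1)) ≤ E i ∧ 0 < E i) :
    ∑ i ∈ Finset.Icc k (n-κ), (E i) ^ (-β)
      ≤ (2*(1+1/(1-β)) + 1) * ((n - k + 1:ℕ):ℝ) ^ (1+β) := by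
  have hn2 : 2 ≤ n := by omega
  set m := n - κ with hm
  set A : ℝ := ((n - k + 1:ℕ):ℝ) with hA
  have hApos : (0:ℝ) < A := by positivity
  have hterm : ∀ i ∈ Finset.Icc k m, (E i) ^ (-β) ≤ A ^ (2*β) * ((i:ℝ)) ^ (-β) + A ^ β := by
    intro i hi
    obtain ⟨hki, him⟩ := Finset.mem_Icc.mp hi
    have hi1 : 1 ≤ i := le_trans hk hki
    have hin : i ≤ n := by omega
    have hipos : (0:ℝ) < (i:ℝ) := by exact_mod_cast hi1
    set a : ℝ := ((n - i + 1:ℕ):ℝ) with ha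
    have hapos : (0:ℝ) < a := by positivity
    have hni : ((n - i:ℕ):ℝ) = (n:ℝ) - i := Nat.cast_sub hin
    have hacast : a = (n:ℝ) - i + 1 := by
      rw [ha]; push_cast [Nat.cast_sub hin]; ring
    obtain ⟨hlb, hEpos⟩ := hE i hki him
    have hlbpos : (0:ℝ) < (i:ℝ)/(a * ((n:ℝ)+1)) := by
      have : (0:ℝ) < (n:ℝ)+1 := by positivity
      positivity
    have h1 : (E i) ^ (-β) ≤ ((i:ℝ)/(a * ((n:ℝ)+1))) ^ (-β) :=
      Real.rpow_le_rpow_of_nonpos hlbpos hlb (by linarith)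
    have h2 : ((i:ℝ)/(a * ((n:ℝ)+1))) ^ (-β) = (a * ((n:ℝ)+1) / i) ^ β := by
      rw [Real.rpow_neg hlbpos.le, ← Real.inv_rpow hlbpos.le, inv_div]
    have h3 : a * ((n:ℝ)+1) / i = a^2/i + a := by
      have : (n:ℝ)+1 = a + i := by rw [hacast]; ring
      rw [this]
      field_simp
    have h4 : (a^2/i + a) ^ β ≤ (a^2/i) ^ β + a ^ β :=
      real_rpow_add_le (by positivity) hapos.le hβ0.le hβ1.le
    have haA : a ≤ A := by
      rw [ha, hA]
      have : n - i + 1 ≤ n - k + 1 := by omega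
      exact_mod_cast this
    have h5 : (a^2/i) ^ β ≤ A ^ (2*β) * ((i:ℝ)) ^ (-β) := by
      rw [Real.div_rpow (by positivity) hipos.le]
      have hnum : (a^2) ^ β ≤ A ^ (2*β) := by
        rw [show A ^ (2*β) = (A^2) ^ β by
          rw [← Real.rpow_natCast A 2, ← Real.rpow_mul hApos.le]; norm_num]
        exact Real.rpow_le_rpow (by positivity) (by nlinarith) hβ0.le
      rw [div_eq_mul_inv, ← Real.rpow_neg hipos.le]
      exact mul_le_mul_of_nonneg_right hnum (Real.rpow_nonneg hipos.le _)
    have h6 : a ^ β ≤ A ^ β := Real.rpow_le_rpow hapos.le haA hβ0.le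
    calc (E i) ^ (-β) ≤ ((i:ℝ)/(a * ((n:ℝ)+1))) ^ (-β) := h1
      _ = (a^2/i + a) ^ β := by rw [h2, h3]
      _ ≤ (a^2/i) ^ β + a ^ β := h4
      _ ≤ A ^ (2*β) * ((i:ℝ)) ^ (-β) + A ^ β := by
          refine add_le_add h5 h6
  have hsum := Finset.sum_le_sum hterm
  rw [Finset.sum_add_distrib, ← Finset.mul_sum, Finset.sum_const, nsmul_eq_mul] at hsum
  have hS1 := sum_ipow_le β hβ0 hβ1 n k m hk hkm (by omega)
  have hcard : ((Finset.Icc k m).card : ℝ) ≤ A := by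
    rw [Nat.card_Icc, hA]
    have : m + 1 - k ≤ n - k + 1 := by omega
    exact_mod_cast this
  have hApow : ∀ x y : ℝ, A ^ x * A ^ y = A ^ (x + y) := fun x y =>
    (Real.rpow_add hApos x y).symm
  have hq : (0:ℝ) < 1/(1-β) := by
    rw [one_div]; exact inv_pos.mpr (by linarith)
  calc ∑ i ∈ Finset.Icc k m, (E i) ^ (-β)
      ≤ A ^ (2*β) * ∑ i ∈ Finset.Icc k m, ((i:ℝ)) ^ (-β)
          + ((Finset.Icc k m).card : ℝ) * A ^ β := hsum
    _ ≤ A ^ (2*β) * (2*(1+1/(1-β)) * A ^ (1-β)) + A * A ^ β := by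
        refine add_le_add
          (mul_le_mul_of_nonneg_left hS1 (Real.rpow_nonneg hApos.le _))
          (mul_le_mul_of_nonneg_right hcard (Real.rpow_nonneg hApos.le _))
    _ = 2*(1+1/(1-β)) * A ^ (1+β) + A ^ (1+β) := by
        rw [mul_comm (A ^ (2*β)), mul_assoc, hApow,
          show (1-β) + 2*β = 1 + β by ring]
        congr 1
        rw [show A * A ^ β = A ^ (1:ℝ) * A ^ β by rw [Real.rpow_one], hApow]
    _ = (2*(1+1/(1-β)) + 1) * A ^ (1+β) := by ring


/-- Lemma: moments of `V_{n,k}`.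
Let `d > 1`, `r ∈ ℕ`, `Ξ_k = ∑_{i=k}^{m_n} (E Y_i)^{1/d−1}` and
`V_{n,k} = (Ξ_k²/d²)(X_k − E X_k)²`, where `m_n = n − κ_n`.  There is `C > 0`
(depending only on `d, r`) such that `E[V_{n,k}^r] ≤ C (n − k + 1)^{−2r/d}` for all
`n`, all `1 ≤ κ_n ≤ n − 1` and all `1 ≤ k ≤ m_n`. -/
theorem stmt_9
    (d : ℝ) (hd : 1 < d) (r : ℕ)
    (Ω : ℕ → Type) [∀ n, MeasureSpace (Ω n)]
    (hprob : ∀ n, IsProbabilityMeasure (ℙ : Measure (Ω n)))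
    (X : (n : ℕ) → ℕ → Ω n → ℝ)
    (hXmeas : ∀ n i, Measurable (X n i))
    (hXindep : ∀ n, iIndepFun (fun i : Fin n => X n (i + 1)) ℙ)
    (hXlaw : ∀ n i, 1 ≤ i → i ≤ n →
      Measure.map (X n i) ℙ = expMeasure (((n - i + 1 : ℕ) : ℝ) ^ 2))
    (Y : (n : ℕ) → ℕ → Ω n → ℝ)
    (hY : ∀ n k o, Y n k o = ∑ i ∈ Finset.Icc 1 k, X n i o)
    (Ξ : (n : ℕ) → ℕ → ℕ → ℝ)
    (hΞ : ∀ n κ k, Ξ n κ k = ∑ i ∈ Finset.Icc k (n - κ),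
      (∫ o, Y n i o ∂(ℙ : Measure (Ω n))) ^ (1/d - 1))
    (V : (n : ℕ) → ℕ → ℕ → Ω n → ℝ)
    (hV : ∀ n κ k o, V n κ k o = (Ξ n κ k) ^ 2 / d ^ 2
      * (X n k o - ∫ o', X n k o' ∂(ℙ : Measure (Ω n))) ^ 2) :
    ∃ C : ℝ, 0 < C ∧ ∀ n κ k : ℕ, 1 ≤ κ → κ ≤ n - 1 → 1 ≤ k → k ≤ n - κ →
      ∫ o, (V n κ k o) ^ r ∂(ℙ : Measure (Ω n))
        ≤ C * ((n - k + 1 : ℕ) : ℝ) ^ (-(2 * r : ℝ) / d) := by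
  have hd0 : (0:ℝ) < d := lt_trans one_pos hd
  set β : ℝ := 1 - 1/d with hβdef
  have hβ0 : 0 < β := by
    have : 1/d < 1 := by rw [div_lt_one hd0]; exact hd
    simp only [hβdef]; linarith
  have hβ1 : β < 1 := by
    have : 0 < 1/d := by positivity
    simp only [hβdef]; linarith
  set Cξ : ℝ := 2*(1+1/(1-β)) + 1 with hCξdef
  have hCξpos : 0 < Cξ := by
    have hq : (0:ℝ) < 1/(1-β) := by
      rw [one_div]; exact inv_pos.mpr (by linarith)
    simp only [hCξdef]; linarith
  have hexpCpos := expC_pos (2*r)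
  refine ⟨Cξ ^ (2*r) * expC (2*r) / d ^ (2*r), by positivity, ?_⟩
  intro n κ k hκ1 hκn hk1 hk2
  have hn2 : 2 ≤ n := by omega
  have hkn : k ≤ n := by omega
  set N : ℝ := ((n - k + 1 : ℕ):ℝ) with hNdef
  have hN1 : (1:ℝ) ≤ N := by
    rw [hNdef]; exact_mod_cast (by omega : 1 ≤ n - k + 1)
  have hNpos : (0:ℝ) < N := by linarith
  set lam : ℝ := N ^ 2 with hlamdef
  have hlampos : (0:ℝ) < lam := by positivity
  obtain ⟨hXint, hXmean, hXcm⟩ :=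
    law_transfer (X n k) (hXmeas n k) lam hlampos (hXlaw n k hk1 hkn)
  -- mean of Y and its lower bound
  have hEY : ∀ i, k ≤ i → i ≤ n - κ →
      (i:ℝ)/(((n - i + 1:ℕ):ℝ) * ((n:ℝ)+1)) ≤ (∫ o, Y n i o ∂ℙ) ∧
      0 < (∫ o, Y n i o ∂ℙ) := by
    intro i hki him
    have hi1 : 1 ≤ i := le_trans hk1 hki
    have hin : i ≤ n := by omega
    have hj : ∀ j ∈ Finset.Icc 1 i, Integrable (X n j) ℙ ∧
        (∫ o, X n j o ∂ℙ) = 1 / (((n - j + 1 : ℕ):ℝ) ^ 2) := by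
      intro j hj'
      obtain ⟨hj1, hji⟩ := Finset.mem_Icc.mp hj'
      have hjn : j ≤ n := le_trans hji hin
      obtain ⟨h1, h2, _⟩ := law_transfer (X n j) (hXmeas n j) (((n - j + 1 : ℕ):ℝ) ^ 2)
        (by positivity) (hXlaw n j hj1 hjn)
      exact ⟨h1, h2⟩
    have hYval : (∫ o, Y n i o ∂ℙ)
        = ∑ j ∈ Finset.Icc 1 i, (1:ℝ) / (((n - j + 1 : ℕ):ℝ) ^ 2) := by
      rw [show (fun o => Y n i o) = fun o => ∑ j ∈ Finset.Icc 1 i, X n j o from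
        funext (hY n i)]
      rw [integral_finset_sum _ (fun j hj' => (hj j hj').1)]
      exact Finset.sum_congr rfl fun j hj' => (hj j hj').2
    have hlb := sum_inv_sq_ge n i hi1 hin
    rw [← hYval] at hlb
    refine ⟨hlb, lt_of_lt_of_le ?_ hlb⟩
    have hipos : (0:ℝ) < (i:ℝ) := by exact_mod_cast hi1
    have : (0:ℝ) < ((n - i + 1:ℕ):ℝ) := by positivity
    positivity
  -- Ξ bound
  have hΞval : Ξ n κ k = ∑ i ∈ Finset.Icc k (n-κ), (∫ o, Y n i o ∂ℙ) ^ (-β) := by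
    rw [hΞ]
    refine Finset.sum_congr rfl fun i _ => ?_
    rw [show 1/d - 1 = -β by rw [hβdef]; ring]
  have hΞub : Ξ n κ k ≤ Cξ * N ^ (1+β) := by
    rw [hΞval]
    exact Xi_sum_bound β hβ0 hβ1 n κ k hκ1 hκn hk1 hk2 _ hEY
  have hΞnn : 0 ≤ Ξ n κ k := by
    rw [hΞval]
    exact Finset.sum_nonneg fun i hi =>
      Real.rpow_nonneg (le_of_lt (hEY i (Finset.mem_Icc.mp hi).1 (Finset.mem_Icc.mp hi).2).2) _
  -- integral of V^r
  have hVint : ∫ o, (V n κ k o) ^ r ∂ℙ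
      = ((Ξ n κ k) ^ 2 / d ^ 2) ^ r * ∫ o, (X n k o - 1/lam) ^ (2*r) ∂ℙ := by
    have hpt : ∀ o, (V n κ k o) ^ r
        = ((Ξ n κ k) ^ 2 / d ^ 2) ^ r * (X n k o - 1/lam) ^ (2*r) := by
      intro o
      rw [hV, hXmean, mul_pow, pow_mul]
    rw [integral_congr_ae (Eventually.of_forall hpt), integral_const_mul]
  have hcm := hXcm (2*r)
  have hcmnn : (0:ℝ) ≤ ((Ξ n κ k) ^ 2 / d ^ 2) ^ r := by positivity
  have hfac : ((Ξ n κ k) ^ 2 / d ^ 2) ^ r ≤ (Cξ * N ^ (1+β)) ^ (2*r) / d ^ (2*r) := by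
    rw [div_pow, ← pow_mul, ← pow_mul]
    exact (div_le_div_iff_of_pos_right (by positivity)).mpr (pow_le_pow_left₀ hΞnn hΞub _)
  -- put it together
  have hInn : (0:ℝ) ≤ expC (2*r) / lam ^ (2*r) := by positivity
  have hmain : ∫ o, (V n κ k o) ^ r ∂ℙ
      ≤ ((Cξ * N ^ (1+β)) ^ (2*r) / d ^ (2*r)) * (expC (2*r) / lam ^ (2*r)) := by
    rw [hVint]
    calc ((Ξ n κ k) ^ 2 / d ^ 2) ^ r * ∫ o, (X n k o - 1/lam) ^ (2*r) ∂ℙ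
        ≤ ((Ξ n κ k) ^ 2 / d ^ 2) ^ r * (expC (2*r) / lam ^ (2*r)) :=
          mul_le_mul_of_nonneg_left hcm hcmnn
      _ ≤ ((Cξ * N ^ (1+β)) ^ (2*r) / d ^ (2*r)) * (expC (2*r) / lam ^ (2*r)) :=
          mul_le_mul_of_nonneg_right hfac hInn
  refine le_trans hmain (le_of_eq ?_)
  have hNpow : (N ^ (1+β)) ^ (2*r) = N ^ ((1+β) * (2*r : ℕ)) := by
    rw [← Real.rpow_natCast (N ^ (1+β)) (2*r), ← Real.rpow_mul hNpos.le]
  have hlampow : lam ^ (2*r) = N ^ ((4*r : ℕ) : ℝ) := by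
    rw [hlamdef, ← pow_mul, Real.rpow_natCast]
    norm_num [mul_comm]
    ring_nf
  rw [mul_pow, hNpow, hlampow]
  rw [show ((Cξ ^ (2*r) * N ^ ((1+β) * (2*r : ℕ))) / d ^ (2*r)) * (expC (2*r) / N ^ ((4*r : ℕ) : ℝ))
      = (Cξ ^ (2*r) * expC (2*r) / d ^ (2*r)) * (N ^ ((1+β) * (2*r : ℕ)) / N ^ ((4*r : ℕ) : ℝ)) from by
    ring]
  congr 1
  rw [← Real.rpow_sub hNpos]
  congr 1
  rw [hβdef]
  push_cast
  field_simp
  ring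
end

section
/- For every r > 0 and d > 0 there is a constant C > 0, depending only on r and d, such that for all n ≥ 1 and all 0 ≤ k < n: E[Y_{n−k}^{r/d}] ≤ (n/(k+1)²)^{r/d} (1 + C/n). -/
open MeasureTheory ProbabilityTheory Filter Real
open Nat
open scoped ProbabilityTheory ENNReal

lemma aux_key_id (j q : ℕ) :
    ∑ a ∈ Finset.range (q+1), q.choose a * j.ascFactorial a * (q-a)! =
      (j+1).ascFactorial q := by
  induction q with
  | zero => simp
  | succ q ih =>
    rw [Finset.sum_range_succ]
    have hlast : (q+1).choose (q+1) * j.ascFactorial (q+1) * ((q+1)-(q+1))! =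
        j * (j+1).ascFactorial q := by
      have : j.ascFactorial (q+1) = j * (j+1).ascFactorial q := by
        rw [Nat.succ_ascFactorial, Nat.ascFactorial_succ]
      simp [this]
    have hmain : ∀ a ∈ Finset.range (q+1),
        (q+1).choose a * j.ascFactorial a * ((q+1)-a)! =
        (q+1) * (q.choose a * j.ascFactorial a * (q-a)!) := by
      intro a ha
      have haq : a ≤ q := by simpa [Nat.lt_succ_iff] using ha
      have h1 : (q+1) - a = (q - a) + 1 := by omega
      have h2 : (q+1).choose a * ((q-a)+1) = (q+1) * q.choose a := by
        have h3 : (q+1) - a = (q - a) + 1 := by omega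
        calc (q+1).choose a * ((q-a)+1) = (q+1).choose a * ((q+1)-a) := by rw [h3]
          _ = (q+1).choose (a+1) * (a+1) := (Nat.choose_succ_right_eq (q+1) a).symm
          _ = (q+1) * q.choose a := (Nat.add_one_mul_choose_eq q a).symm
      calc (q+1).choose a * j.ascFactorial a * ((q+1)-a)!
          = ((q+1).choose a * ((q-a)+1)) * (j.ascFactorial a * (q-a)!) := by
            rw [h1, Nat.factorial_succ]; ring
        _ = ((q+1) * q.choose a) * (j.ascFactorial a * (q-a)!) := by rw [h2]
        _ = (q+1) * (q.choose a * j.ascFactorial a * (q-a)!) := by ring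
    rw [Finset.sum_congr rfl hmain, ← Finset.mul_sum, ih, hlast, Nat.ascFactorial_succ]
    ring

lemma aux_asc_le_pow (p : ℕ) : ∀ m n : ℕ, m ≤ n → m.ascFactorial p ≤ (n+p)^p := by
  induction p with
  | zero => simp
  | succ p ih =>
    intro m n h
    rw [Nat.ascFactorial_succ]
    have h1 : m + p ≤ n + (p+1) := by omega
    have h2 : m.ascFactorial p ≤ (n+p)^p := ih m n h
    calc (m + p) * m.ascFactorial p ≤ (n + (p+1)) * (n+p)^p :=
          Nat.mul_le_mul h1 h2
      _ ≤ (n + (p+1)) * (n+(p+1))^p :=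
          Nat.mul_le_mul_left _ (Nat.pow_le_pow_left (by omega) p)
      _ = (n+(p+1))^(p+1) := by rw [pow_succ]; ring

lemma aux_expMeasure_Iio {l : ℝ} : expMeasure l (Set.Iio 0) = 0 := by
  rw [expMeasure, gammaMeasure, withDensity_apply _ measurableSet_Iio]
  exact lintegral_gammaPDF_of_nonpos le_rfl

lemma aux_exp_moment (q : ℕ) {l : ℝ} (hl : 0 < l) :
    ∫⁻ x, (ENNReal.ofReal x) ^ q ∂(expMeasure l) = ENNReal.ofReal (q ! / l ^ q) := by
  have hg : Measurable fun x : ℝ => (ENNReal.ofReal x) ^ q :=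
    (ENNReal.measurable_ofReal.comp measurable_id).pow_const q
  have hpdf : Measurable (gammaPDF 1 l) :=
    ENNReal.measurable_ofReal.comp (measurable_gammaPDFReal 1 l)
  rw [expMeasure, gammaMeasure, lintegral_withDensity_eq_lintegral_mul _ hpdf hg]
  have hsplit : ∫⁻ x, (gammaPDF 1 l * fun x => (ENNReal.ofReal x) ^ q) x =
      ∫⁻ x in Set.Ici (0:ℝ), ENNReal.ofReal (l * Real.exp (-(l*x)) * x ^ q) := by
    rw [← lintegral_indicator measurableSet_Ici]
    congr 1
    ext x
    by_cases hx : 0 ≤ x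
    · rw [Set.indicator_of_mem (Set.mem_Ici.mpr hx)]
      simp only [Pi.mul_apply]
      rw [gammaPDF, gammaPDFReal, if_pos hx, ← ENNReal.ofReal_pow hx,
        ← ENNReal.ofReal_mul (by positivity)]
      norm_num [Real.Gamma_one]
    · have hx' : x < 0 := lt_of_not_ge hx
      rw [Set.indicator_of_notMem (by simpa using hx' : x ∉ Set.Ici (0:ℝ))]
      simp only [Pi.mul_apply, gammaPDF_of_neg hx', zero_mul]
  rw [hsplit]
  have hInt : IntegrableOn (fun x => l * Real.exp (-(l*x)) * x ^ q) (Set.Ici (0:ℝ)) := by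
    rw [integrableOn_Ici_iff_integrableOn_Ioi]
    have h0 : IntegrableOn (fun x : ℝ => x ^ (q:ℝ) * Real.exp (-l * x ^ (1:ℝ)))
        (Set.Ioi (0:ℝ)) :=
      integrableOn_rpow_mul_exp_neg_mul_rpow
        (by have : (0:ℝ) ≤ q := Nat.cast_nonneg q; linarith) zero_lt_one hl
    have h1 : IntegrableOn (fun x : ℝ => l * (x ^ (q:ℝ) * Real.exp (-l * x ^ (1:ℝ))))
        (Set.Ioi (0:ℝ)) := h0.const_mul l
    refine h1.congr_fun (fun x hx => ?_) measurableSet_Ioi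
    have hx0 : (0:ℝ) ≤ x := le_of_lt hx
    dsimp only
    rw [Real.rpow_one, Real.rpow_natCast, neg_mul]
    ring
  rw [← ofReal_integral_eq_lintegral_ofReal hInt]
  · congr 1
    rw [integral_Ici_eq_integral_Ioi]
    have hcong : ∫ x in Set.Ioi (0:ℝ), l * Real.exp (-(l*x)) * x ^ q =
        ∫ x in Set.Ioi (0:ℝ), l * (x ^ (((q:ℝ)+1) - 1) * Real.exp (-(l*x))) := by
      refine setIntegral_congr_fun measurableSet_Ioi (fun x hx => ?_)
      have hx0 : (0:ℝ) ≤ x := le_of_lt hx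
      rw [add_sub_cancel_right, Real.rpow_natCast]
      ring
    rw [hcong, integral_const_mul, integral_rpow_mul_exp_neg_mul_Ioi (by positivity) hl]
    have : Real.Gamma ((q:ℝ)+1) = q ! := Real.Gamma_nat_eq_factorial q
    rw [this]
    have hl0 : l ≠ 0 := ne_of_gt hl
    have : ((1:ℝ)/l) ^ ((q:ℝ)+1) = 1 / l ^ (q+1) := by
      rw [show ((q:ℝ)+1) = ((q+1 : ℕ):ℝ) by push_cast; ring, Real.rpow_natCast]
      simp [div_pow]
    rw [this]
    field_simp
    ring
  · filter_upwards [self_mem_ae_restrict (measurableSet_Ici : MeasurableSet (Set.Ici (0:ℝ)))]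
      with x hx
    have : (0:ℝ) ≤ x := hx
    positivity

lemma aux_reindex {M : Type*} [AddCommMonoid M] (n : ℕ) (g : ℕ → M) :
    ∀ j, j ≤ n → ∑ i ∈ Finset.univ.filter (fun i : Fin n => (i : ℕ) < j), g ((i : ℕ) + 1)
      = ∑ i ∈ Finset.Icc 1 j, g i := by
  intro j
  induction j with
  | zero => intro _; simp
  | succ j ih =>
    intro hj
    have hjn : j < n := by omega
    have hnotmem : (⟨j, hjn⟩ : Fin n) ∉ Finset.univ.filter (fun i : Fin n => (i : ℕ) < j) := by
      simp
    have hins : Finset.univ.filter (fun i : Fin n => (i : ℕ) < j + 1)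
        = insert (⟨j, hjn⟩ : Fin n) (Finset.univ.filter (fun i : Fin n => (i : ℕ) < j)) := by
      ext i
      simp only [Finset.mem_filter, Finset.mem_univ, true_and, Finset.mem_insert, Fin.ext_iff,
        Fin.val_mk]
      omega
    have hicc : Finset.Icc 1 (j+1) = insert (j+1) (Finset.Icc 1 j) := by
      ext x
      simp only [Finset.mem_Icc, Finset.mem_insert]
      omega
    rw [hins, Finset.sum_insert hnotmem, ih (by omega), hicc,
      Finset.sum_insert (by simp)]

set_option maxHeartbeats 1000000 in
/-- Lemma: crude moment bound for `Y_{n−k}`.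
For every `r > 0` and `d > 0` there is `C > 0` (depending only on `r, d`) such that
for all `n ≥ 1` and `0 ≤ k < n`:
`E[Y_{n−k}^{r/d}] ≤ (n/(k+1)²)^{r/d} (1 + C/n)`. -/
theorem stmt_11
    (d r : ℝ) (hd : 0 < d) (hr : 0 < r)
    (Ω : ℕ → Type) [∀ n, MeasureSpace (Ω n)]
    (hprob : ∀ n, IsProbabilityMeasure (ℙ : Measure (Ω n)))
    (X : (n : ℕ) → ℕ → Ω n → ℝ)
    (hXmeas : ∀ n i, Measurable (X n i))
    (hXindep : ∀ n, iIndepFun (fun i : Fin n => X n (i + 1)) ℙ)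
    (hXlaw : ∀ n i, 1 ≤ i → i ≤ n →
      Measure.map (X n i) ℙ = expMeasure (((n - i + 1 : ℕ) : ℝ) ^ 2))
    (Y : (n : ℕ) → ℕ → Ω n → ℝ)
    (hY : ∀ n k o, Y n k o = ∑ i ∈ Finset.Icc 1 k, X n i o) :
    ∃ C : ℝ, 0 < C ∧ ∀ n k : ℕ, 1 ≤ n → k < n →
      ∫ o, (Y n (n - k) o) ^ (r / d) ∂(ℙ : Measure (Ω n))
        ≤ ((n : ℝ) / ((k : ℝ) + 1) ^ 2) ^ (r / d) * (1 + C / n) := by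
  have hs : 0 < r / d := div_pos hr hd
  set s : ℝ := r / d with hs_def
  obtain ⟨p, hppos, hsp⟩ : ∃ p : ℕ, 0 < p ∧ s < (p : ℝ) := by
    refine ⟨⌈s⌉₊ + 1, Nat.succ_pos _, ?_⟩
    have h1 := Nat.le_ceil s
    push_cast
    linarith
  have hp_pos : 0 < (p : ℝ) := by exact_mod_cast hppos
  refine ⟨s * p * Real.exp (s * p), by positivity, ?_⟩
  intro n k hn hk
  haveI := hprob n
  set m := n - k with hm_def
  have hm1 : 1 ≤ m := by omega
  have hmn : m ≤ n := by omega
  set Θ : ℝ := ((k : ℝ) + 1) ^ 2 with hTheta_def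
  have hΘ : 0 < Θ := by positivity
  -- the ENNReal-valued versions of the variables
  set f : Fin n → Ω n → ℝ≥0∞ := fun i ω => ENNReal.ofReal (X n (i + 1) ω) with hf_def
  have hfmeas : ∀ i, Measurable (f i) := fun i =>
    ENNReal.measurable_ofReal.comp (hXmeas n _)
  have hfindep : iIndepFun f ℙ :=
    (hXindep n).comp (fun _ => ENNReal.ofReal) (fun _ => ENNReal.measurable_ofReal)
  set T : ℕ → Ω n → ℝ≥0∞ :=
    fun j ω => ∑ i ∈ Finset.univ.filter (fun i : Fin n => (i : ℕ) < j), f i ω with hT_def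
  have hTmeas : ∀ j, Measurable (T j) := fun j =>
    Finset.measurable_sum _ (fun i _ => hfmeas i)
  -- moments of single variables
  have hmom : ∀ (i : Fin n) (q : ℕ), (i : ℕ) < m →
      ∫⁻ ω, (f i ω) ^ q ∂ℙ ≤ ENNReal.ofReal (q ! / Θ ^ q) := by
    intro i q hi
    have h1 : 1 ≤ (i : ℕ) + 1 := by omega
    have h2 : (i : ℕ) + 1 ≤ n := by have := i.isLt; omega
    have hg : Measurable fun x : ℝ => (ENNReal.ofReal x) ^ q :=
      ENNReal.measurable_ofReal.pow_const q
    have hmap : ∫⁻ ω, (f i ω) ^ q ∂ℙ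
        = ∫⁻ x, (ENNReal.ofReal x) ^ q ∂(Measure.map (X n ((i : ℕ) + 1)) ℙ) :=
      (lintegral_map hg (hXmeas n _)).symm
    have hwpos : (0 : ℝ) < ((n - ((i : ℕ) + 1) + 1 : ℕ) : ℝ) ^ 2 := by
      have h3 : 0 < n - ((i : ℕ) + 1) + 1 := by omega
      have h4 : (0 : ℝ) < ((n - ((i : ℕ) + 1) + 1 : ℕ) : ℝ) := by exact_mod_cast h3
      positivity
    rw [hmap, hXlaw n ((i : ℕ) + 1) h1 h2, aux_exp_moment q hwpos]
    apply ENNReal.ofReal_le_ofReal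
    have hwk : ((k : ℝ) + 1) ≤ ((n - ((i : ℕ) + 1) + 1 : ℕ) : ℝ) := by
      have h3 : k + 1 ≤ n - ((i : ℕ) + 1) + 1 := by omega
      exact_mod_cast h3
    have hΘw : Θ ^ q ≤ (((n - ((i : ℕ) + 1) + 1 : ℕ) : ℝ) ^ 2) ^ q := by
      apply pow_le_pow_left₀ hΘ.le
      rw [hTheta_def]
      exact pow_le_pow_left₀ (by positivity) hwk 2
    exact div_le_div_of_nonneg_left (by positivity) (by positivity) hΘw
  -- the key induction: moments of partial sums
  have hind : ∀ j, j ≤ m → ∀ q : ℕ,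
      ∫⁻ ω, (T j ω) ^ q ∂ℙ ≤ ENNReal.ofReal (j.ascFactorial q / Θ ^ q) := by
    intro j
    induction j with
    | zero =>
      intro _ q
      have hT0 : T 0 = fun _ => 0 := by
        funext ω; simp [hT_def]
      rw [hT0]
      cases q with
      | zero => simp
      | succ q => simp
    | succ j ih =>
      intro hj1 q
      have hjm : j ≤ m := by omega
      have hjn : j < n := by omega
      set jF : Fin n := ⟨j, hjn⟩ with hjF_def
      have hjF_val : (jF : ℕ) = j := rfl
      set sj : Finset (Fin n) := Finset.univ.filter (fun i : Fin n => (i : ℕ) < j) with hsj_def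
      have hnotmem : jF ∉ sj := by
        simp only [hsj_def, Finset.mem_filter, Finset.mem_univ, true_and, hjF_val]
        omega
      have hins : Finset.univ.filter (fun i : Fin n => (i : ℕ) < j + 1) = insert jF sj := by
        ext i
        simp only [Finset.mem_filter, Finset.mem_univ, true_and, Finset.mem_insert,
          hsj_def, Fin.ext_iff, hjF_val]
        omega
      have hTsucc : ∀ ω, T (j+1) ω = T j ω + f jF ω := by
        intro ω
        show ∑ i ∈ Finset.univ.filter (fun i : Fin n => (i : ℕ) < j + 1), f i ω
            = T j ω + f jF ω
        rw [hins, Finset.sum_insert hnotmem]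
        have hTj : T j ω = ∑ i ∈ sj, f i ω := rfl
        rw [hTj, add_comm]
      have hindep : IndepFun (T j) (f jF) ℙ := by
        have h := hfindep.indepFun_finsetSum_of_notMem hfmeas hnotmem
        have : T j = ∑ i ∈ sj, f i := by
          funext ω; rw [Finset.sum_apply]
        rwa [this]
      calc ∫⁻ ω, (T (j+1) ω) ^ q ∂ℙ
          = ∫⁻ ω, ∑ a ∈ Finset.range (q+1),
              (T j ω) ^ a * (f jF ω) ^ (q-a) * (q.choose a : ℝ≥0∞) ∂ℙ := by
            congr 1; funext ω; rw [hTsucc ω, add_pow]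
        _ = ∑ a ∈ Finset.range (q+1),
              ∫⁻ ω, (T j ω) ^ a * (f jF ω) ^ (q-a) * (q.choose a : ℝ≥0∞) ∂ℙ := by
            apply lintegral_finset_sum
            intro a _
            exact (((hTmeas j).pow_const a).mul ((hfmeas jF).pow_const (q-a))).mul_const _
        _ = ∑ a ∈ Finset.range (q+1),
              (∫⁻ ω, (T j ω) ^ a ∂ℙ) * (∫⁻ ω, (f jF ω) ^ (q-a) ∂ℙ) * (q.choose a : ℝ≥0∞) := by
            apply Finset.sum_congr rfl
            intro a _
            rw [lintegral_mul_const (f := fun ω => (T j ω) ^ a * (f jF ω) ^ (q-a)) _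
              (((hTmeas j).pow_const a).mul ((hfmeas jF).pow_const (q-a)))]
            congr 1
            apply lintegral_mul_eq_lintegral_mul_lintegral_of_indepFun''
              ((hTmeas j).pow_const a).aemeasurable ((hfmeas jF).pow_const (q-a)).aemeasurable
            exact hindep.comp (measurable_id.pow_const a) (measurable_id.pow_const (q-a))
        _ ≤ ∑ a ∈ Finset.range (q+1),
              ENNReal.ofReal ((q.choose a * j.ascFactorial a * (q-a)! : ℕ) / Θ ^ q) := by
            apply Finset.sum_le_sum
            intro a ha
            have haq : a ≤ q := by simpa [Nat.lt_succ_iff] using ha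
            have h1 := ih hjm a
            have h2 := hmom jF (q-a) (by rw [hjF_val]; omega)
            calc (∫⁻ ω, (T j ω) ^ a ∂ℙ) * (∫⁻ ω, (f jF ω) ^ (q-a) ∂ℙ) * (q.choose a : ℝ≥0∞)
                ≤ ENNReal.ofReal (j.ascFactorial a / Θ ^ a) *
                    ENNReal.ofReal ((q-a)! / Θ ^ (q-a)) * (q.choose a : ℝ≥0∞) :=
                  mul_le_mul' (mul_le_mul' h1 h2) le_rfl
              _ = ENNReal.ofReal ((q.choose a * j.ascFactorial a * (q-a)! : ℕ) / Θ ^ q) := by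
                  rw [← ENNReal.ofReal_natCast (q.choose a), ← ENNReal.ofReal_mul (by positivity),
                    ← ENNReal.ofReal_mul (by positivity)]
                  congr 1
                  have hpow : Θ ^ a * Θ ^ (q-a) = Θ ^ q := by
                    rw [← pow_add]; congr 1; omega
                  push_cast
                  field_simp
                  rw [← hpow]
                  ring
        _ = ENNReal.ofReal ((j+1).ascFactorial q / Θ ^ q) := by
            rw [← ENNReal.ofReal_sum_of_nonneg (fun a _ => by positivity)]
            congr 1
            rw [← Finset.sum_div]
            congr 1
            rw [← Nat.cast_sum, aux_key_id j q]
  -- Lyapunov / Hölder step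
  set A : ℝ := ((m.ascFactorial p : ℕ) : ℝ) / Θ ^ p with hA_def
  have hasc_pos : 0 < m.ascFactorial p := by
    have hm' : m = (m - 1) + 1 := by omega
    rw [hm']
    exact Nat.ascFactorial_pos _ _
  have hA_pos : 0 < A := by
    have : (0:ℝ) < ((m.ascFactorial p : ℕ) : ℝ) := by exact_mod_cast hasc_pos
    positivity
  have hs_ne : s ≠ 0 := ne_of_gt hs
  have ha1 : 1 < (p:ℝ)/s := (one_lt_div hs).mpr hsp
  have hconj : ((p:ℝ)/s).HolderConjugate (Real.conjExponent ((p:ℝ)/s)) :=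
    Real.HolderConjugate.conjExponent ha1
  have hHolder : ∫⁻ ω, (T m ω) ^ (s:ℝ) ∂(ℙ : Measure (Ω n))
      ≤ (∫⁻ ω, (T m ω) ^ p ∂(ℙ : Measure (Ω n))) ^ (s/(p:ℝ)) := by
    have hf : AEMeasurable (fun ω => (T m ω) ^ (s:ℝ)) (ℙ : Measure (Ω n)) :=
      ((hTmeas m).pow measurable_const).aemeasurable
    have hg : AEMeasurable (fun _ : Ω n => (1:ℝ≥0∞)) (ℙ : Measure (Ω n)) :=
      aemeasurable_const
    have h := ENNReal.lintegral_mul_le_Lp_mul_Lq (ℙ : Measure (Ω n)) hconj hf hg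
    simp only [Pi.mul_apply, mul_one, ENNReal.one_rpow, lintegral_one, measure_univ] at h
    calc ∫⁻ ω, (T m ω) ^ (s:ℝ) ∂(ℙ : Measure (Ω n))
        ≤ (∫⁻ ω, ((T m ω) ^ (s:ℝ)) ^ ((p:ℝ)/s) ∂(ℙ : Measure (Ω n))) ^ (1/((p:ℝ)/s)) := h
      _ = (∫⁻ ω, (T m ω) ^ p ∂(ℙ : Measure (Ω n))) ^ (s/(p:ℝ)) := by
          rw [one_div_div]
          congr 1
          apply lintegral_congr
          intro ω
          rw [← ENNReal.rpow_mul]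
          have : s * ((p:ℝ)/s) = (p:ℝ) := by field_simp
          rw [this, ENNReal.rpow_natCast]
  have hchain : ∫⁻ ω, (T m ω) ^ (s:ℝ) ∂(ℙ : Measure (Ω n))
      ≤ ENNReal.ofReal (A ^ (s/(p:ℝ))) := by
    calc ∫⁻ ω, (T m ω) ^ (s:ℝ) ∂(ℙ : Measure (Ω n))
        ≤ (∫⁻ ω, (T m ω) ^ p ∂(ℙ : Measure (Ω n))) ^ (s/(p:ℝ)) := hHolder
      _ ≤ (ENNReal.ofReal A) ^ (s/(p:ℝ)) :=
          ENNReal.rpow_le_rpow (hind m le_rfl p) (by positivity)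
      _ = ENNReal.ofReal (A ^ (s/(p:ℝ))) :=
          ENNReal.ofReal_rpow_of_nonneg hA_pos.le (by positivity)
  -- numeric estimate
  have hn1 : (1:ℝ) ≤ (n:ℝ) := by exact_mod_cast hn
  have hnum : A ^ (s/(p:ℝ)) ≤ ((n:ℝ)/Θ) ^ s * (1 + (s*(p:ℝ)*Real.exp (s*(p:ℝ)))/(n:ℝ)) := by
    have hasc : ((m.ascFactorial p : ℕ) : ℝ) ≤ ((n:ℝ)+(p:ℝ)) ^ p := by
      have := aux_asc_le_pow p m n hmn
      have h1 : ((m.ascFactorial p : ℕ) : ℝ) ≤ (((n+p)^p : ℕ) : ℝ) := by exact_mod_cast this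
      calc ((m.ascFactorial p : ℕ) : ℝ) ≤ (((n+p)^p : ℕ) : ℝ) := h1
        _ = ((n:ℝ)+(p:ℝ)) ^ p := by push_cast; ring
    have hA_le : A ≤ (((n:ℝ)+(p:ℝ))/Θ) ^ p := by
      rw [hA_def, div_pow]
      exact div_le_div_of_nonneg_right hasc (by positivity) |>.trans_eq rfl
    have h1 : A ^ (s/(p:ℝ)) ≤ ((((n:ℝ)+(p:ℝ))/Θ) ^ p) ^ (s/(p:ℝ)) :=
      Real.rpow_le_rpow hA_pos.le hA_le (by positivity)
    have h2 : ((((n:ℝ)+(p:ℝ))/Θ) ^ p) ^ (s/(p:ℝ)) = (((n:ℝ)+(p:ℝ))/Θ) ^ s := by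
      rw [← Real.rpow_natCast_mul (by positivity)]
      congr 1
      field_simp
    have h3 : (((n:ℝ)+(p:ℝ))/Θ) ^ s = ((n:ℝ)/Θ) ^ s * (((n:ℝ)+(p:ℝ))/(n:ℝ)) ^ s := by
      rw [← Real.mul_rpow (by positivity) (by positivity)]
      congr 1
      field_simp
    have h4 : (((n:ℝ)+(p:ℝ))/(n:ℝ)) ^ s ≤ 1 + (s*(p:ℝ)*Real.exp (s*(p:ℝ)))/(n:ℝ) := by
      have hnpos : (0:ℝ) < n := by linarith
      have ht : ((n:ℝ)+(p:ℝ))/(n:ℝ) = 1 + (p:ℝ)/(n:ℝ) := by field_simp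
      set t : ℝ := (p:ℝ)/(n:ℝ) with ht_def
      have ht_nonneg : 0 ≤ t := by positivity
      have hb1 : (1+t) ^ s ≤ Real.exp t ^ s :=
        Real.rpow_le_rpow (by positivity) (by linarith [Real.add_one_le_exp t]) hs.le
      have hb2 : Real.exp t ^ s = Real.exp (t * s) := (Real.exp_mul t s).symm
      have hb3 : Real.exp (t*s) ≤ 1 + (t*s) * Real.exp (t*s) := by
        have h5 := Real.add_one_le_exp (-(t*s))
        have h6 : Real.exp (-(t*s)) * Real.exp (t*s) = 1 := by
          rw [← Real.exp_add]; simp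
        nlinarith [Real.exp_pos (t*s), Real.exp_pos (-(t*s))]
      have hb4 : (t*s) * Real.exp (t*s) ≤ (s*(p:ℝ)*Real.exp (s*(p:ℝ)))/(n:ℝ) := by
        have hts : t * s = s*(p:ℝ)/(n:ℝ) := by rw [ht_def]; ring
        have hle : s*(p:ℝ)/(n:ℝ) ≤ s*(p:ℝ) := div_le_self (by positivity) hn1
        have hexp : Real.exp (s*(p:ℝ)/(n:ℝ)) ≤ Real.exp (s*(p:ℝ)) := Real.exp_le_exp.mpr hle
        rw [hts]
        calc s*(p:ℝ)/(n:ℝ) * Real.exp (s*(p:ℝ)/(n:ℝ))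
            ≤ s*(p:ℝ)/(n:ℝ) * Real.exp (s*(p:ℝ)) :=
              mul_le_mul_of_nonneg_left hexp (by positivity)
          _ = (s*(p:ℝ)*Real.exp (s*(p:ℝ)))/(n:ℝ) := by ring
      rw [ht]
      calc (1+t) ^ s ≤ Real.exp (t*s) := by rw [← hb2]; exact hb1
        _ ≤ 1 + (t*s) * Real.exp (t*s) := hb3
        _ ≤ 1 + (s*(p:ℝ)*Real.exp (s*(p:ℝ)))/(n:ℝ) := by linarith
    calc A ^ (s/(p:ℝ)) ≤ (((n:ℝ)+(p:ℝ))/Θ) ^ s := by rw [← h2]; exact h1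
      _ = ((n:ℝ)/Θ) ^ s * (((n:ℝ)+(p:ℝ))/(n:ℝ)) ^ s := h3
      _ ≤ ((n:ℝ)/Θ) ^ s * (1 + (s*(p:ℝ)*Real.exp (s*(p:ℝ)))/(n:ℝ)) :=
          mul_le_mul_of_nonneg_left h4 (by positivity)
  -- identify the Bochner integral with the lintegral of T m
  have hX_nonneg : ∀ᵐ ω ∂(ℙ : Measure (Ω n)), ∀ i ∈ Finset.Icc 1 n, 0 ≤ X n i ω := by
    rw [Filter.eventually_all_finset]
    intro i hi
    obtain ⟨hi1, hi2⟩ := Finset.mem_Icc.mp hi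
    have hnull : (ℙ : Measure (Ω n)) (X n i ⁻¹' Set.Iio 0) = 0 := by
      rw [← Measure.map_apply (hXmeas n i) measurableSet_Iio, hXlaw n i hi1 hi2]
      exact aux_expMeasure_Iio
    rw [ae_iff]
    convert hnull using 2
    ext ω
    simp [not_le]
  have hYeq : ∀ᵐ ω ∂(ℙ : Measure (Ω n)), Y n m ω = (T m ω).toReal := by
    filter_upwards [hX_nonneg] with ω hω
    have hreindex : T m ω = ∑ i ∈ Finset.Icc 1 m, ENNReal.ofReal (X n i ω) :=
      aux_reindex n (fun t => ENNReal.ofReal (X n t ω)) m hmn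
    rw [hY n m ω, hreindex, ENNReal.toReal_sum (fun i _ => ENNReal.ofReal_ne_top)]
    apply Finset.sum_congr rfl
    intro i hi
    obtain ⟨hi1, hi2⟩ := Finset.mem_Icc.mp hi
    exact (ENNReal.toReal_ofReal (hω i (Finset.mem_Icc.mpr ⟨hi1, le_trans hi2 hmn⟩))).symm
  have hT_ne_top : ∀ ω, T m ω ≠ ∞ := by
    intro ω
    apply ENNReal.sum_ne_top.mpr
    intro i _
    exact ENNReal.ofReal_ne_top
  have hmeas_rpow : Measurable fun ω => ((T m ω).toReal) ^ s :=
    ((hTmeas m).ennreal_toReal).pow measurable_const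
  have hLHS : ∫ o, (Y n (n - k) o) ^ (r / d) ∂(ℙ : Measure (Ω n))
      = (∫⁻ ω, (T m ω) ^ (s:ℝ) ∂(ℙ : Measure (Ω n))).toReal := by
    have hcongr : ∫ o, (Y n (n - k) o) ^ (r / d) ∂(ℙ : Measure (Ω n))
        = ∫ ω, ((T m ω).toReal) ^ s ∂(ℙ : Measure (Ω n)) := by
      apply integral_congr_ae
      filter_upwards [hYeq] with ω hω
      rw [← hm_def, hω, ← hs_def]
    rw [hcongr, integral_eq_lintegral_of_nonneg_ae
      (Filter.Eventually.of_forall fun ω => Real.rpow_nonneg ENNReal.toReal_nonneg s)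
      hmeas_rpow.aestronglyMeasurable]
    congr 1
    apply lintegral_congr
    intro ω
    rw [ENNReal.toReal_rpow, ENNReal.ofReal_toReal
      (ENNReal.rpow_ne_top_of_nonneg hs.le (hT_ne_top ω))]
  rw [hLHS]
  apply ENNReal.toReal_le_of_le_ofReal (by positivity)
  calc ∫⁻ ω, (T m ω) ^ (s:ℝ) ∂(ℙ : Measure (Ω n))
      ≤ ENNReal.ofReal (A ^ (s/(p:ℝ))) := hchain
    _ ≤ ENNReal.ofReal (((n:ℝ)/Θ) ^ s * (1 + (s*(p:ℝ)*Real.exp (s*(p:ℝ)))/(n:ℝ))) :=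
        ENNReal.ofReal_le_ofReal hnum
end

section
/- Let d > 1. Then Var(W_{n,1})/n^{1−2/d} → 0 as n → ∞, where W_{n,1} = ∑_{k=1}^{λ_n−1} Y_k^{1/d}. -/
open MeasureTheory ProbabilityTheory Filter Real
open scoped ProbabilityTheory ENNReal


lemma aux_pdf_eq (r : ℝ) (hr : 0 < r) (x : ℝ) :
    (gammaPDF 1 r x).toReal = if 0 ≤ x then r * Real.exp (-(r * x)) else 0 := by
  rw [gammaPDF_eq]
  split_ifs with h
  · rw [ENNReal.toReal_ofReal (by positivity)]
    simp [Real.Gamma_one]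
  · simp

lemma aux_zero_Iic (r : ℝ) : ∀ x ∈ Set.Iic (0:ℝ),
    x ^ 2 * (if 0 ≤ x then r * Real.exp (-(r * x)) else 0) = 0 := by
  intro x hx
  simp only [Set.mem_Iic] at hx
  rcases lt_or_eq_of_le hx with h | h
  · rw [if_neg (not_le.mpr h), mul_zero]
  · subst h; ring

lemma aux_integrable_x2 (r : ℝ) (hr : 0 < r) :
    Integrable (fun x : ℝ => x ^ 2 * (if 0 ≤ x then r * Real.exp (-(r * x)) else 0)) := by
  have h1 : IntegrableOn (fun x : ℝ => x ^ 2 * (r * Real.exp (-(r * x)))) (Set.Ioi 0) := by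
    have := (integrableOn_rpow_mul_exp_neg_mul_rpow (p := 1) (s := 2) (b := r)
      (by norm_num) zero_lt_one hr).const_mul r
    refine IntegrableOn.congr_fun this (fun x hx => ?_) measurableSet_Ioi
    rw [Real.rpow_one, Real.rpow_two]
    ring
  have h2 : IntegrableOn (fun x : ℝ => x ^ 2 * (if 0 ≤ x then r * Real.exp (-(r * x)) else 0))
      (Set.Ioi 0) := by
    refine h1.congr_fun (fun x hx => ?_) measurableSet_Ioi
    rw [if_pos (le_of_lt hx)]
  have h3 : IntegrableOn (fun x : ℝ => x ^ 2 * (if 0 ≤ x then r * Real.exp (-(r * x)) else 0))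
      (Set.Iic 0) := by
    refine (integrableOn_congr_fun (aux_zero_Iic r) measurableSet_Iic).mpr ?_
    exact (integrable_zero _ _ _).integrableOn
  have := h3.union h2
  rw [Set.Iic_union_Ioi] at this
  exact integrableOn_univ.mp this

lemma aux_int_x2 (r : ℝ) (hr : 0 < r) :
    ∫ x : ℝ, x ^ 2 * (if 0 ≤ x then r * Real.exp (-(r * x)) else 0) = 2 / r ^ 2 := by
  rw [← setIntegral_univ, ← Set.Iic_union_Ioi (a := (0:ℝ)),
    setIntegral_union (Set.Iic_disjoint_Ioi le_rfl) measurableSet_Ioi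
      ((aux_integrable_x2 r hr).integrableOn) ((aux_integrable_x2 r hr).integrableOn)]
  rw [setIntegral_congr_fun measurableSet_Iic (aux_zero_Iic r), integral_zero, zero_add]
  have heq : ∫ x in Set.Ioi (0:ℝ), x ^ 2 * (if 0 ≤ x then r * Real.exp (-(r * x)) else 0)
      = r * ∫ x in Set.Ioi (0:ℝ), x ^ ((3:ℝ) - 1) * Real.exp (-(r * x)) := by
    rw [← integral_const_mul]
    refine setIntegral_congr_fun measurableSet_Ioi (fun x hx => ?_)
    rw [if_pos (le_of_lt hx)]
    have : x ^ ((3:ℝ) - 1) = x ^ 2 := by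
      norm_num [Real.rpow_two]
    rw [this]; ring
  rw [heq, integral_rpow_mul_exp_neg_mul_Ioi (by norm_num) hr]
  have hG : Real.Gamma 3 = 2 := by
    rw [(by norm_num : (3:ℝ) = ((2:ℕ):ℝ) + 1), Real.Gamma_nat_eq_factorial]
    norm_num
  rw [hG]
  have h3 : (1/r:ℝ) ^ (3:ℝ) = (1/r) ^ (3:ℕ) := by
    rw [← Real.rpow_natCast]; norm_num
  rw [h3]
  field_simp

lemma aux_expMeasure_repr (r : ℝ) :
    expMeasure r = MeasureTheory.volume.withDensity
      (fun x => ((gammaPDFReal 1 r x).toNNReal : ℝ≥0∞)) := rfl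

lemma aux_exp_moment2 (r : ℝ) (hr : 0 < r) :
    Integrable (fun x : ℝ => x ^ 2) (expMeasure r) ∧
    ∫ x, x ^ 2 ∂(expMeasure r) = 2 / r ^ 2 := by
  have hd : ∀ x : ℝ, ((gammaPDFReal 1 r x).toNNReal : ℝ) * x ^ 2
      = x ^ 2 * (if 0 ≤ x then r * Real.exp (-(r * x)) else 0) := by
    intro x
    rw [Real.coe_toNNReal _ (gammaPDFReal_nonneg zero_lt_one hr x)]
    have hh : gammaPDFReal 1 r x = (if 0 ≤ x then r * Real.exp (-(r * x)) else 0) := by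
      unfold gammaPDFReal
      split_ifs <;> simp [Real.Gamma_one]
    rw [hh]
    ring
  constructor
  · rw [aux_expMeasure_repr,
      integrable_withDensity_iff ((measurable_gammaPDFReal 1 r).real_toNNReal.coe_nnreal_ennreal)
        (Eventually.of_forall fun x => ENNReal.coe_lt_top)]
    refine (aux_integrable_x2 r hr).congr (Eventually.of_forall fun x => ?_)
    simp only [ENNReal.coe_toReal]
    rw [← hd x]; ring
  · rw [aux_expMeasure_repr,
      integral_withDensity_eq_integral_smul ((measurable_gammaPDFReal 1 r).real_toNNReal) _,
      ← aux_int_x2 r hr]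
    refine integral_congr_ae (Eventually.of_forall fun x => ?_)
    simp only [NNReal.smul_def, smul_eq_mul]
    rw [hd x]

lemma aux_rpow_bound {p c z : ℝ} (hp0 : 0 < p) (hp2 : p ≤ 2) (hc : 0 < c) (hz : 0 ≤ z) :
    z ^ p ≤ c ^ p + c ^ (p - 2) * z ^ (2:ℝ) := by
  rcases le_total z c with h | h
  · have h1 : z ^ p ≤ c ^ p := Real.rpow_le_rpow hz h hp0.le
    have h2 : 0 ≤ c ^ (p - 2) * z ^ (2:ℝ) :=
      mul_nonneg (Real.rpow_nonneg hc.le _) (Real.rpow_nonneg hz _)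
    linarith
  · have hz0 : 0 < z := lt_of_lt_of_le hc h
    have h1 : z ^ p = z ^ (p - 2) * z ^ (2:ℝ) := by
      rw [← Real.rpow_add hz0]; ring_nf
    have h2 : z ^ (p - 2) ≤ c ^ (p - 2) :=
      Real.rpow_le_rpow_of_nonpos hc h (by linarith)
    have h3 : z ^ (p - 2) * z ^ (2:ℝ) ≤ c ^ (p - 2) * z ^ (2:ℝ) :=
      mul_le_mul_of_nonneg_right h2 (Real.rpow_nonneg hz _)
    have h4 : 0 ≤ c ^ p := Real.rpow_nonneg hc.le _
    linarith [h1 ▸ h3]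

lemma aux_sq_moment {Ω' : Type} [MeasureSpace Ω'] (X : Ω' → ℝ) (hX : Measurable X)
    (r : ℝ) (hr : 0 < r) (hlaw : Measure.map X ℙ = expMeasure r) :
    Integrable (fun o => X o ^ 2) ℙ ∧ ∫ o, X o ^ 2 ∂ℙ = 2 / r ^ 2 := by
  have hm : AEStronglyMeasurable (fun x : ℝ => x ^ 2) (Measure.map X ℙ) :=
    (measurable_id.pow_const 2).aestronglyMeasurable
  constructor
  · have h1 : Integrable (fun x : ℝ => x ^ 2) (Measure.map X ℙ) := by
      rw [hlaw]; exact (aux_exp_moment2 r hr).1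
    exact (integrable_map_measure hm hX.aemeasurable).mp h1
  · rw [← integral_map hX.aemeasurable hm, hlaw]
    exact (aux_exp_moment2 r hr).2

lemma aux_var_bound {Ω' : Type} [MeasureSpace Ω'] [IsProbabilityMeasure (ℙ : Measure Ω')]
    (d : ℝ) (hd : 1 < d)
    (n m : ℕ) (hm1 : 1 ≤ m) (hmn : 2 * m ≤ n)
    (X : ℕ → Ω' → ℝ) (hXmeas : ∀ i, Measurable (X i))
    (hXlaw : ∀ i, 1 ≤ i → i ≤ n → Measure.map (X i) ℙ = expMeasure (((n - i + 1 : ℕ) : ℝ) ^ 2))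
    (W : Ω' → ℝ)
    (hW : ∀ o, W o = ∑ k ∈ Finset.Icc 1 m, (∑ i ∈ Finset.Icc 1 k, X i o) ^ (1/d)) :
    variance W ℙ ≤ 2 * (m:ℝ)^2 * (32 * (m:ℝ)^2 / (n:ℝ)^4) ^ (1/d) := by
  have hd0 : (0:ℝ) < d := by linarith
  have hn2 : 2 ≤ n := le_trans (by omega) hmn
  have hn0 : (0:ℝ) < n := by exact_mod_cast (by omega : 0 < n)
  have hm0 : (0:ℝ) < m := by exact_mod_cast hm1
  set Z : Ω' → ℝ := fun o => ∑ i ∈ Finset.Icc 1 m, |X i o| with hZdef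
  have hZmeas : Measurable Z := Finset.measurable_sum _ fun i _ => (hXmeas i).abs
  have hZnn : ∀ o, 0 ≤ Z o := fun o => Finset.sum_nonneg fun i _ => abs_nonneg _
  have hidx : ∀ i ∈ Finset.Icc 1 m,
      Integrable (fun o => X i o ^ 2) ℙ ∧ ∫ o, X i o ^ 2 ∂ℙ ≤ 32 / (n:ℝ)^4 := by
    intro i hi
    rw [Finset.mem_Icc] at hi
    have hin : i ≤ n := by omega
    have hcast : ((n - i + 1 : ℕ):ℝ) = (n:ℝ) - i + 1 := by
      push_cast [Nat.cast_sub hin]; ring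
    have hle : ((n:ℝ)/2) ≤ ((n - i + 1 : ℕ):ℝ) := by
      rw [hcast]
      have h1 : (i:ℝ) ≤ m := by exact_mod_cast hi.2
      have h2 : 2*(m:ℝ) ≤ n := by exact_mod_cast hmn
      linarith
    have hr : (0:ℝ) < ((n - i + 1 : ℕ):ℝ) ^ 2 := by positivity
    obtain ⟨h1, h2⟩ := aux_sq_moment (X i) (hXmeas i) _ hr (hXlaw i hi.1 hin)
    refine ⟨h1, ?_⟩
    rw [h2]
    have hc4 : ((n:ℝ)/2)^4 ≤ ((n - i + 1 : ℕ):ℝ)^4 :=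
      pow_le_pow_left₀ (by positivity) hle 4
    rw [show (((n - i + 1 : ℕ):ℝ) ^ 2) ^ 2 = ((n - i + 1 : ℕ):ℝ) ^ 4 by ring]
    rw [div_le_div_iff₀ (by positivity) (by positivity)]
    nlinarith [hc4]
  have hZ2int : Integrable (fun o => Z o ^ 2) ℙ := by
    have hmem : MemLp Z 2 ℙ := by
      refine memLp_finset_sum _ (fun i hi => ?_)
      refine (memLp_two_iff_integrable_sq ((hXmeas i).abs.aestronglyMeasurable)).mpr ?_
      simpa [sq_abs] using (hidx i hi).1
    exact (memLp_two_iff_integrable_sq hZmeas.aestronglyMeasurable).mp hmem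
  have hZsq_ptw : ∀ o, Z o ^ 2 ≤ (m:ℝ) * ∑ i ∈ Finset.Icc 1 m, X i o ^ 2 := by
    intro o
    have := sq_sum_le_card_mul_sum_sq (s := Finset.Icc 1 m) (f := fun i => |X i o|)
    simpa [Nat.card_Icc, sq_abs] using this
  have hEZ2 : ∫ o, Z o ^ 2 ∂ℙ ≤ 32 * (m:ℝ)^2 / (n:ℝ)^4 := by
    have hint : Integrable (fun o => (m:ℝ) * ∑ i ∈ Finset.Icc 1 m, X i o ^ 2) ℙ :=
      (integrable_finset_sum _ (fun i hi => (hidx i hi).1)).const_mul _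
    have h1 := integral_mono hZ2int hint hZsq_ptw
    rw [integral_const_mul, integral_finset_sum _ (fun i hi => (hidx i hi).1)] at h1
    have h2 : ∑ i ∈ Finset.Icc 1 m, ∫ o, X i o ^ 2 ∂ℙ ≤ (m:ℝ) * (32 / (n:ℝ)^4) := by
      calc ∑ i ∈ Finset.Icc 1 m, ∫ o, X i o ^ 2 ∂ℙ
          ≤ ∑ _i ∈ Finset.Icc 1 m, (32 / (n:ℝ)^4) :=
            Finset.sum_le_sum (fun i hi => (hidx i hi).2)
        _ = (m:ℝ) * (32 / (n:ℝ)^4) := by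
            rw [Finset.sum_const, Nat.card_Icc, nsmul_eq_mul]
            norm_num
    calc ∫ o, Z o ^ 2 ∂ℙ ≤ (m:ℝ) * ∑ i ∈ Finset.Icc 1 m, ∫ o, X i o ^ 2 ∂ℙ := h1
      _ ≤ (m:ℝ) * ((m:ℝ) * (32 / (n:ℝ)^4)) := mul_le_mul_of_nonneg_left h2 hm0.le
      _ = 32 * (m:ℝ)^2 / (n:ℝ)^4 := by field_simp
  set B : ℝ := 32 * (m:ℝ)^2 / (n:ℝ)^4 with hBdef
  have hB : 0 < B := by positivity
  set c : ℝ := Real.sqrt B with hcdef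
  have hc : 0 < c := Real.sqrt_pos.mpr hB
  have hp0 : 0 < 2/d := by positivity
  have hp2 : 2/d ≤ 2 := by
    rw [div_le_iff₀ hd0]; nlinarith
  have hbound : ∀ o, Z o ^ ((2:ℝ)/d) ≤ c ^ ((2:ℝ)/d) + c ^ ((2:ℝ)/d - 2) * Z o ^ 2 := by
    intro o
    have := aux_rpow_bound hp0 hp2 hc (hZnn o)
    rwa [Real.rpow_two] at this
  have hZp_meas : Measurable (fun o => Z o ^ ((2:ℝ)/d)) :=
    (Real.continuous_rpow_const hp0.le).measurable.comp hZmeas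
  have hbint : Integrable (fun o => c ^ ((2:ℝ)/d) + c ^ ((2:ℝ)/d - 2) * Z o ^ 2) ℙ :=
    (integrable_const _).add (hZ2int.const_mul _)
  have hZp_int : Integrable (fun o => Z o ^ ((2:ℝ)/d)) ℙ := by
    refine Integrable.mono' hbint hZp_meas.aestronglyMeasurable
      (Eventually.of_forall fun o => ?_)
    rw [Real.norm_eq_abs, abs_of_nonneg (Real.rpow_nonneg (hZnn o) _)]
    exact hbound o
  have hEZp : ∫ o, Z o ^ ((2:ℝ)/d) ∂ℙ ≤ 2 * B ^ ((1:ℝ)/d) := by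
    have h1 := integral_mono hZp_int hbint hbound
    rw [integral_add (integrable_const _) (hZ2int.const_mul _), integral_const,
      integral_const_mul] at h1
    have hcB1 : c ^ ((2:ℝ)/d) = B ^ ((1:ℝ)/d) := by
      rw [hcdef, Real.sqrt_eq_rpow, ← Real.rpow_mul hB.le]
      congr 1
      field_simp
    have hcB2 : c ^ ((2:ℝ)/d - 2) * B = B ^ ((1:ℝ)/d) := by
      rw [hcdef, Real.sqrt_eq_rpow, ← Real.rpow_mul hB.le, ← Real.rpow_add_one hB.ne']
      congr 1
      field_simp
      ring
    have hmono : c ^ ((2:ℝ)/d - 2) * ∫ o, Z o ^ 2 ∂ℙ ≤ c ^ ((2:ℝ)/d - 2) * B :=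
      mul_le_mul_of_nonneg_left hEZ2 (Real.rpow_nonneg hc.le _)
    have hmuniv : (ℙ : Measure Ω') Set.univ = 1 := measure_univ
    calc ∫ o, Z o ^ ((2:ℝ)/d) ∂ℙ
        ≤ ((ℙ : Measure Ω') Set.univ).toReal • c ^ ((2:ℝ)/d)
            + c ^ ((2:ℝ)/d - 2) * ∫ o, Z o ^ 2 ∂ℙ := h1
      _ ≤ c ^ ((2:ℝ)/d) + c ^ ((2:ℝ)/d - 2) * B := by
          rw [hmuniv]; simp only [ENNReal.toReal_one, one_smul]
          linarith
      _ = 2 * B ^ ((1:ℝ)/d) := by rw [hcB1, hcB2]; ring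
  have hYZ : ∀ o, ∀ k ∈ Finset.Icc 1 m, |∑ i ∈ Finset.Icc 1 k, X i o| ≤ Z o := by
    intro o k hk
    rw [Finset.mem_Icc] at hk
    calc |∑ i ∈ Finset.Icc 1 k, X i o| ≤ ∑ i ∈ Finset.Icc 1 k, |X i o| :=
        Finset.abs_sum_le_sum_abs _ _
      _ ≤ Z o := Finset.sum_le_sum_of_subset_of_nonneg
          (Finset.Icc_subset_Icc_right hk.2) (fun i _ _ => abs_nonneg _)
  have hWptw : ∀ o, |W o| ≤ (m:ℝ) * Z o ^ ((1:ℝ)/d) := by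
    intro o
    rw [hW o]
    calc |∑ k ∈ Finset.Icc 1 m, (∑ i ∈ Finset.Icc 1 k, X i o) ^ (1/d)|
        ≤ ∑ k ∈ Finset.Icc 1 m, |(∑ i ∈ Finset.Icc 1 k, X i o) ^ (1/d)| :=
          Finset.abs_sum_le_sum_abs _ _
      _ ≤ ∑ _k ∈ Finset.Icc 1 m, Z o ^ ((1:ℝ)/d) := by
          refine Finset.sum_le_sum (fun k hk => ?_)
          calc |(∑ i ∈ Finset.Icc 1 k, X i o) ^ (1/d)|
              ≤ |∑ i ∈ Finset.Icc 1 k, X i o| ^ ((1:ℝ)/d) :=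
                Real.abs_rpow_le_abs_rpow _ _
            _ ≤ Z o ^ ((1:ℝ)/d) :=
                Real.rpow_le_rpow (abs_nonneg _) (hYZ o k hk) (by positivity)
      _ = (m:ℝ) * Z o ^ ((1:ℝ)/d) := by
          rw [Finset.sum_const, Nat.card_Icc, nsmul_eq_mul]
          norm_num
  have hWsq : ∀ o, W o ^ 2 ≤ (m:ℝ)^2 * Z o ^ ((2:ℝ)/d) := by
    intro o
    have h1 : W o ^ 2 ≤ ((m:ℝ) * Z o ^ ((1:ℝ)/d))^2 := by
      rw [← sq_abs (W o)]
      exact pow_le_pow_left₀ (abs_nonneg _) (hWptw o) 2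
    have h3 : (Z o ^ ((1:ℝ)/d)) ^ 2 = Z o ^ ((2:ℝ)/d) := by
      rw [← Real.rpow_two, ← Real.rpow_mul (hZnn o)]
      congr 1
      field_simp
    have h2 : ((m:ℝ) * Z o ^ ((1:ℝ)/d))^2 = (m:ℝ)^2 * Z o ^ ((2:ℝ)/d) := by
      rw [mul_pow, h3]
    linarith [h1, h2 ▸ h1]
  have hWmeas : Measurable W := by
    have hWe : W = fun o => ∑ k ∈ Finset.Icc 1 m, (∑ i ∈ Finset.Icc 1 k, X i o) ^ (1/d) :=
      funext hW
    rw [hWe]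
    refine Finset.measurable_sum _ fun k _ => ?_
    exact (Real.continuous_rpow_const (by positivity : (0:ℝ) ≤ 1/d)).measurable.comp
      (Finset.measurable_sum _ fun i _ => hXmeas i)
  have hW2int : Integrable (fun o => W o ^ 2) ℙ := by
    refine Integrable.mono' (hZp_int.const_mul ((m:ℝ)^2))
      ((hWmeas.pow_const 2).aestronglyMeasurable) (Eventually.of_forall fun o => ?_)
    rw [Real.norm_eq_abs, abs_of_nonneg (sq_nonneg _)]
    exact hWsq o
  calc variance W ℙ ≤ ∫ o, (W ^ 2) o ∂ℙ := variance_le_expectation_sq hWmeas.aestronglyMeasurable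
    _ = ∫ o, W o ^ 2 ∂ℙ := by rfl
    _ ≤ ∫ o, (m:ℝ)^2 * Z o ^ ((2:ℝ)/d) ∂ℙ :=
        integral_mono hW2int (hZp_int.const_mul _) hWsq
    _ = (m:ℝ)^2 * ∫ o, Z o ^ ((2:ℝ)/d) ∂ℙ := integral_const_mul _ _
    _ ≤ (m:ℝ)^2 * (2 * B ^ ((1:ℝ)/d)) := mul_le_mul_of_nonneg_left hEZp (by positivity)
    _ = 2 * (m:ℝ)^2 * B ^ ((1:ℝ)/d) := by ring

lemma aux_arith (d α x M : ℝ) (hd : 1 < d) (hα : 0 < α) (hx : 1 ≤ x) (hM : 0 ≤ M)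
    (hMx : M ≤ 2 * x ^ ((1:ℝ)/2 + α)) :
    2 * M^2 * (32 * M^2 / x^4) ^ ((1:ℝ)/d) / x ^ (1 - 2/d)
      ≤ 1024 * x ^ (-((1 - 2*α*(d+1))/d)) := by
  have hd0 : (0:ℝ) < d := by linarith
  have hx0 : (0:ℝ) < x := by linarith
  set e : ℝ := (1:ℝ)/2 + α with hedef
  have he : 0 < e := by positivity
  have hxe : (0:ℝ) < x ^ e := Real.rpow_pos_of_pos hx0 _
  have hM2 : M^2 ≤ (2*x^e)^2 := pow_le_pow_left₀ hM hMx 2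
  have key1 : 32*(2*x^e)^2/x^4 = 128 * x^(2*e - 4) := by
    have h4 : x^(4:ℕ) = x^((4:ℝ)) := by rw [← Real.rpow_natCast]; norm_num
    have hsq : (x^e)^(2:ℕ) = x^(2*e) := by
      rw [← Real.rpow_natCast, ← Real.rpow_mul hx0.le]
      congr 1; push_cast; ring
    rw [mul_pow, hsq, h4, Real.rpow_sub hx0]
    field_simp
    ring
  have step1 : 2 * M^2 * (32 * M^2 / x^4) ^ ((1:ℝ)/d) / x ^ (1 - 2/d)
      ≤ 2 * (2*x^e)^2 * (32 * (2*x^e)^2 / x^4) ^ ((1:ℝ)/d) / x ^ (1 - 2/d) := by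
    have hinner : (32 * M^2 / x^4) ^ ((1:ℝ)/d) ≤ (32 * (2*x^e)^2 / x^4) ^ ((1:ℝ)/d) := by
      refine Real.rpow_le_rpow (by positivity) ?_ (by positivity)
      refine div_le_div_of_nonneg_right ?_ (by positivity)
      linarith
    gcongr
  have hsq : (x^e)^(2:ℕ) = x^(2*e) := by
    rw [← Real.rpow_natCast, ← Real.rpow_mul hx0.le]
    congr 1; push_cast; ring
  have hsq2 : (2*x^e)^2 = 4 * x^(2*e) := by rw [mul_pow, hsq]; ring
  have hrpow128 : ((128:ℝ)) ^ ((1:ℝ)/d) ≤ 128 := by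
    have h1 : ((128:ℝ)) ^ ((1:ℝ)/d) ≤ ((128:ℝ)) ^ (1:ℝ) :=
      Real.rpow_le_rpow_of_exponent_le (by norm_num) (by rw [div_le_one hd0]; linarith)
    rwa [Real.rpow_one] at h1
  have hxpart : x^(2*e) * x^((2*e-4)*((1:ℝ)/d)) / x^(1-2/d) = x ^ (-((1 - 2*α*(d+1))/d)) := by
    rw [← Real.rpow_add hx0, ← Real.rpow_sub hx0]
    congr 1
    rw [hedef]
    field_simp
    ring
  have hxpos : (0:ℝ) < x ^ (-((1 - 2*α*(d+1))/d)) := Real.rpow_pos_of_pos hx0 _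
  calc 2 * M^2 * (32 * M^2 / x^4) ^ ((1:ℝ)/d) / x ^ (1 - 2/d)
      ≤ 2 * (2*x^e)^2 * (32 * (2*x^e)^2 / x^4) ^ ((1:ℝ)/d) / x ^ (1 - 2/d) := step1
    _ = 2 * (4 * x^(2*e)) * ((128:ℝ)^((1:ℝ)/d) * x^((2*e-4)*((1:ℝ)/d))) / x ^ (1 - 2/d) := by
        rw [key1, hsq2, Real.mul_rpow (by norm_num) (Real.rpow_nonneg hx0.le _),
          ← Real.rpow_mul hx0.le]
    _ = (8 * (128:ℝ)^((1:ℝ)/d)) * (x^(2*e) * x^((2*e-4)*((1:ℝ)/d)) / x^(1-2/d)) := by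
        ring
    _ = (8 * (128:ℝ)^((1:ℝ)/d)) * x ^ (-((1 - 2*α*(d+1))/d)) := by rw [hxpart]
    _ ≤ (8 * 128) * x ^ (-((1 - 2*α*(d+1))/d)) := by
        have h8 : (8:ℝ) * (128:ℝ)^((1:ℝ)/d) ≤ 8 * 128 := by linarith
        exact mul_le_mul_of_nonneg_right h8 hxpos.le
    _ = 1024 * x ^ (-((1 - 2*α*(d+1))/d)) := by norm_num

/-- Lemma: `Var(W_{n,1}) = o(n^{1−2/d})`.
Let `d > 1`, `0 < α < 1/(2(d+1))`, `λ_n = ⌈n^{1/2+α}⌉` and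
`W_{n,1} = ∑_{k=1}^{λ_n−1} Y_k^{1/d}`.  Then `Var(W_{n,1})/n^{1−2/d} → 0`. -/
theorem stmt_14
    (d : ℝ) (hd : 1 < d)
    (α : ℝ) (hα : 0 < α) (hα' : α < 1 / (2 * (d + 1)))
    (Ω : ℕ → Type) [∀ n, MeasureSpace (Ω n)]
    (hprob : ∀ n, IsProbabilityMeasure (ℙ : Measure (Ω n)))
    (X : (n : ℕ) → ℕ → Ω n → ℝ)
    (hXmeas : ∀ n i, Measurable (X n i))
    (hXindep : ∀ n, iIndepFun (fun i : Fin n => X n (i + 1)) ℙ)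
    (hXlaw : ∀ n i, 1 ≤ i → i ≤ n →
      Measure.map (X n i) ℙ = expMeasure (((n - i + 1 : ℕ) : ℝ) ^ 2))
    (Y : (n : ℕ) → ℕ → Ω n → ℝ)
    (hY : ∀ n k o, Y n k o = ∑ i ∈ Finset.Icc 1 k, X n i o)
    (lam : ℕ → ℕ) (hlam : ∀ n, lam n = ⌈(n : ℝ) ^ ((1:ℝ)/2 + α)⌉₊)
    (W1 : (n : ℕ) → Ω n → ℝ)
    (hW1 : ∀ n o, W1 n o = ∑ k ∈ Finset.Icc 1 (lam n - 1), (Y n k o) ^ (1/d)) :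
    Tendsto (fun n : ℕ => variance (W1 n) (ℙ : Measure (Ω n)) / (n : ℝ) ^ (1 - 2/d))
      atTop (nhds 0) := by
  have hd0 : (0:ℝ) < d := by linarith
  set e : ℝ := (1:ℝ)/2 + α with hedef
  have he : 0 < e := by positivity
  have h2d : (0:ℝ) < 2*(d+1) := by linarith
  have hα1 : α * (2*(d+1)) < 1 := (lt_div_iff₀ h2d).mp hα'
  have hα4 : α < 1/4 := by nlinarith
  have hε : 0 < (1 - 2*α*(d+1))/d := div_pos (by nlinarith) hd0
  have hlim : Tendsto (fun n : ℕ => 1024 * (n:ℝ) ^ (-((1 - 2*α*(d+1))/d)))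
      atTop (nhds 0) := by
    have h1 : Tendsto (fun y : ℝ => y ^ (-((1 - 2*α*(d+1))/d))) atTop (nhds 0) :=
      tendsto_rpow_neg_atTop hε
    have h2 := (h1.comp tendsto_natCast_atTop_atTop).const_mul (1024:ℝ)
    simpa using h2
  refine squeeze_zero' (Eventually.of_forall fun n =>
    div_nonneg (variance_nonneg _ _) (Real.rpow_nonneg (Nat.cast_nonneg n) _)) ?_ hlim
  have hE1 : ∀ᶠ n : ℕ in atTop, (2:ℝ) ≤ (n:ℝ) ^ e :=
    ((tendsto_rpow_atTop he).comp tendsto_natCast_atTop_atTop).eventually_ge_atTop 2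
  have hE2 : ∀ᶠ n : ℕ in atTop, (4:ℝ) ≤ (n:ℝ) ^ (1 - e) :=
    ((tendsto_rpow_atTop (by rw [hedef]; linarith : (0:ℝ) < 1 - e)).comp
      tendsto_natCast_atTop_atTop).eventually_ge_atTop 4
  filter_upwards [hE1, hE2, eventually_ge_atTop 1] with n h2e h4e hn1
  haveI := hprob n
  have hx1 : (1:ℝ) ≤ (n:ℝ) := by exact_mod_cast hn1
  have hx0 : (0:ℝ) < (n:ℝ) := by linarith
  have hceil : (n:ℝ) ^ e ≤ (lam n : ℝ) := by rw [hlam n]; exact Nat.le_ceil _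
  have hlamge : 2 ≤ lam n := by exact_mod_cast le_trans h2e hceil
  have hlamle : (lam n : ℝ) ≤ 2 * (n:ℝ) ^ e := by
    rw [hlam n]
    have h1 : (⌈(n:ℝ)^e⌉₊ : ℝ) < (n:ℝ)^e + 1 := Nat.ceil_lt_add_one (by positivity)
    nlinarith [h2e]
  set m : ℕ := lam n - 1 with hmdef
  have hm1 : 1 ≤ m := by omega
  have hmn : 2 * m ≤ n := by
    have h1 : (2 * (lam n) : ℝ) ≤ 4 * (n:ℝ)^e := by linarith
    have h2 : (4:ℝ) * (n:ℝ)^e ≤ (n:ℝ) := by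
      have h3 : (n:ℝ)^(1-e) * (n:ℝ)^e = (n:ℝ) := by
        rw [← Real.rpow_add hx0]; simp
      nlinarith [Real.rpow_pos_of_pos hx0 e]
    have h4 : 2 * lam n ≤ n := by
      have : ((2 * lam n : ℕ) : ℝ) ≤ (n:ℝ) := by push_cast; linarith
      exact_mod_cast this
    omega
  have hWo : ∀ o, W1 n o = ∑ k ∈ Finset.Icc 1 m, (∑ i ∈ Finset.Icc 1 k, X n i o) ^ (1/d) := by
    intro o
    rw [hW1 n o]
    exact Finset.sum_congr rfl (fun k _ => by rw [hY n k o])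
  have hvar := aux_var_bound d hd n m hm1 hmn (X n) (hXmeas n) (hXlaw n) (W1 n) hWo
  have hdenom : (0:ℝ) < (n:ℝ) ^ (1 - 2/d) := Real.rpow_pos_of_pos hx0 _
  have hmle : ((m:ℕ):ℝ) ≤ 2 * (n:ℝ) ^ e := by
    have : ((m:ℕ):ℝ) ≤ (lam n : ℝ) := by exact_mod_cast Nat.sub_le _ _
    linarith
  calc variance (W1 n) ℙ / (n:ℝ) ^ (1 - 2/d)
      ≤ (2 * (m:ℝ)^2 * (32 * (m:ℝ)^2 / (n:ℝ)^4) ^ ((1:ℝ)/d)) / (n:ℝ) ^ (1 - 2/d) := by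
        exact div_le_div_of_nonneg_right hvar hdenom.le
    _ ≤ 1024 * (n:ℝ) ^ (-((1 - 2*α*(d+1))/d)) :=
        aux_arith d α (n:ℝ) (m:ℝ) hd hα hx1 (Nat.cast_nonneg m) hmle
end
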